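/- arXiv:1007.3692 — 4 statements merged into one kernel-verified Lean document; each statement's English description precedes it below -/
import Mathlib

section
/- For any set A ⊆ ℕ, the bounded jump A^b is Turing reducible to A ⊕ ∅′, where A ⊕ B = {2n : n ∈ A} ∪ {2n+1 : n ∈ B} and ∅′ = {x : φ_x(x)↓} is the halting set. -/
open Classical

/-- Characteristic function of a set of naturals (values in `{0,1}`). -/
noncomputable def chi (A : Set ℕ) (n : ℕ) : ℕ := if n ∈ A then 1 else 0

/-- An acceptable enumeration `φ_e` of the partial computable functions,
via Mathlib's codes for partial recursive functions. -/
def phi (e : ℕ) : ℕ →. ℕ := (Denumerable.ofNat Nat.Partrec.Code e).eval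

/-- The initial segment of (the characteristic function of) `A` of length `n`,
as a list of naturals. -/
noncomputable def initSeg (A : Set ℕ) (n : ℕ) : List ℕ := (List.range n).map (chi A)

/-- An effective enumeration `Φ_e` of the Turing functionals: the `e`-th functional
with oracle `A` on input `x` converges iff the `e`-th partial computable function halts
on `(σ, x)` for some initial segment `σ` of `A`; its value is obtained from the least
such initial segment. -/
noncomputable def Phi (e : ℕ) (A : Set ℕ) (x : ℕ) : Part ℕ :=
  ⟨∃ n, (phi e (Nat.pair (Encodable.encode (initSeg A n)) x)).Dom,
   fun h => (phi e (Nat.pair (Encodable.encode (initSeg A (Nat.find h))) x)).get (Nat.find_spec h)⟩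

/-- `A↾n = {m ∈ A : m ≤ n}`. -/
def restrictTo (A : Set ℕ) (n : ℕ) : Set ℕ := {m | m ∈ A ∧ m ≤ n}

/-- The bounded jump `A^b = {x : ∃ i ≤ x, φ_i(x)↓ ∧ Φ_x^{A↾φ_i(x)}(x)↓}`. -/
def bJump (A : Set ℕ) : Set ℕ :=
  {x | ∃ i ≤ x, ∃ h : (phi i x).Dom, (Phi x (restrictTo A ((phi i x).get h)) x).Dom}

/-- `A^{b₀} = {⟨e,i,j⟩ : φ_i(j)↓ ∧ Φ_e^{A↾φ_i(j)}(j)↓}`, coding triples with `Nat.pair`. -/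
def b0Jump (A : Set ℕ) : Set ℕ :=
  {n | ∃ e i j, n = Nat.pair e (Nat.pair i j) ∧
        ∃ h : (phi i j).Dom, (Phi e (restrictTo A ((phi i j).get h)) j).Dom}

/-- The simple jump `A^i = {x : Φ_x^{A↾x}(x)↓}`. -/
def iJump (A : Set ℕ) : Set ℕ := {x | (Phi x (restrictTo A x) x).Dom}

/-- `∅^{nb}`, the `n`-th iterate of the bounded jump of the empty set. -/
def bIter : ℕ → Set ℕ
  | 0 => (∅ : Set ℕ)
  | n + 1 => bJump (bIter n)

/-- The halting set `∅′ = {x : φ_x(x)↓}`. -/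
def K : Set ℕ := {x | (phi x x).Dom}

/-- The effective join `A ⊕ B = {2n : n ∈ A} ∪ {2n+1 : n ∈ B}`. -/
def join (A B : Set ℕ) : Set ℕ :=
  {n | (∃ m ∈ A, n = 2 * m) ∨ (∃ m ∈ B, n = 2 * m + 1)}

/-- `X ≤₁ Y`: one-reducibility via a total computable injection. -/
def oneReducible (X Y : Set ℕ) : Prop :=
  ∃ f : ℕ → ℕ, Computable f ∧ Function.Injective f ∧ ∀ x, x ∈ X ↔ f x ∈ Y

/-- `X ≤_bT Y`: bounded Turing (weak truth-table) reducibility. There are indices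
`e, j` with `φ_j` total such that `X(x) = Φ_e^{Y↾φ_j(x)}(x)` for all `x`. -/
def bTReducible (X Y : Set ℕ) : Prop :=
  ∃ e j, ∃ h : ∀ x, (phi j x).Dom,
    ∀ x, Phi e (restrictTo Y ((phi j x).get (h x))) x = Part.some (chi X x)

/-- `X ≤_T Y`: Turing reducibility. -/
def TReducible (X Y : Set ℕ) : Prop :=
  ∃ e, ∀ x, Phi e Y x = Part.some (chi X x)

/-- `X ≤_tt Y`: truth-table reducibility, i.e. Turing reducibility via a functional
that is total on all oracles. -/
def ttReducible (X Y : Set ℕ) : Prop :=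
  ∃ e, (∀ B : Set ℕ, ∀ x, (Phi e B x).Dom) ∧ ∀ x, Phi e Y x = Part.some (chi X x)

/-- `A` is `ω^k`-c.e.: ordinals below `ω^k` are coded by their lists of Cantor normal
form coefficients (length-`k` lists of naturals, most significant first), ordered
lexicographically.  There is a partial computable `ψ : ℕ × ω^k → {0,1}` such that for
every `n` some `ψ(n,β)` converges, and `A(n) = ψ(n,γ)` for the least converging `γ`. -/
def OmegaCE (k : ℕ) (A : Set ℕ) : Prop :=
  ∃ ψ : ℕ →. ℕ, Partrec ψ ∧ (∀ m y, y ∈ ψ m → y ≤ 1) ∧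
    ∀ n : ℕ, ∃ l : List ℕ, l.length = k ∧
      (∀ l' : List ℕ, l'.length = k → List.Lex (· < ·) l' l →
        ¬ (ψ (Nat.pair n (Encodable.encode l'))).Dom) ∧
      chi A n ∈ ψ (Nat.pair n (Encodable.encode l))

/-- The (lightface) `Σ_n` sets of naturals. -/
def SigmaN : ℕ → Set ℕ → Prop
  | 0 => fun S => ComputablePred (· ∈ S)
  | n + 1 => fun S => ∃ R : Set ℕ, SigmaN n R ∧ S = {x | ∃ y, Nat.pair x y ∉ R}

/-- The initial segment of `A` of length `n`, as a finite binary string. -/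
noncomputable def initSegB (A : Set ℕ) (n : ℕ) : List Bool :=
  (List.range n).map fun i => decide (i ∈ A)

/-- `A` is `n`-generic: for every `Σ_n` set `S` of (codes of) finite binary strings,
either some initial segment of `A` is in `S`, or some initial segment of `A` has no
extension in `S`. -/
def NGeneric (n : ℕ) (A : Set ℕ) : Prop :=
  ∀ S : Set ℕ, SigmaN n S →
    (∃ l, Encodable.encode (initSegB A l) ∈ S) ∨
    (∃ l, ∀ τ : List Bool, initSegB A l <+: τ → Encodable.encode τ ∉ S)

/-- The open subset of Cantor space generated by the set of strings `U` has measure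
`≤ 2^{-i}`: for every `n`, at most `2^n/2^i` strings of length `n` extend a string
of `U`. -/
def stringMeasureLe (U : Set (List Bool)) (i : ℕ) : Prop :=
  ∀ n : ℕ, ({σ : List Bool | σ.length = n ∧ ∃ τ ∈ U, τ <+: σ}.ncard) * 2 ^ i ≤ 2 ^ n

/-- `A` is `n`-random: for every uniformly `Σ_n` family `⟨U_i⟩` of sets of (codes of)
finite binary strings with `μ(U_i) ≤ 2^{-i}`, there is an `l` such that no initial
segment of `A` lies in `U_l`. -/
def NRandom (n : ℕ) (A : Set ℕ) : Prop :=
  ∀ U : Set ℕ, SigmaN n U →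
    (∀ i, stringMeasureLe {σ : List Bool | Nat.pair i (Encodable.encode σ) ∈ U} i) →
    ∃ l, ∀ m, Nat.pair l (Encodable.encode (initSegB A m)) ∉ U

/-- The code `c` codes a tt-condition (a finite sequence of positions together with a
truth table) satisfied by `A`. -/
def ttSatisfied (A : Set ℕ) (c : ℕ) : Prop :=
  ∃ p : List ℕ × List Bool, Encodable.decode c = some p ∧
    p.2.length = 2 ^ p.1.length ∧
    p.2.getD (p.1.foldr (fun x acc => 2 * acc + chi A x) 0) false = true

/-- `A^{tt}`: the set of codes of tt-conditions satisfied by `A`. -/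
def ttSet (A : Set ℕ) : Set ℕ := {c | ttSatisfied A c}

/-- Gerla's truth-table jump `A_tt = {x : φ_x(x)↓ ∧ φ_x(x) ∈ A^{tt}}`. -/
def gerlaJump (A : Set ℕ) : Set ℕ :=
  {x | ∃ h : (phi x x).Dom, (phi x x).get h ∈ ttSet A}

-- ==================== auxiliary development ====================
namespace BJAux

open Nat.Partrec (Code)
open Nat.Partrec.Code
open Encodable

lemma initSeg_length (A : Set ℕ) (n : ℕ) : (initSeg A n).length = n := by
  simp [initSeg]

lemma initSeg_getD_lt (A : Set ℕ) {k n : ℕ} (h : k < n) :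
    (initSeg A n).getD k 0 = chi A k := by
  rw [List.getD_eq_getElem] <;> simp [initSeg, h]

lemma initSeg_getD (A : Set ℕ) (k n : ℕ) :
    (initSeg A n).getD k 0 = if k < n then chi A k else 0 := by
  split
  · exact initSeg_getD_lt A ‹_›
  · exact List.getD_eq_default _ _ (by simp [initSeg]; omega)

lemma chi_join_even (A B : Set ℕ) (k : ℕ) : chi (join A B) (2 * k) = chi A k := by
  unfold chi
  congr 1
  simp only [eq_iff_iff, join, Set.mem_setOf_eq]
  constructor
  · rintro (⟨m, hm, h⟩ | ⟨m, hm, h⟩)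
    · obtain rfl : m = k := by omega
      exact hm
    · omega
  · intro h; exact Or.inl ⟨k, h, rfl⟩

lemma chi_join_odd (A B : Set ℕ) (k : ℕ) : chi (join A B) (2 * k + 1) = chi B k := by
  unfold chi
  congr 1
  simp only [eq_iff_iff, join, Set.mem_setOf_eq]
  constructor
  · rintro (⟨m, hm, h⟩ | ⟨m, hm, h⟩)
    · omega
    · obtain rfl : m = k := by omega
      exact hm
  · intro h; exact Or.inr ⟨k, h, rfl⟩

lemma chi_K_eq_one {y : ℕ} : chi K y = 1 ↔ y ∈ K := by
  unfold chi; split <;> simp_all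

/-- `seg L n` : the length-`n` initial segment of the set with characteristic list `L`
(padded with `0`). -/
def seg (L : List ℕ) (n : ℕ) : List ℕ := (List.range n).map fun k => L.getD k 0

lemma initSeg_restrict (A : Set ℕ) (m n : ℕ) :
    initSeg (restrictTo A m) n = seg (initSeg A (m + 1)) n := by
  unfold initSeg seg
  refine List.map_congr_left fun k hk => ?_
  rw [show List.map (chi A) (List.range (m+1)) = initSeg A (m+1) from rfl, initSeg_getD]
  unfold chi restrictTo
  simp only [Set.mem_setOf_eq]
  by_cases h1 : k < m + 1
  · by_cases h2 : k ∈ A <;> simp [h1, h2] <;> omega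
  · simp [h1]; omega


/-- Reduction of the halting problem of a partial computable function to `K`,
with a primitive recursive reduction function. -/
lemma K_reduction {f : ℕ →. ℕ} (hf : Partrec f) :
    ∃ g : ℕ → ℕ, Primrec g ∧ ∀ n, (g n ∈ K ↔ (f n).Dom) := by
  have hF : Partrec fun p : ℕ => f p.unpair.1 :=
    hf.comp (Primrec.fst.comp Primrec.unpair).to_comp
  obtain ⟨c, hc⟩ := exists_code.1 (Partrec.nat_iff.1 hF)
  refine ⟨fun n => encode (curry c n), ?_, fun n => ?_⟩
  · exact Primrec.encode.comp (primrec₂_curry.comp (Primrec.const c) Primrec.id)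
  · have h1 : phi (encode (curry c n)) (encode (curry c n)) = f n := by
      unfold phi
      rw [Denumerable.ofNat_encode, eval_curry, hc]
      simp
    show (phi (encode (curry c n)) (encode (curry c n))).Dom ↔ (f n).Dom
    rw [h1]

/-- Dovetailed halting check for `phi`. -/
noncomputable def f1 : ℕ →. ℕ := fun p =>
  Nat.rfind fun t =>
    Part.some ((evaln t (Denumerable.ofNat Code p.unpair.1) p.unpair.2).isSome)

lemma dom_iff_evaln {c : Code} {x : ℕ} :
    (eval c x).Dom ↔ ∃ t, (evaln t c x).isSome := by
  rw [Part.dom_iff_mem]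
  constructor
  · rintro ⟨y, hy⟩
    obtain ⟨t, ht⟩ := evaln_complete.1 hy
    exact ⟨t, by rw [Option.mem_def] at ht; simp [ht]⟩
  · rintro ⟨t, ht⟩
    obtain ⟨y, hy⟩ := Option.isSome_iff_exists.1 ht
    exact ⟨y, evaln_sound hy⟩

lemma f1_partrec : Partrec f1 := by
  have h : Computable fun z : ℕ × ℕ =>
      (evaln z.2 (Denumerable.ofNat Code z.1.unpair.1) z.1.unpair.2).isSome := by
    have he : Primrec fun z : ℕ × ℕ =>
        evaln z.2 (Denumerable.ofNat Code z.1.unpair.1) z.1.unpair.2 := by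
      have := primrec_evaln.comp (α := ℕ × ℕ)
        ((Primrec.snd.pair ((Primrec.ofNat Code).comp
            (Primrec.fst.comp (Primrec.unpair.comp Primrec.fst)))).pair
          (Primrec.snd.comp (Primrec.unpair.comp Primrec.fst)))
      exact this
    exact (Primrec.option_isSome.comp he).to_comp
  exact Partrec.rfind h.partrec.to₂

lemma f1_dom (p : ℕ) : (f1 p).Dom ↔ (phi p.unpair.1 p.unpair.2).Dom := by
  unfold f1 phi
  refine Nat.rfind_dom.trans ?_
  rw [dom_iff_evaln]
  constructor
  · rintro ⟨t, ht, _⟩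
    exact ⟨t, by simpa using ht⟩
  · rintro ⟨t, ht⟩
    exact ⟨t, by simpa using ht, fun _ => trivial⟩


/-- Decode a natural as a list of naturals (default `[]`). -/
def dList (u : ℕ) : List ℕ := ((Encodable.decode u : Option (List ℕ))).getD []

lemma dList_encode (L : List ℕ) : dList (encode L) = L := by simp [dList]

lemma seg_prim : Primrec₂ seg :=
  Primrec.list_map (Primrec.list_range.comp Primrec.snd)
    ((Primrec.list_getD 0).comp₂ (Primrec.fst.comp₂ Primrec₂.left) Primrec₂.right)

lemma dList_prim : Primrec dList :=
  (Primrec.option_getD).comp Primrec.decode (Primrec.const [])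

/-- Dovetailed check for convergence of a functional on some initial segment. -/
noncomputable def f2 : ℕ →. ℕ := fun p =>
  Nat.rfind fun s =>
    Part.some ((evaln s.unpair.2 (Denumerable.ofNat Code p.unpair.2)
      (Nat.pair (encode (seg (dList p.unpair.1) s.unpair.1)) p.unpair.2)).isSome)

lemma f2_partrec : Partrec f2 := by
  have h : Primrec fun z : ℕ × ℕ =>
      (evaln z.2.unpair.2 (Denumerable.ofNat Code z.1.unpair.2)
        (Nat.pair (encode (seg (dList z.1.unpair.1) z.2.unpair.1)) z.1.unpair.2)).isSome := by
    have hu1 : Primrec fun z : ℕ × ℕ => z.1.unpair.1 :=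
      Primrec.fst.comp (Primrec.unpair.comp Primrec.fst)
    have hu2 : Primrec fun z : ℕ × ℕ => z.1.unpair.2 :=
      Primrec.snd.comp (Primrec.unpair.comp Primrec.fst)
    have hs1 : Primrec fun z : ℕ × ℕ => z.2.unpair.1 :=
      Primrec.fst.comp (Primrec.unpair.comp Primrec.snd)
    have hs2 : Primrec fun z : ℕ × ℕ => z.2.unpair.2 :=
      Primrec.snd.comp (Primrec.unpair.comp Primrec.snd)
    have harg : Primrec fun z : ℕ × ℕ =>
        Nat.pair (encode (seg (dList z.1.unpair.1) z.2.unpair.1)) z.1.unpair.2 :=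
      Primrec₂.natPair.comp
        (Primrec.encode.comp (seg_prim.comp (dList_prim.comp hu1) hs1)) hu2
    exact Primrec.option_isSome.comp
      (primrec_evaln.comp ((hs2.pair ((Primrec.ofNat Code).comp hu2)).pair harg))
  exact Partrec.rfind (h.to_comp.partrec.to₂)

lemma f2_dom (L : List ℕ) (x : ℕ) :
    (f2 (Nat.pair (encode L) x)).Dom ↔
      ∃ n, (phi x (Nat.pair (encode (seg L n)) x)).Dom := by
  unfold f2 phi
  refine Nat.rfind_dom.trans ?_
  simp only [Nat.unpair_pair, dList_encode]
  constructor
  · rintro ⟨s, hs, _⟩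
    refine ⟨s.unpair.1, dom_iff_evaln.2 ⟨s.unpair.2, by simpa using hs⟩⟩
  · rintro ⟨n, hn⟩
    obtain ⟨t, ht⟩ := dom_iff_evaln.1 hn
    exact ⟨Nat.pair n t, by simpa using ht, fun _ => trivial⟩

/-- Primitive recursive reduction of `{(i,x) : φ_i(x)↓}` to `K`. -/
noncomputable def g1 : ℕ → ℕ := (K_reduction f1_partrec).choose

lemma g1_prim : Primrec g1 := (K_reduction f1_partrec).choose_spec.1

lemma g1_spec (i x : ℕ) : g1 (Nat.pair i x) ∈ K ↔ (phi i x).Dom := by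
  unfold g1
  rw [(K_reduction f1_partrec).choose_spec.2, f1_dom, Nat.unpair_pair]

/-- Primitive recursive reduction of convergence-on-some-initial-segment to `K`. -/
noncomputable def g2 : ℕ → ℕ := (K_reduction f2_partrec).choose

lemma g2_prim : Primrec g2 := (K_reduction f2_partrec).choose_spec.1

lemma g2_spec (L : List ℕ) (x : ℕ) :
    g2 (Nat.pair (encode L) x) ∈ K ↔
      ∃ n, (phi x (Nat.pair (encode (seg L n)) x)).Dom := by
  unfold g2
  rw [(K_reduction f2_partrec).choose_spec.2, f2_dom]


-- ============ Boolean helpers ============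

lemma band_prim : Primrec₂ (· && ·) :=
  (Primrec.cond Primrec.fst Primrec.snd (Primrec.const false)).of_eq fun p => by
    cases p.1 <;> rfl

lemma bor_prim : Primrec₂ (· || ·) :=
  (Primrec.cond Primrec.fst (Primrec.const true) Primrec.snd).of_eq fun p => by
    cases p.1 <;> rfl

lemma all_eq_foldr {β : Type*} (l : List β) (p : β → Bool) :
    l.all p = l.foldr (fun b s => p b && s) true := by
  induction l with
  | nil => rfl
  | cons a l ih => simp [List.all_cons, ih]

lemma any_eq_foldr {β : Type*} (l : List β) (p : β → Bool) :
    l.any p = l.foldr (fun b s => p b || s) false := by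
  induction l with
  | nil => rfl
  | cons a l ih => simp [List.any_cons, ih]

lemma primrec_list_all {α β : Type} [Primcodable α] [Primcodable β]
    {f : α → List β} {p : α → β → Bool} (hf : Primrec f) (hp : Primrec₂ p) :
    Primrec fun a => (f a).all (p a) := by
  have hh : Primrec fun z : α × (β × Bool) => (p z.1 z.2.1 && z.2.2 : Bool) :=
    band_prim.comp (hp.comp Primrec.fst (Primrec.fst.comp Primrec.snd))
      (Primrec.snd.comp Primrec.snd)
  have := Primrec.list_foldr hf (Primrec.const true) hh.to₂
  exact this.of_eq fun a => (all_eq_foldr (f a) (p a)).symm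

lemma primrec_list_any {α β : Type} [Primcodable α] [Primcodable β]
    {f : α → List β} {p : α → β → Bool} (hf : Primrec f) (hp : Primrec₂ p) :
    Primrec fun a => (f a).any (p a) := by
  have hh : Primrec fun z : α × (β × Bool) => (p z.1 z.2.1 || z.2.2 : Bool) :=
    bor_prim.comp (hp.comp Primrec.fst (Primrec.fst.comp Primrec.snd))
      (Primrec.snd.comp Primrec.snd)
  have := Primrec.list_foldr hf (Primrec.const false) hh.to₂
  exact this.of_eq fun a => (any_eq_foldr (f a) (p a)).symm

-- ============ the main reduction procedure ============

/-- Position of the `K`-oracle bit answering whether `φ_i(x)↓`. -/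
noncomputable def q1 (i x : ℕ) : ℕ := 2 * g1 (Nat.pair i x) + 1

/-- The even-position bits of `σ`, giving the first `m+1` bits of the `A`-part. -/
def evenSeg (σ : List ℕ) (m : ℕ) : List ℕ := (List.range (m + 1)).map fun k => σ.getD (2 * k) 0

/-- Position of the `K`-oracle bit answering whether `Φ_x^{A↾m}(x)↓`. -/
noncomputable def q2 (σ : List ℕ) (m x : ℕ) : ℕ :=
  2 * g2 (Nat.pair (encode (evenSeg σ m)) x) + 1

/-- `check σ x t i`: all information needed to decide the `i`-th clause is inside `σ`. -/
noncomputable def check (σ : List ℕ) (x t i : ℕ) : Bool :=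
  decide (q1 i x < σ.length) &&
  (decide (σ.getD (q1 i x) 0 ≠ 1) ||
    ((evaln t (Denumerable.ofNat Code i) x).isSome &&
     decide (2 * (evaln t (Denumerable.ofNat Code i) x).getD 0 < σ.length) &&
     decide (q2 σ ((evaln t (Denumerable.ofNat Code i) x).getD 0) x < σ.length)))

/-- `ansi σ x t i`: the `i`-th clause of the bounded jump holds (given `check`). -/
noncomputable def ansi (σ : List ℕ) (x t i : ℕ) : Bool :=
  decide (σ.getD (q1 i x) 0 = 1) &&
  decide (σ.getD (q2 σ ((evaln t (Denumerable.ofNat Code i) x).getD 0) x) 0 = 1)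

noncomputable def good (σ : List ℕ) (x t : ℕ) : Bool := (List.range (x + 1)).all (check σ x t)

noncomputable def ansB (σ : List ℕ) (x t : ℕ) : Bool := (List.range (x + 1)).any (ansi σ x t)

/-- The reduction procedure computing `A^b` from `A ⊕ K`. -/
noncomputable def mainF : ℕ →. ℕ := fun p =>
  (Part.ofOption (Encodable.decode p.unpair.1 : Option (List ℕ))).bind fun σ =>
    (Nat.rfind fun t => Part.some (good σ p.unpair.2 t)).map fun t =>
      cond (ansB σ p.unpair.2 t) 1 0

lemma evenSeg_prim : Primrec₂ evenSeg :=
  Primrec.list_map (Primrec.list_range.comp (Primrec.succ.comp Primrec.snd))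
    (((Primrec.list_getD 0).comp (Primrec.fst.comp Primrec.fst)
      (Primrec.nat_mul.comp (Primrec.const 2) Primrec.snd)).to₂)

lemma q1_prim : Primrec₂ q1 :=
  Primrec.succ.comp (Primrec.nat_mul.comp (Primrec.const 2)
    (g1_prim.comp (Primrec₂.natPair.comp Primrec.fst Primrec.snd)))

section prim

variable {α : Type} [Primcodable α]

lemma q2_prim' {σ : α → List ℕ} {m x : α → ℕ}
    (hσ : Primrec σ) (hm : Primrec m) (hx : Primrec x) :
    Primrec fun a => q2 (σ a) (m a) (x a) :=
  Primrec.succ.comp (Primrec.nat_mul.comp (Primrec.const 2)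
    (g2_prim.comp (Primrec₂.natPair.comp
      (Primrec.encode.comp (evenSeg_prim.comp hσ hm)) hx)))

lemma evaln_prim' {t i x : α → ℕ} (ht : Primrec t) (hi : Primrec i) (hx : Primrec x) :
    Primrec fun a => evaln (t a) (Denumerable.ofNat Code (i a)) (x a) :=
  primrec_evaln.comp ((ht.pair ((Primrec.ofNat Code).comp hi)).pair hx)

lemma check_prim' {σ : α → List ℕ} {x t i : α → ℕ}
    (hσ : Primrec σ) (hx : Primrec x) (ht : Primrec t) (hi : Primrec i) :
    Primrec fun a => check (σ a) (x a) (t a) (i a) := by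
  have hq1 : Primrec fun a => q1 (i a) (x a) := q1_prim.comp hi hx
  have hlen : Primrec fun a => (σ a).length := Primrec.list_length.comp hσ
  have hbit1 : Primrec fun a => (σ a).getD (q1 (i a) (x a)) 0 :=
    (Primrec.list_getD 0).comp hσ hq1
  have hev : Primrec fun a => evaln (t a) (Denumerable.ofNat Code (i a)) (x a) :=
    evaln_prim' ht hi hx
  have hmv : Primrec fun a => (evaln (t a) (Denumerable.ofNat Code (i a)) (x a)).getD 0 :=
    Primrec.option_getD.comp hev (Primrec.const 0)
  have h1 : Primrec fun a => decide (q1 (i a) (x a) < (σ a).length) :=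
    (Primrec.nat_lt.comp hq1 hlen).decide
  have h2 : Primrec fun a => decide ((σ a).getD (q1 (i a) (x a)) 0 ≠ 1) :=
    (PrimrecPred.not (Primrec.eq.comp hbit1 (Primrec.const 1))).decide
  have h3 : Primrec fun a => (evaln (t a) (Denumerable.ofNat Code (i a)) (x a)).isSome :=
    Primrec.option_isSome.comp hev
  have h4 : Primrec fun a =>
      decide (2 * (evaln (t a) (Denumerable.ofNat Code (i a)) (x a)).getD 0 < (σ a).length) :=
    (Primrec.nat_lt.comp (Primrec.nat_mul.comp (Primrec.const 2) hmv) hlen).decide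
  have h5 : Primrec fun a =>
      decide (q2 (σ a) ((evaln (t a) (Denumerable.ofNat Code (i a)) (x a)).getD 0) (x a)
        < (σ a).length) :=
    (Primrec.nat_lt.comp (q2_prim' hσ hmv hx) hlen).decide
  exact band_prim.comp h1 (bor_prim.comp h2 (band_prim.comp (band_prim.comp h3 h4) h5))

lemma ansi_prim' {σ : α → List ℕ} {x t i : α → ℕ}
    (hσ : Primrec σ) (hx : Primrec x) (ht : Primrec t) (hi : Primrec i) :
    Primrec fun a => ansi (σ a) (x a) (t a) (i a) := by
  have hq1 : Primrec fun a => q1 (i a) (x a) := q1_prim.comp hi hx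
  have hmv : Primrec fun a => (evaln (t a) (Denumerable.ofNat Code (i a)) (x a)).getD 0 :=
    Primrec.option_getD.comp (evaln_prim' ht hi hx) (Primrec.const 0)
  exact band_prim.comp
    (Primrec.eq.comp ((Primrec.list_getD 0).comp hσ hq1) (Primrec.const 1)).decide
    (Primrec.eq.comp ((Primrec.list_getD 0).comp hσ (q2_prim' hσ hmv hx)) (Primrec.const 1)).decide

lemma good_prim' {σ : α → List ℕ} {x t : α → ℕ}
    (hσ : Primrec σ) (hx : Primrec x) (ht : Primrec t) :
    Primrec fun a => good (σ a) (x a) (t a) :=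
  primrec_list_all (β := ℕ) (Primrec.list_range.comp (Primrec.succ.comp hx))
    (check_prim' (hσ.comp Primrec.fst) (hx.comp Primrec.fst) (ht.comp Primrec.fst) Primrec.snd)

lemma ansB_prim' {σ : α → List ℕ} {x t : α → ℕ}
    (hσ : Primrec σ) (hx : Primrec x) (ht : Primrec t) :
    Primrec fun a => ansB (σ a) (x a) (t a) :=
  primrec_list_any (β := ℕ) (Primrec.list_range.comp (Primrec.succ.comp hx))
    (ansi_prim' (hσ.comp Primrec.fst) (hx.comp Primrec.fst) (ht.comp Primrec.fst) Primrec.snd)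

end prim

lemma mainF_partrec : Partrec mainF := by
  have hdec : Computable fun p : ℕ => (Encodable.decode p.unpair.1 : Option (List ℕ)) :=
    Computable.decode.comp (Primrec.fst.comp Primrec.unpair).to_comp
  have hgood : Partrec₂ fun (q : ℕ × List ℕ) (t : ℕ) =>
      (Part.some (good q.2 q.1.unpair.2 t) : Part Bool) := by
    have : Primrec fun z : (ℕ × List ℕ) × ℕ => good z.1.2 z.1.1.unpair.2 z.2 :=
      good_prim' (Primrec.snd.comp Primrec.fst)
        (Primrec.snd.comp (Primrec.unpair.comp (Primrec.fst.comp Primrec.fst))) Primrec.snd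
    exact this.to_comp.partrec.to₂
  have hcond : Computable₂ fun (q : ℕ × List ℕ) (t : ℕ) =>
      (cond (ansB q.2 q.1.unpair.2 t) 1 0 : ℕ) := by
    have : Primrec fun z : (ℕ × List ℕ) × ℕ => (cond (ansB z.1.2 z.1.1.unpair.2 z.2) 1 0 : ℕ) :=
      Primrec.cond (ansB_prim' (Primrec.snd.comp Primrec.fst)
        (Primrec.snd.comp (Primrec.unpair.comp (Primrec.fst.comp Primrec.fst))) Primrec.snd)
        (Primrec.const 1) (Primrec.const 0)
    exact this.to_comp.to₂
  exact (Computable.ofOption hdec).bind ((Partrec.rfind hgood).map hcond)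


-- ============ semantics ============

lemma mainF_eq (σ : List ℕ) (x : ℕ) :
    mainF (Nat.pair (encode σ) x) =
      (Nat.rfind fun t => Part.some (good σ x t)).map fun t => cond (ansB σ x t) 1 0 := by
  unfold mainF
  simp [Nat.unpair_pair, Encodable.encodek]

lemma mainF_dom (σ : List ℕ) (x : ℕ) :
    (mainF (Nat.pair (encode σ) x)).Dom ↔ ∃ t, good σ x t = true := by
  rw [mainF_eq]
  constructor
  · intro h
    obtain ⟨y, hy⟩ := Part.dom_iff_mem.1 h
    obtain ⟨t, ht, -⟩ := (Part.mem_map_iff _).1 hy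
    exact ⟨t, by simpa using Nat.rfind_spec ht⟩
  · rintro ⟨t, ht⟩
    have hrd : (Nat.rfind fun t => Part.some (good σ x t)).Dom :=
      Nat.rfind_dom.2 ⟨t, by simpa using ht, fun _ => trivial⟩
    exact Part.dom_iff_mem.2
      ⟨_, Part.mem_map _ (Part.get_mem hrd)⟩

variable {A : Set ℕ}

lemma bit_q1 {x N i : ℕ} (h : q1 i x < N) :
    ((initSeg (join A K) N).getD (q1 i x) 0 = 1 ↔ (phi i x).Dom) := by
  rw [initSeg_getD_lt _ h]
  show chi (join A K) (2 * g1 (Nat.pair i x) + 1) = 1 ↔ _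
  rw [chi_join_odd, chi_K_eq_one, g1_spec]

lemma evenSeg_initSeg {m N : ℕ} (h : 2 * m < N) :
    evenSeg (initSeg (join A K) N) m = initSeg A (m + 1) := by
  unfold evenSeg initSeg
  refine List.map_congr_left fun k hk => ?_
  rw [List.mem_range] at hk
  rw [show List.map (chi (join A K)) (List.range N) = initSeg (join A K) N from rfl,
    initSeg_getD_lt _ (by omega), chi_join_even]

lemma PhiDom_iff (x m : ℕ) :
    (Phi x (restrictTo A m) x).Dom ↔
      ∃ n, (phi x (Nat.pair (encode (seg (initSeg A (m + 1)) n)) x)).Dom := by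
  show (∃ n, (phi x (Nat.pair (encode (initSeg (restrictTo A m) n)) x)).Dom) ↔ _
  simp only [initSeg_restrict]

lemma bit_q2 {x N m : ℕ} (hm : 2 * m < N)
    (h : q2 (initSeg (join A K) N) m x < N) :
    ((initSeg (join A K) N).getD (q2 (initSeg (join A K) N) m x) 0 = 1 ↔
      (Phi x (restrictTo A m) x).Dom) := by
  rw [initSeg_getD_lt _ h]
  show chi (join A K) (2 * g2 (Nat.pair (encode (evenSeg (initSeg (join A K) N) m)) x) + 1)
      = 1 ↔ _
  rw [chi_join_odd, chi_K_eq_one, evenSeg_initSeg hm, g2_spec, PhiDom_iff]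

lemma good_ansB {x N t : ℕ} (hg : good (initSeg (join A K) N) x t = true) :
    (ansB (initSeg (join A K) N) x t = true ↔ x ∈ bJump A) := by
  set σ := initSeg (join A K) N with hσ
  have hlen : σ.length = N := initSeg_length _ _
  rw [good, List.all_eq_true] at hg
  rw [ansB, List.any_eq_true]
  have hmain : ∀ i, i ≤ x →
      (ansi σ x t i = true ↔
        ∃ hd : (phi i x).Dom, (Phi x (restrictTo A ((phi i x).get hd)) x).Dom) := by
    intro i hi
    have hc := hg i (List.mem_range.2 (by omega))
    unfold check at hc
    unfold ansi
    simp only [Bool.and_eq_true, Bool.or_eq_true, decide_eq_true_eq] at hc ⊢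
    obtain ⟨h1lt, hc2⟩ := hc
    rw [hlen] at h1lt
    by_cases hdom : (phi i x).Dom
    · have hb1 : σ.getD (q1 i x) 0 = 1 := (bit_q1 h1lt).2 hdom
      rcases hc2 with hne | ⟨⟨hsome, hmlt⟩, hq2lt⟩
      · exact absurd hb1 hne
      · rw [hlen] at hmlt hq2lt
        set m := (evaln t (Denumerable.ofNat Code i) x).getD 0 with hmdef
        have hmmem : m ∈ eval (Denumerable.ofNat Code i) x := by
          obtain ⟨y, hy⟩ := Option.isSome_iff_exists.1 hsome
          have : m = y := by rw [hmdef, hy]; rfl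
          rw [this]
          exact evaln_sound hy
        have hmget : (phi i x).get hdom = m := Part.get_eq_of_mem hmmem hdom
        constructor
        · rintro ⟨-, hb2⟩
          exact ⟨hdom, by rw [hmget]; exact (bit_q2 hmlt hq2lt).1 hb2⟩
        · rintro ⟨hd, hPhi⟩
          refine ⟨hb1, (bit_q2 hmlt hq2lt).2 ?_⟩
          rw [← hmget]
          exact hPhi
    · constructor
      · rintro ⟨hb1, -⟩
        exact absurd ((bit_q1 h1lt).1 hb1) hdom
      · rintro ⟨hd, -⟩
        exact absurd hd hdom
  constructor
  · rintro ⟨i, hi, hai⟩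
    rw [List.mem_range] at hi
    obtain ⟨hd, hPhi⟩ := (hmain i (by omega)).1 hai
    exact ⟨i, by omega, hd, hPhi⟩
  · rintro ⟨i, hi, hd, hPhi⟩
    exact ⟨i, List.mem_range.2 (by omega), (hmain i hi).2 ⟨hd, hPhi⟩⟩

lemma mainF_correct (A : Set ℕ) (x N : ℕ)
    (h : (mainF (Nat.pair (encode (initSeg (join A K) N)) x)).Dom) :
    chi (bJump A) x ∈ mainF (Nat.pair (encode (initSeg (join A K) N)) x) := by
  set σ := initSeg (join A K) N with hσ
  rw [mainF_eq] at h ⊢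
  obtain ⟨y, hy⟩ := Part.dom_iff_mem.1 h
  obtain ⟨t0, ht0, -⟩ := (Part.mem_map_iff _).1 hy
  have hgood : good σ x t0 = true := by simpa using Nat.rfind_spec ht0
  have : cond (ansB σ x t0) 1 0 = chi (bJump A) x := by
    by_cases hx : x ∈ bJump A
    · rw [(good_ansB hgood).2 hx]
      simp [chi, hx]
    · have : ansB σ x t0 = false := by
        rw [← Bool.not_eq_true]
        exact fun hc => hx ((good_ansB hgood).1 hc)
      rw [this]
      simp [chi, hx]
  rw [← this]
  exact Part.mem_map _ ht0

lemma mainF_exists_dom (A : Set ℕ) (x : ℕ) :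
    ∃ N, (mainF (Nat.pair (encode (initSeg (join A K) N)) x)).Dom := by
  -- a time bound catching all relevant computations
  have htime : ∀ i : ℕ, ∃ t, ∀ h : (phi i x).Dom,
      ((phi i x).get h) ∈ evaln t (Denumerable.ofNat Code i) x := by
    intro i
    by_cases h : (phi i x).Dom
    · obtain ⟨t, ht⟩ := evaln_complete.1 (Part.get_mem h)
      exact ⟨t, fun _ => ht⟩
    · exact ⟨0, fun h' => absurd h' h⟩
  choose T hT using htime
  classical
  let needN : ℕ → ℕ := fun i =>
    max (q1 i x)
      (if h : (phi i x).Dom then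
        max (2 * ((phi i x).get h))
          (2 * g2 (Nat.pair (encode (initSeg A ((phi i x).get h + 1))) x) + 1)
      else 0)
  refine ⟨(Finset.range (x + 1)).sup needN + 1, (mainF_dom _ _).2 ⟨(Finset.range (x + 1)).sup T, ?_⟩⟩
  set N := (Finset.range (x + 1)).sup needN + 1 with hN
  set t := (Finset.range (x + 1)).sup T with htdef
  set σ := initSeg (join A K) N with hσ
  have hlen : σ.length = N := initSeg_length _ _
  rw [good, List.all_eq_true]
  intro i hi
  rw [List.mem_range] at hi
  have hiF : i ∈ Finset.range (x + 1) := Finset.mem_range.2 hi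
  have hneed : needN i < N := by
    rw [hN]
    exact Nat.lt_succ_of_le (Finset.le_sup hiF)
  have hq1N : q1 i x < N :=
    lt_of_le_of_lt (le_max_left _ _) hneed
  unfold check
  simp only [Bool.and_eq_true, Bool.or_eq_true, decide_eq_true_eq]
  refine ⟨by omega, ?_⟩
  by_cases hdom : (phi i x).Dom
  · right
    have hev : (phi i x).get hdom ∈ evaln t (Denumerable.ofNat Code i) x :=
      evaln_mono (Finset.le_sup hiF) (hT i hdom)
    have hevEq : evaln t (Denumerable.ofNat Code i) x = some ((phi i x).get hdom) := hev
    have hrest : max (2 * ((phi i x).get hdom))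
        (2 * g2 (Nat.pair (encode (initSeg A ((phi i x).get hdom + 1))) x) + 1) < N := by
      refine lt_of_le_of_lt ?_ hneed
      show _ ≤ needN i
      have : needN i = max (q1 i x)
          (max (2 * ((phi i x).get hdom))
            (2 * g2 (Nat.pair (encode (initSeg A ((phi i x).get hdom + 1))) x) + 1)) := by
        show max _ _ = _
        rw [dif_pos hdom]
      rw [this]
      exact le_max_right _ _
    have hmN : 2 * ((phi i x).get hdom) < N :=
      lt_of_le_of_lt (le_max_left _ _) hrest
    have hq2N : 2 * g2 (Nat.pair (encode (initSeg A ((phi i x).get hdom + 1))) x) + 1 < N :=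
      lt_of_le_of_lt (le_max_right _ _) hrest
    rw [hevEq]
    simp only [Option.isSome_some, Option.getD_some, true_and]
    refine ⟨by omega, ?_⟩
    show q2 σ ((phi i x).get hdom) x < σ.length
    unfold q2
    rw [hσ, evenSeg_initSeg hmN, hlen]
    exact hq2N
  · left
    intro hb1
    exact hdom ((bit_q1 hq1N).1 hb1)

end BJAux


/-- For any set `A`, the bounded jump `A^b` is Turing reducible to `A ⊕ ∅′`. -/
theorem bJump_TReducible_join (A : Set ℕ) : TReducible (bJump A) (join A K) := by
  obtain ⟨c, hc⟩ :=
    Nat.Partrec.Code.exists_code.1 (Partrec.nat_iff.1 BJAux.mainF_partrec)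
  have he : phi (Encodable.encode c) = BJAux.mainF := by
    unfold phi
    rw [Denumerable.ofNat_encode, hc]
  refine ⟨Encodable.encode c, fun x => ?_⟩
  rw [Part.eq_some_iff]
  have hD : ∃ n, (phi (Encodable.encode c)
      (Nat.pair (Encodable.encode (initSeg (join A K) n)) x)).Dom := by
    rw [he]
    exact BJAux.mainF_exists_dom A x
  rw [Part.mem_eq]
  refine ⟨hD, ?_⟩
  show (phi (Encodable.encode c)
      (Nat.pair (Encodable.encode (initSeg (join A K) (Nat.find hD))) x)).get
        (Nat.find_spec hD) = chi (bJump A) x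
  refine Part.get_eq_of_mem ?_ _
  have hmem := BJAux.mainF_correct A x (Nat.find hD) (he ▸ Nat.find_spec hD)
  rw [← he] at hmem
  exact hmem
end

section
/- Let A ⊆ ℕ be 3-generic. Then A^b is not bounded Turing reducible to A ⊕ ∅′. -/
open Classical

-- ===================== Auxiliary development =====================
section Aux

open Nat.Partrec (Code)
open Nat.Partrec.Code Encodable Denumerable

/-! ### Basic helpers -/

lemma chi_eq_one_iff {A : Set ℕ} {n : ℕ} : chi A n = 1 ↔ n ∈ A := by
  unfold chi; split <;> simp_all

lemma initSeg_length (A : Set ℕ) (n : ℕ) : (initSeg A n).length = n := by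
  simp [initSeg]

lemma initSeg_getD {A : Set ℕ} {p n : ℕ} (h : p < n) :
    (initSeg A n).getD p 0 = chi A p := by
  simp [initSeg, List.getD_eq_getElem?_getD, List.getElem?_map, List.getElem?_range h]

lemma initSegB_length (A : Set ℕ) (n : ℕ) : (initSegB A n).length = n := by
  simp [initSegB]

lemma initSegB_getD {A : Set ℕ} {p n : ℕ} (h : p < n) :
    (initSegB A n).getD p false = decide (p ∈ A) := by
  simp [initSegB, List.getD_eq_getElem?_getD, List.getElem?_map, List.getElem?_range h]

lemma initSegB_prefix (A : Set ℕ) {m n : ℕ} (h : m ≤ n) :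
    initSegB A m <+: initSegB A n := by
  have : initSegB A m = (initSegB A n).take m := by
    unfold initSegB
    rw [← List.map_take, List.take_range, Nat.min_eq_left h]
  rw [this]
  exact List.take_prefix _ _

/-! ### `SigmaN` is monotone -/

lemma computablePred_comp {p : ℕ → Prop} {f : ℕ → ℕ}
    (hp : ComputablePred p) (hf : Computable f) :
    ComputablePred fun x => p (f x) := by
  obtain ⟨g, hg, rfl⟩ := ComputablePred.computable_iff.1 hp
  exact ComputablePred.computable_iff.2 ⟨fun x => g (f x), hg.comp hf, rfl⟩

lemma sigmaN_mono {n : ℕ} {S : Set ℕ} (hS : SigmaN n S) : SigmaN (n + 1) S := by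
  induction n generalizing S with
  | zero =>
      refine ⟨{v | (Nat.unpair v).1 ∉ S}, ?_, ?_⟩
      · have h1 : ComputablePred fun v : ℕ => (Nat.unpair v).1 ∈ S :=
          computablePred_comp hS (Primrec.fst.comp Primrec.unpair).to_comp
        exact h1.not
      · ext x
        constructor
        · intro hx
          exact ⟨0, by simp [Nat.unpair_pair, hx]⟩
        · rintro ⟨y, hy⟩
          simpa [Nat.unpair_pair] using hy
  | succ n ih =>
      obtain ⟨R, hR, rfl⟩ := hS
      exact ⟨R, ih hR, rfl⟩

/-! ### The diagonalizing partial computable function `psi` -/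

def psiCond (s x w : ℕ) : Bool :=
  ((Encodable.decode s : Option (List ℕ)).map fun l =>
    decide (max w x + 1 < l.length) && decide (l.getD (max w x + 1) 0 = 1)).getD false

def psi (j : ℕ) : ℕ →. ℕ := fun m =>
  (phi j m.unpair.2).bind fun w =>
    Part.ofOption (bif psiCond m.unpair.1 m.unpair.2 w then some 0 else none)

lemma phi_partrec (j : ℕ) : Partrec (phi j) :=
  eval_part.comp (Computable.const (Denumerable.ofNat Code j)) Computable.id

lemma psiCond_primrec : Primrec fun p : ℕ × ℕ × ℕ => psiCond p.1 p.2.1 p.2.2 := by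
  have hdec : Primrec fun p : ℕ × ℕ × ℕ => (Encodable.decode p.1 : Option (List ℕ)) :=
    Primrec.decode.comp Primrec.fst
  have hmax : Primrec fun q : (ℕ × ℕ × ℕ) × List ℕ => max q.1.2.2 q.1.2.1 + 1 :=
    Primrec.succ.comp (Primrec.nat_max.comp (Primrec.snd.comp (Primrec.snd.comp Primrec.fst))
      (Primrec.fst.comp (Primrec.snd.comp Primrec.fst)))
  have hin : Primrec₂ fun (p : ℕ × ℕ × ℕ) (l : List ℕ) =>
      (decide (max p.2.2 p.2.1 + 1 < l.length) && decide (l.getD (max p.2.2 p.2.1 + 1) 0 = 1)) := by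
    have h1 : Primrec fun q : (ℕ × ℕ × ℕ) × List ℕ => decide (max q.1.2.2 q.1.2.1 + 1 < q.2.length) :=
      (Primrec.nat_lt.comp hmax (Primrec.list_length.comp Primrec.snd)).decide
    have h2 : Primrec fun q : (ℕ × ℕ × ℕ) × List ℕ =>
        decide (q.2.getD (max q.1.2.2 q.1.2.1 + 1) 0 = 1) :=
      (Primrec.eq.comp ((Primrec.list_getD 0).comp Primrec.snd hmax) (Primrec.const 1)).decide
    exact (Primrec.and.comp h1 h2 : Primrec _)
  have hmap : Primrec fun p : ℕ × ℕ × ℕ =>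
      ((Encodable.decode p.1 : Option (List ℕ)).map fun l =>
        decide (max p.2.2 p.2.1 + 1 < l.length) && decide (l.getD (max p.2.2 p.2.1 + 1) 0 = 1)) :=
    Primrec.option_map hdec hin
  exact (Primrec.option_getD.comp hmap (Primrec.const false)).of_eq fun p => rfl

lemma psi_partrec (j : ℕ) : Partrec (psi j) := by
  have h1 : Partrec fun m : ℕ => phi j m.unpair.2 :=
    (phi_partrec j).comp (Primrec.snd.comp Primrec.unpair).to_comp
  refine h1.bind ?_
  have h2 : Computable fun p : ℕ × ℕ =>
      (bif psiCond p.1.unpair.1 p.1.unpair.2 p.2 then some 0 else (none : Option ℕ)) := by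
    have hc : Primrec fun p : ℕ × ℕ => psiCond p.1.unpair.1 p.1.unpair.2 p.2 :=
      psiCond_primrec.comp (((Primrec.fst.comp Primrec.unpair).comp Primrec.fst).pair
        (((Primrec.snd.comp Primrec.unpair).comp Primrec.fst).pair Primrec.snd))
    exact (Primrec.cond hc (Primrec.const (some 0)) (Primrec.const none)).to_comp
  exact (Computable.ofOption h2).to₂

/-! ### Padding: infinitely many indices for a given code -/

def gstep (n : ℕ) : ℕ := Encodable.encode ((Denumerable.ofNat Code n).comp Code.id)

lemma gstep_gt (n : ℕ) : n < gstep n := by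
  have h := (encode_lt_comp (Denumerable.ofNat Code n) Code.id).1
  simpa [gstep] using h

lemma phi_gstep (n : ℕ) : phi (gstep n) = phi n := by
  funext x
  show ((Denumerable.ofNat Code (gstep n)).eval) x = _
  unfold gstep
  rw [Denumerable.ofNat_encode]
  have h : ((Denumerable.ofNat Code n).comp Code.id).eval x
      = (Code.id.eval x).bind (Denumerable.ofNat Code n).eval := rfl
  rw [h, Nat.Partrec.Code.eval_id]
  exact Part.bind_some _ _

def qnat (c : ℕ) : ℕ → ℕ
  | 0 => c
  | k + 1 => gstep (qnat c k)

lemma qnat_ge (c k : ℕ) : c + k ≤ qnat c k := by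
  induction k with
  | zero => simp [qnat]
  | succ k ih =>
      have := gstep_gt (qnat c k)
      simp only [qnat]
      omega

lemma phi_qnat (c k : ℕ) : phi (qnat c k) = phi c := by
  induction k with
  | zero => rfl
  | succ k ih => rw [qnat, phi_gstep, ih]

lemma gstep_primrec : Primrec gstep :=
  Primrec.encode.comp (primrec₂_comp.comp (Primrec.ofNat Code) (Primrec.const Code.id))

lemma qnat_primrec (c : ℕ) : Primrec (qnat c) := by
  have : Primrec (fun k => Nat.rec c (fun _ ih => gstep ih) k : ℕ → ℕ) :=
    Primrec.nat_rec₁ c (gstep_primrec.comp Primrec.snd).to₂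
  refine this.of_eq fun k => ?_
  induction k with
  | zero => rfl
  | succ k ih => simp only [qnat, ← ih]

/-! ### Oracle strings -/

def tauSet (τ : List Bool) : Set ℕ := {a | τ.getD a false = true}

def kbit (kap a : ℕ) : Bool :=
  ((Encodable.decode kap : Option (List Bool)).getD []).getD a false

def obit (τ : List Bool) (kap w m' : ℕ) : ℕ :=
  if m' ≤ w then
    (bif (if m' % 2 = 0 then τ.getD (m' / 2) false else kbit kap (m' / 2)) then 1 else 0)
  else 0

def oseg (τ : List Bool) (kap w n : ℕ) : List ℕ := (List.range n).map (obit τ kap w)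

def KCorrect (kap w : ℕ) : Prop := ∀ a ≤ w, (kbit kap a = true ↔ a ∈ K)

lemma join_even_mem {B C : Set ℕ} {a : ℕ} : 2 * a ∈ join B C ↔ a ∈ B := by
  constructor
  · rintro (⟨b, hb, he⟩ | ⟨b, hb, he⟩)
    · have : a = b := by omega
      rwa [this]
    · omega
  · intro ha; exact Or.inl ⟨a, ha, rfl⟩

lemma join_odd_mem {B C : Set ℕ} {a : ℕ} : 2 * a + 1 ∈ join B C ↔ a ∈ C := by
  constructor
  · rintro (⟨b, hb, he⟩ | ⟨b, hb, he⟩)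
    · omega
    · have : a = b := by omega
      rwa [this]
  · intro ha; exact Or.inr ⟨a, ha, rfl⟩

lemma obit_eq_chi {τ : List Bool} {kap w : ℕ} (hk : KCorrect kap w) (m' : ℕ) :
    obit τ kap w m' = chi (restrictTo (join (tauSet τ) K) w) m' := by
  unfold obit chi restrictTo
  by_cases hw : m' ≤ w
  · simp only [hw, if_true]
    by_cases hpar : m' % 2 = 0
    · have hm' : m' = 2 * (m' / 2) := by omega
      simp only [hpar, if_true]
      by_cases hb : τ.getD (m' / 2) false = true
      · have hmem : m' ∈ join (tauSet τ) K := by rw [hm']; exact join_even_mem.2 hb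
        rw [hb]
        simp [Set.mem_setOf_eq, hmem, hw]
      · have hmem : m' ∉ join (tauSet τ) K := by
          rw [hm']; intro hc; exact hb (join_even_mem.1 hc)
        rw [Bool.not_eq_true] at hb
        rw [hb]
        simp only [Set.mem_setOf_eq, cond_false]
        rw [if_neg (by tauto)]
    · have hm' : m' = 2 * (m' / 2) + 1 := by omega
      have hle : m' / 2 ≤ w := by omega
      simp only [hpar, if_false]
      by_cases hb : kbit kap (m' / 2) = true
      · have hK : m' / 2 ∈ K := (hk _ hle).1 hb
        have hmem : m' ∈ join (tauSet τ) K := by rw [hm']; exact join_odd_mem.2 hK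
        rw [hb]
        simp [Set.mem_setOf_eq, hmem, hw]
      · have hK : m' / 2 ∉ K := fun hc => hb ((hk _ hle).2 hc)
        have hmem : m' ∉ join (tauSet τ) K := by
          rw [hm']; intro hc; exact hK (join_odd_mem.1 hc)
        rw [Bool.not_eq_true] at hb
        rw [hb]
        simp only [Set.mem_setOf_eq, cond_false]
        rw [if_neg (by tauto)]
  · simp only [hw, if_false, Set.mem_setOf_eq]
    rw [if_neg (by tauto)]

lemma oseg_eq_initSeg {τ : List Bool} {kap w : ℕ} (hk : KCorrect kap w) (n : ℕ) :
    oseg τ kap w n = initSeg (restrictTo (join (tauSet τ) K) w) n := by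
  unfold oseg initSeg
  exact List.map_congr_left fun a _ => obit_eq_chi hk a

/-! ### Bounded universal boolean quantifier -/

def myAll (n : ℕ) (f : ℕ → Bool) : Bool := (List.range n).foldr (fun a b => f a && b) true

lemma foldr_and_iff (f : ℕ → Bool) :
    ∀ l : List ℕ, (l.foldr (fun a b => f a && b) true = true ↔ ∀ a ∈ l, f a = true) := by
  intro l
  induction l with
  | nil => simp
  | cons a l ih => simp [ih]

lemma myAll_iff {n : ℕ} {f : ℕ → Bool} : myAll n f = true ↔ ∀ a < n, f a = true := by
  rw [myAll, foldr_and_iff]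
  simp [List.mem_range]

lemma myAll_primrec {α : Type*} [Primcodable α] {g : α → ℕ} {f : α → ℕ → Bool}
    (hg : Primrec g) (hf : Primrec₂ f) : Primrec fun a => myAll (g a) (f a) :=
  Primrec.list_foldr (Primrec.list_range.comp hg) (Primrec.const true)
    ((Primrec.and.comp (hf.comp Primrec.fst (Primrec.fst.comp Primrec.snd))
      (Primrec.snd.comp Primrec.snd)).to₂)

/-! ### Bounding `evaln` witnesses for `K` -/

lemma K_evaln_exists {a : ℕ} (ha : a ∈ K) :
    ∃ s, (evaln s (Denumerable.ofNat Code a) a).isSome := by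
  obtain ⟨v, hv⟩ := Part.dom_iff_mem.1 ha
  obtain ⟨s, hs⟩ := evaln_complete.1 hv
  exact ⟨s, by simp [Option.isSome_iff_exists, Option.mem_def.1 hs]⟩

lemma K_evaln_none {a : ℕ} (ha : a ∉ K) (s : ℕ) :
    evaln s (Denumerable.ofNat Code a) a = none := by
  rw [Option.eq_none_iff_forall_not_mem]
  intro v hv
  exact ha (Part.dom_iff_mem.2 ⟨v, evaln_sound hv⟩)

lemma exists_K_bound (w : ℕ) :
    ∃ s, ∀ a ≤ w, a ∈ K → (evaln s (Denumerable.ofNat Code a) a).isSome := by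
  induction w with
  | zero =>
      by_cases h : (0 : ℕ) ∈ K
      · obtain ⟨s, hs⟩ := K_evaln_exists h
        exact ⟨s, fun a ha _ => by rw [Nat.le_zero.1 ha]; exact hs⟩
      · exact ⟨0, fun a ha hK => absurd (Nat.le_zero.1 ha ▸ hK) h⟩
  | succ w ih =>
      obtain ⟨s, hs⟩ := ih
      by_cases h : (w + 1) ∈ K
      · obtain ⟨s', hs'⟩ := K_evaln_exists h
        refine ⟨max s s', fun a ha hK => ?_⟩
        rcases Nat.lt_or_ge a (w + 1) with hlt | hge
        · obtain ⟨v, hv⟩ := Option.isSome_iff_exists.1 (hs a (by omega) hK)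
          exact Option.isSome_iff_exists.2 ⟨v, evaln_mono (le_max_left _ _) hv⟩
        · have : a = w + 1 := by omega
          subst this
          obtain ⟨v, hv⟩ := Option.isSome_iff_exists.1 hs'
          exact Option.isSome_iff_exists.2 ⟨v, evaln_mono (le_max_right _ _) hv⟩
      · refine ⟨s, fun a ha hK => ?_⟩
        rcases Nat.lt_or_ge a (w + 1) with hlt | hge
        · exact hs a (by omega) hK
        · have : a = w + 1 := by omega
          subst this
          exact absurd hK h

/-! ### Characterizing `Phi` -/

lemma Phi_dom_def (e : ℕ) (B : Set ℕ) (x : ℕ) :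
    (Phi e B x).Dom = ∃ n, (phi e (Nat.pair (Encodable.encode (initSeg B n)) x)).Dom := rfl

lemma Phi_eq_some_iff {e : ℕ} {B : Set ℕ} {x v : ℕ} :
    Phi e B x = Part.some v ↔
      ∃ n, v ∈ phi e (Nat.pair (Encodable.encode (initSeg B n)) x) ∧
        ∀ n' < n, ¬(phi e (Nat.pair (Encodable.encode (initSeg B n')) x)).Dom := by
  constructor
  · intro hE
    obtain ⟨h, hget⟩ := Part.eq_some_iff.1 hE
    refine ⟨Nat.find h, ?_, fun n' hn' => Nat.find_min h hn'⟩
    rw [← hget]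
    exact Part.get_mem _
  · rintro ⟨n, hv, hmin⟩
    have hn : (phi e (Nat.pair (Encodable.encode (initSeg B n)) x)).Dom :=
      Part.dom_iff_mem.2 ⟨v, hv⟩
    have hdom : (Phi e B x).Dom := ⟨n, hn⟩
    have hfind : Nat.find hdom = n := (Nat.find_eq_iff hdom).2 ⟨hn, fun k hk => hmin k hk⟩
    apply Part.eq_some_iff.2
    refine ⟨hdom, ?_⟩
    have hv' : v ∈ phi e (Nat.pair (Encodable.encode (initSeg B (Nat.find hdom))) x) := by
      rw [hfind]; exact hv
    exact Part.get_eq_of_mem hv' _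

lemma Phi_psi_dom_iff {j x : ℕ} (hx : phi x = psi j) (hj : (phi j x).Dom) (B : Set ℕ) :
    (Phi x B x).Dom ↔ (max ((phi j x).get hj) x + 1) ∈ B := by
  have hcond : ∀ n : ℕ, (max ((phi j x).get hj) x + 1) < n →
      psiCond (Encodable.encode (initSeg B n)) x ((phi j x).get hj) =
        decide (chi B (max ((phi j x).get hj) x + 1) = 1) := by
    intro n hlt
    unfold psiCond
    rw [Encodable.encodek]
    simp only [Option.map_some, Option.getD_some, initSeg_length, initSeg_getD hlt]
    simp [hlt]
  have hcond2 : ∀ n : ℕ, ¬ (max ((phi j x).get hj) x + 1) < n →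
      psiCond (Encodable.encode (initSeg B n)) x ((phi j x).get hj) = false := by
    intro n hlt
    unfold psiCond
    rw [Encodable.encodek]
    simp only [Option.map_some, Option.getD_some, initSeg_length]
    simp [hlt]
  have hDom : ∀ n : ℕ, (phi x (Nat.pair (Encodable.encode (initSeg B n)) x)).Dom ↔
      ((max ((phi j x).get hj) x + 1) < n ∧ chi B (max ((phi j x).get hj) x + 1) = 1) := by
    intro n
    rw [hx]
    unfold psi
    rw [Nat.unpair_pair]
    constructor
    · intro hd
      obtain ⟨a, ha⟩ := Part.dom_iff_mem.1 hd
      obtain ⟨b, hb, hab⟩ := Part.mem_bind_iff.1 ha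
      have hbe : (phi j x).get hj = b := Part.get_eq_of_mem hb hj
      rw [← hbe] at hab
      by_cases hlt : (max ((phi j x).get hj) x + 1) < n
      · refine ⟨hlt, ?_⟩
        rw [hcond n hlt] at hab
        by_cases hchi : chi B (max ((phi j x).get hj) x + 1) = 1
        · exact hchi
        · rw [decide_eq_false hchi] at hab
          simp [Part.mem_ofOption] at hab
      · rw [hcond2 n hlt] at hab
        simp [Part.mem_ofOption] at hab
    · rintro ⟨hlt, hchi⟩
      apply Part.dom_iff_mem.2
      refine ⟨0, Part.mem_bind_iff.2 ⟨(phi j x).get hj, Part.get_mem hj, ?_⟩⟩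
      rw [hcond n hlt, decide_eq_true hchi]
      simp [Part.mem_ofOption]
  rw [Phi_dom_def]
  constructor
  · rintro ⟨n, hn⟩
    exact chi_eq_one_iff.1 ((hDom n).1 hn).2
  · intro hB
    exact ⟨max ((phi j x).get hj) x + 2, (hDom _).2 ⟨by omega, chi_eq_one_iff.2 hB⟩⟩

lemma mem_bJump_iff {j i0 x : ℕ} (hx : phi x = psi j) (hj : ∀ y, (phi j y).Dom)
    (hi0 : i0 ≤ x)
    (hphii0 : phi i0 = fun y => (phi j y).map fun w => max w y + 1)
    (A : Set ℕ) :
    x ∈ bJump A ↔ (max ((phi j x).get (hj x)) x + 1) ∈ A := by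
  set p := max ((phi j x).get (hj x)) x + 1 with hp
  constructor
  · rintro ⟨i, hix, hd, hPhi⟩
    have := (Phi_psi_dom_iff hx (hj x) _).1 hPhi
    exact this.1
  · intro hA
    have hd : (phi i0 x).Dom := by
      rw [hphii0]
      exact Part.dom_iff_mem.2 ⟨p, (Part.mem_map_iff _).2 ⟨_, Part.get_mem (hj x), rfl⟩⟩
    have hget : (phi i0 x).get hd = p := by
      apply Part.get_eq_of_mem
      rw [hphii0]
      exact (Part.mem_map_iff _).2 ⟨_, Part.get_mem (hj x), rfl⟩
    refine ⟨i0, hi0, hd, ?_⟩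
    rw [hget]
    exact (Phi_psi_dom_iff hx (hj x) _).2 ⟨hA, le_refl p⟩

lemma restrict_join_congr {A B0 : Set ℕ} {w : ℕ}
    (hagree : ∀ a, 2 * a ≤ w → (a ∈ B0 ↔ a ∈ A)) :
    restrictTo (join B0 K) w = restrictTo (join A K) w := by
  ext m
  simp only [restrictTo, Set.mem_setOf_eq]
  constructor
  · rintro ⟨(⟨a, ha, rfl⟩ | ⟨a, ha, rfl⟩), hm⟩
    · exact ⟨Or.inl ⟨a, (hagree a hm).1 ha, rfl⟩, hm⟩
    · exact ⟨Or.inr ⟨a, ha, rfl⟩, hm⟩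
  · rintro ⟨(⟨a, ha, rfl⟩ | ⟨a, ha, rfl⟩), hm⟩
    · exact ⟨Or.inl ⟨a, (hagree a hm).2 ha, rfl⟩, hm⟩
    · exact ⟨Or.inr ⟨a, ha, rfl⟩, hm⟩

/-! ### The computable core of the forcing set -/

def coreBody (e j c1 z t : ℕ) (τ : List Bool) : Bool :=
  let k := z.unpair.1
  let z2 := z.unpair.2
  let w := z2.unpair.1
  let z3 := z2.unpair.2
  let sw := z3.unpair.1
  let z4 := z3.unpair.2
  let kap := z4.unpair.1
  let z5 := z4.unpair.2
  let s1 := z5.unpair.1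
  let z6 := z5.unpair.2
  let n := z6.unpair.1
  let s2 := z6.unpair.2
  let t1 := t.unpair.1
  let n' := t.unpair.2.unpair.1
  let s3 := t.unpair.2.unpair.2
  let x := qnat c1 k
  let p := max w x + 1
  (((((decide (evaln sw (Denumerable.ofNat Code j) x = some w) &&
    decide (τ.length = p + 1)) &&
    myAll (w + 1) (fun a => !(kbit kap a) || (evaln s1 (Denumerable.ofNat Code a) a).isSome)) &&
    decide (evaln s2 (Denumerable.ofNat Code e)
        (Nat.pair (Encodable.encode (oseg τ kap w n)) x)
      = some (bif τ.getD p false then 0 else 1))) &&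
    myAll (w + 1) (fun a => (kbit kap a) ||
      decide (evaln t1 (Denumerable.ofNat Code a) a = none))) &&
    (!(decide (n' < n)) || decide (evaln s3 (Denumerable.ofNat Code e)
        (Nat.pair (Encodable.encode (oseg τ kap w n')) x) = none)))

def coreR (e j c1 : ℕ) (m z t : ℕ) : Bool :=
  ((Encodable.decode m : Option (List Bool)).map (coreBody e j c1 z t)).getD false

lemma kbit_primrec : Primrec₂ kbit :=
  ((Primrec.list_getD false).comp
    (Primrec.option_getD.comp (Primrec.decode.comp Primrec.fst) (Primrec.const []))
    Primrec.snd).to₂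

lemma oseg_primrec : Primrec₂ fun (q : (List Bool × ℕ) × ℕ) (n : ℕ) =>
    oseg q.1.1 q.1.2 q.2 n := by
  have hτ : Primrec fun p : ((List Bool × ℕ) × ℕ) × ℕ => p.1.1.1 :=
    Primrec.fst.comp (Primrec.fst.comp Primrec.fst)
  have hkap : Primrec fun p : ((List Bool × ℕ) × ℕ) × ℕ => p.1.1.2 :=
    Primrec.snd.comp (Primrec.fst.comp Primrec.fst)
  have hw : Primrec fun p : ((List Bool × ℕ) × ℕ) × ℕ => p.1.2 :=
    Primrec.snd.comp Primrec.fst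
  have hn : Primrec fun p : ((List Bool × ℕ) × ℕ) × ℕ => p.2 := Primrec.snd
  have hobit : Primrec₂ fun (p : ((List Bool × ℕ) × ℕ) × ℕ) (m' : ℕ) =>
      obit p.1.1.1 p.1.1.2 p.1.2 m' := by
    have hm' : Primrec fun q : (((List Bool × ℕ) × ℕ) × ℕ) × ℕ => q.2 := Primrec.snd
    have hτ' : Primrec fun q : (((List Bool × ℕ) × ℕ) × ℕ) × ℕ => q.1.1.1.1 :=
      hτ.comp Primrec.fst
    have hkap' : Primrec fun q : (((List Bool × ℕ) × ℕ) × ℕ) × ℕ => q.1.1.1.2 :=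
      hkap.comp Primrec.fst
    have hw' : Primrec fun q : (((List Bool × ℕ) × ℕ) × ℕ) × ℕ => q.1.1.2 :=
      hw.comp Primrec.fst
    have hdiv : Primrec fun q : (((List Bool × ℕ) × ℕ) × ℕ) × ℕ => q.2 / 2 :=
      Primrec.nat_div.comp hm' (Primrec.const 2)
    have hbool : Primrec fun q : (((List Bool × ℕ) × ℕ) × ℕ) × ℕ =>
        (if q.2 % 2 = 0 then q.1.1.1.1.getD (q.2 / 2) false else kbit q.1.1.1.2 (q.2 / 2)) :=
      Primrec.ite (Primrec.eq.comp (Primrec.nat_mod.comp hm' (Primrec.const 2))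
          (Primrec.const 0))
        ((Primrec.list_getD false).comp hτ' hdiv) (kbit_primrec.comp hkap' hdiv)
    exact (Primrec.ite (Primrec.nat_le.comp hm' hw')
      (Primrec.cond hbool (Primrec.const 1) (Primrec.const 0)) (Primrec.const 0)).to₂
  exact (Primrec.list_map (Primrec.list_range.comp hn) hobit.to₂).to₂

lemma oseg_comp_prim {α : Type} [Primcodable α] {τ : α → List Bool} {kap w n : α → ℕ}
    (hτ : Primrec τ) (hkap : Primrec kap) (hw : Primrec w) (hn : Primrec n) :
    Primrec fun a => oseg (τ a) (kap a) (w a) (n a) :=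
  oseg_primrec.comp ((hτ.pair hkap).pair hw) hn

lemma evaln_comp_prim {α : Type} [Primcodable α] {s : α → ℕ} {c : α → Code} {x : α → ℕ}
    (hs : Primrec s) (hc : Primrec c) (hx : Primrec x) :
    Primrec fun a => evaln (s a) (c a) (x a) :=
  primrec_evaln.comp ((hs.pair hc).pair hx)

abbrev Q1 : Type := (ℕ × ℕ) × List Bool

set_option maxHeartbeats 1000000 in
lemma coreBody_primrec (e j c1 : ℕ) :
    Primrec₂ fun (zt : ℕ × ℕ) (τ : List Bool) => coreBody e j c1 zt.1 zt.2 τ := by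
  have hz : Primrec fun q : Q1 => q.1.1 := Primrec.fst.comp Primrec.fst
  have ht : Primrec fun q : Q1 => q.1.2 := Primrec.snd.comp Primrec.fst
  have hτ : Primrec fun q : Q1 => q.2 := Primrec.snd
  have hk : Primrec fun q : Q1 => (Nat.unpair q.1.1).1 :=
    Primrec.fst.comp (Primrec.unpair.comp hz)
  have hz2 : Primrec fun q : Q1 => (Nat.unpair q.1.1).2 :=
    Primrec.snd.comp (Primrec.unpair.comp hz)
  have hw : Primrec fun q : Q1 => (Nat.unpair (Nat.unpair q.1.1).2).1 :=
    Primrec.fst.comp (Primrec.unpair.comp hz2)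
  have hz3 : Primrec fun q : Q1 => (Nat.unpair (Nat.unpair q.1.1).2).2 :=
    Primrec.snd.comp (Primrec.unpair.comp hz2)
  have hsw : Primrec fun q : Q1 => (Nat.unpair (Nat.unpair (Nat.unpair q.1.1).2).2).1 :=
    Primrec.fst.comp (Primrec.unpair.comp hz3)
  have hz4 : Primrec fun q : Q1 => (Nat.unpair (Nat.unpair (Nat.unpair q.1.1).2).2).2 :=
    Primrec.snd.comp (Primrec.unpair.comp hz3)
  have hkap : Primrec fun q : Q1 =>
      (Nat.unpair (Nat.unpair (Nat.unpair (Nat.unpair q.1.1).2).2).2).1 :=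
    Primrec.fst.comp (Primrec.unpair.comp hz4)
  have hz5 : Primrec fun q : Q1 =>
      (Nat.unpair (Nat.unpair (Nat.unpair (Nat.unpair q.1.1).2).2).2).2 :=
    Primrec.snd.comp (Primrec.unpair.comp hz4)
  have hs1 : Primrec fun q : Q1 =>
      (Nat.unpair (Nat.unpair (Nat.unpair (Nat.unpair (Nat.unpair q.1.1).2).2).2).2).1 :=
    Primrec.fst.comp (Primrec.unpair.comp hz5)
  have hz6 : Primrec fun q : Q1 =>
      (Nat.unpair (Nat.unpair (Nat.unpair (Nat.unpair (Nat.unpair q.1.1).2).2).2).2).2 :=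
    Primrec.snd.comp (Primrec.unpair.comp hz5)
  have hn : Primrec fun q : Q1 =>
      (Nat.unpair (Nat.unpair (Nat.unpair (Nat.unpair (Nat.unpair (Nat.unpair q.1.1).2).2).2).2).2).1 :=
    Primrec.fst.comp (Primrec.unpair.comp hz6)
  have hs2 : Primrec fun q : Q1 =>
      (Nat.unpair (Nat.unpair (Nat.unpair (Nat.unpair (Nat.unpair (Nat.unpair q.1.1).2).2).2).2).2).2 :=
    Primrec.snd.comp (Primrec.unpair.comp hz6)
  have ht1 : Primrec fun q : Q1 => (Nat.unpair q.1.2).1 :=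
    Primrec.fst.comp (Primrec.unpair.comp ht)
  have ht2 : Primrec fun q : Q1 => (Nat.unpair q.1.2).2 :=
    Primrec.snd.comp (Primrec.unpair.comp ht)
  have hn' : Primrec fun q : Q1 => (Nat.unpair (Nat.unpair q.1.2).2).1 :=
    Primrec.fst.comp (Primrec.unpair.comp ht2)
  have hs3 : Primrec fun q : Q1 => (Nat.unpair (Nat.unpair q.1.2).2).2 :=
    Primrec.snd.comp (Primrec.unpair.comp ht2)
  have hx : Primrec fun q : Q1 => qnat c1 (Nat.unpair q.1.1).1 :=
    (qnat_primrec c1).comp hk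
  have hp : Primrec fun q : Q1 =>
      max (Nat.unpair (Nat.unpair q.1.1).2).1 (qnat c1 (Nat.unpair q.1.1).1) + 1 :=
    Primrec.succ.comp (Primrec.nat_max.comp hw hx)
  have hE1 : Primrec fun q : Q1 =>
      decide (evaln (Nat.unpair (Nat.unpair (Nat.unpair q.1.1).2).2).1 (Denumerable.ofNat Code j) (qnat c1 (Nat.unpair q.1.1).1) = some (Nat.unpair (Nat.unpair q.1.1).2).1) :=
    (Primrec.eq.comp
      (evaln_comp_prim hsw (Primrec.const (Denumerable.ofNat Code j)) hx)
      (Primrec.option_some.comp hw)).decide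
  have hE2 : Primrec fun q : Q1 => decide (q.2.length = (max (Nat.unpair (Nat.unpair q.1.1).2).1 (qnat c1 (Nat.unpair q.1.1).1) + 1) + 1) :=
    (Primrec.eq.comp (Primrec.list_length.comp hτ) (Primrec.succ.comp hp)).decide
  have hE4 : Primrec fun q : Q1 =>
      myAll ((Nat.unpair (Nat.unpair q.1.1).2).1 + 1) (fun a => !(kbit (Nat.unpair (Nat.unpair (Nat.unpair (Nat.unpair q.1.1).2).2).2).1 a) ||
        (evaln (Nat.unpair (Nat.unpair (Nat.unpair (Nat.unpair (Nat.unpair q.1.1).2).2).2).2).1 (Denumerable.ofNat Code a) a).isSome) := by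
    have h1 : Primrec fun qa : Q1 × ℕ => !(kbit (Nat.unpair (Nat.unpair (Nat.unpair (Nat.unpair qa.1.1.1).2).2).2).1 qa.2) :=
      Primrec.not.comp (kbit_primrec.comp (hkap.comp Primrec.fst) Primrec.snd)
    have h2 : Primrec fun qa : Q1 × ℕ =>
        (evaln (Nat.unpair (Nat.unpair (Nat.unpair (Nat.unpair (Nat.unpair qa.1.1.1).2).2).2).2).1 (Denumerable.ofNat Code qa.2) qa.2).isSome :=
      Primrec.option_isSome.comp (evaln_comp_prim (hs1.comp Primrec.fst)
        ((Primrec.ofNat Code).comp Primrec.snd) Primrec.snd)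
    exact myAll_primrec (Primrec.succ.comp hw) (Primrec.or.comp h1 h2).to₂
  have hosegn : Primrec fun q : Q1 => oseg q.2 (Nat.unpair (Nat.unpair (Nat.unpair (Nat.unpair q.1.1).2).2).2).1 (Nat.unpair (Nat.unpair q.1.1).2).1 (Nat.unpair (Nat.unpair (Nat.unpair (Nat.unpair (Nat.unpair (Nat.unpair q.1.1).2).2).2).2).2).1 :=
    oseg_comp_prim hτ hkap hw hn
  have hosegn' : Primrec fun q : Q1 => oseg q.2 (Nat.unpair (Nat.unpair (Nat.unpair (Nat.unpair q.1.1).2).2).2).1 (Nat.unpair (Nat.unpair q.1.1).2).1 (Nat.unpair (Nat.unpair q.1.2).2).1 :=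
    oseg_comp_prim hτ hkap hw hn'
  have hv : Primrec fun q : Q1 => (bif q.2.getD (max (Nat.unpair (Nat.unpair q.1.1).2).1 (qnat c1 (Nat.unpair q.1.1).1) + 1) false then (0:ℕ) else 1) :=
    Primrec.cond ((Primrec.list_getD false).comp hτ hp)
      (Primrec.const (0 : ℕ)) (Primrec.const (1 : ℕ))
  have hE6 : Primrec fun q : Q1 =>
      decide (evaln (Nat.unpair (Nat.unpair (Nat.unpair (Nat.unpair (Nat.unpair (Nat.unpair q.1.1).2).2).2).2).2).2 (Denumerable.ofNat Code e)
          (Nat.pair (Encodable.encode (oseg q.2 (Nat.unpair (Nat.unpair (Nat.unpair (Nat.unpair q.1.1).2).2).2).1 (Nat.unpair (Nat.unpair q.1.1).2).1 (Nat.unpair (Nat.unpair (Nat.unpair (Nat.unpair (Nat.unpair (Nat.unpair q.1.1).2).2).2).2).2).1)) (qnat c1 (Nat.unpair q.1.1).1))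
        = some (bif q.2.getD (max (Nat.unpair (Nat.unpair q.1.1).2).1 (qnat c1 (Nat.unpair q.1.1).1) + 1) false then 0 else 1)) :=
    (Primrec.eq.comp
      (evaln_comp_prim hs2 (Primrec.const (Denumerable.ofNat Code e))
        (Primrec₂.natPair.comp (Primrec.encode.comp hosegn) hx))
      (Primrec.option_some.comp hv)).decide
  have hE5 : Primrec fun q : Q1 =>
      myAll ((Nat.unpair (Nat.unpair q.1.1).2).1 + 1) (fun a => (kbit (Nat.unpair (Nat.unpair (Nat.unpair (Nat.unpair q.1.1).2).2).2).1 a) ||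
        decide (evaln (Nat.unpair q.1.2).1 (Denumerable.ofNat Code a) a = none)) := by
    have h1 : Primrec fun qa : Q1 × ℕ => kbit (Nat.unpair (Nat.unpair (Nat.unpair (Nat.unpair qa.1.1.1).2).2).2).1 qa.2 :=
      kbit_primrec.comp (hkap.comp Primrec.fst) Primrec.snd
    have h2 : Primrec fun qa : Q1 × ℕ =>
        decide (evaln (Nat.unpair qa.1.1.2).1 (Denumerable.ofNat Code qa.2) qa.2 = none) :=
      (Primrec.eq.comp (evaln_comp_prim (ht1.comp Primrec.fst)
        ((Primrec.ofNat Code).comp Primrec.snd) Primrec.snd)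
        (Primrec.const (none : Option ℕ))).decide
    exact myAll_primrec (Primrec.succ.comp hw) (Primrec.or.comp h1 h2).to₂
  have hE7 : Primrec fun q : Q1 =>
      (!(decide ((Nat.unpair (Nat.unpair q.1.2).2).1 < (Nat.unpair (Nat.unpair (Nat.unpair (Nat.unpair (Nat.unpair (Nat.unpair q.1.1).2).2).2).2).2).1)) || decide (evaln (Nat.unpair (Nat.unpair q.1.2).2).2 (Denumerable.ofNat Code e)
          (Nat.pair (Encodable.encode (oseg q.2 (Nat.unpair (Nat.unpair (Nat.unpair (Nat.unpair q.1.1).2).2).2).1 (Nat.unpair (Nat.unpair q.1.1).2).1 (Nat.unpair (Nat.unpair q.1.2).2).1)) (qnat c1 (Nat.unpair q.1.1).1)) = none)) :=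
    Primrec.or.comp (Primrec.not.comp (Primrec.nat_lt.comp hn' hn).decide)
      (Primrec.eq.comp
        (evaln_comp_prim hs3 (Primrec.const (Denumerable.ofNat Code e))
          (Primrec₂.natPair.comp (Primrec.encode.comp hosegn') hx))
        (Primrec.const (none : Option ℕ))).decide
  exact ((Primrec.and.comp (Primrec.and.comp (Primrec.and.comp
      (Primrec.and.comp (Primrec.and.comp hE1 hE2) hE4) hE6) hE5) hE7).of_eq
    (fun q => rfl)).to₂

lemma coreR_computable (e j c1 : ℕ) :
    Computable fun y : ℕ =>
      coreR e j c1 ((Nat.unpair ((Nat.unpair y).1)).1) ((Nat.unpair ((Nat.unpair y).1)).2)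
        ((Nat.unpair y).2) := by
  have hm : Primrec fun y : ℕ => ((Nat.unpair ((Nat.unpair y).1)).1) :=
    Primrec.fst.comp (Primrec.unpair.comp (Primrec.fst.comp Primrec.unpair))
  have hz : Primrec fun y : ℕ => ((Nat.unpair ((Nat.unpair y).1)).2) :=
    Primrec.snd.comp (Primrec.unpair.comp (Primrec.fst.comp Primrec.unpair))
  have ht : Primrec fun y : ℕ => ((Nat.unpair y).2) := Primrec.snd.comp Primrec.unpair
  have hdec : Primrec fun y : ℕ => (Encodable.decode (((Nat.unpair ((Nat.unpair y).1)).1)) :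
      Option (List Bool)) := Primrec.decode.comp hm
  have hmap : Primrec fun y : ℕ =>
      ((Encodable.decode (((Nat.unpair ((Nat.unpair y).1)).1)) : Option (List Bool)).map
        (coreBody e j c1 ((Nat.unpair ((Nat.unpair y).1)).2) ((Nat.unpair y).2))) :=
    Primrec.option_map hdec (((coreBody_primrec e j c1).comp ((hz.pair ht).comp Primrec.fst)
      Primrec.snd).to₂)
  exact ((Primrec.option_getD.comp hmap (Primrec.const false)).of_eq fun y => rfl).to_comp

lemma S_sigma3 (e j c1 : ℕ) :
    SigmaN 3 {m : ℕ | ∃ z, ∀ t, coreR e j c1 m z t = true} := by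
  have hR2c : ComputablePred (fun y : ℕ =>
      y ∈ {y : ℕ | coreR e j c1 ((Nat.unpair ((Nat.unpair y).1)).1)
        ((Nat.unpair ((Nat.unpair y).1)).2) ((Nat.unpair y).2) = true}) := by
    apply ComputablePred.computable_iff.2
    exact ⟨_, coreR_computable e j c1, rfl⟩
  have h1 : SigmaN 1 {y : ℕ | ∃ t, Nat.pair y t ∉
      {y : ℕ | coreR e j c1 ((Nat.unpair ((Nat.unpair y).1)).1)
        ((Nat.unpair ((Nat.unpair y).1)).2) ((Nat.unpair y).2) = true}} :=
    ⟨_, hR2c, rfl⟩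
  have h2 := sigmaN_mono h1
  refine ⟨_, h2, ?_⟩
  ext m
  simp only [Set.mem_setOf_eq]
  constructor
  · rintro ⟨z, hz⟩
    refine ⟨z, ?_⟩
    simp only [Set.mem_setOf_eq, Nat.unpair_pair, not_exists, not_not]
    exact fun t => hz t
  · rintro ⟨z, hz⟩
    simp only [Set.mem_setOf_eq, Nat.unpair_pair, not_exists, not_not] at hz
    exact ⟨z, hz⟩

/-! ### Semantic characterization of the forcing set -/

lemma coreBody_packed (e j c1 k w sw kap s1 n s2 t1 n' s3 : ℕ) (τ : List Bool) :
    coreBody e j c1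
      (Nat.pair k (Nat.pair w (Nat.pair sw (Nat.pair kap (Nat.pair s1 (Nat.pair n s2))))))
      (Nat.pair t1 (Nat.pair n' s3)) τ =
    (((((decide (evaln sw (Denumerable.ofNat Code j) (qnat c1 k) = some w) &&
      decide (τ.length = (max w (qnat c1 k) + 1) + 1)) &&
      myAll (w + 1) (fun a => !(kbit kap a) || (evaln s1 (Denumerable.ofNat Code a) a).isSome)) &&
      decide (evaln s2 (Denumerable.ofNat Code e)
          (Nat.pair (Encodable.encode (oseg τ kap w n)) (qnat c1 k))
        = some (bif τ.getD (max w (qnat c1 k) + 1) false then 0 else 1))) &&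
      myAll (w + 1) (fun a => (kbit kap a) ||
        decide (evaln t1 (Denumerable.ofNat Code a) a = none))) &&
      (!(decide (n' < n)) || decide (evaln s3 (Denumerable.ofNat Code e)
          (Nat.pair (Encodable.encode (oseg τ kap w n')) (qnat c1 k)) = none))) := by
  unfold coreBody
  simp only [Nat.unpair_pair]

lemma coreR_eq_body (e j c1 z t : ℕ) (τ : List Bool) :
    coreR e j c1 (Encodable.encode τ) z t = coreBody e j c1 z t τ := by
  unfold coreR
  rw [Encodable.encodek]
  rfl

def SemS (e j c1 : ℕ) (hj : ∀ y, (phi j y).Dom) (τ : List Bool) : Prop :=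
  ∃ k, τ.length = (max ((phi j (qnat c1 k)).get (hj (qnat c1 k))) (qnat c1 k) + 1) + 1 ∧
    Phi e (restrictTo (join (tauSet τ) K) ((phi j (qnat c1 k)).get (hj (qnat c1 k)))) (qnat c1 k)
      = Part.some (bif τ.getD
          (max ((phi j (qnat c1 k)).get (hj (qnat c1 k))) (qnat c1 k) + 1) false then 0 else 1)

lemma coreR_iff (e j c1 : ℕ) (hj : ∀ y, (phi j y).Dom) (τ : List Bool) :
    (∃ z, ∀ t, coreR e j c1 (Encodable.encode τ) z t = true) ↔ SemS e j c1 hj τ := by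
  constructor
  · rintro ⟨z, hz⟩
    obtain ⟨k, z2, rfl⟩ : ∃ a b, z = Nat.pair a b := ⟨_, _, (Nat.pair_unpair z).symm⟩
    obtain ⟨w, z3, rfl⟩ : ∃ a b, z2 = Nat.pair a b := ⟨_, _, (Nat.pair_unpair z2).symm⟩
    obtain ⟨sw, z4, rfl⟩ : ∃ a b, z3 = Nat.pair a b := ⟨_, _, (Nat.pair_unpair z3).symm⟩
    obtain ⟨kap, z5, rfl⟩ : ∃ a b, z4 = Nat.pair a b := ⟨_, _, (Nat.pair_unpair z4).symm⟩
    obtain ⟨s1, z6, rfl⟩ : ∃ a b, z5 = Nat.pair a b := ⟨_, _, (Nat.pair_unpair z5).symm⟩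
    obtain ⟨n, s2, rfl⟩ : ∃ a b, z6 = Nat.pair a b := ⟨_, _, (Nat.pair_unpair z6).symm⟩
    set x := qnat c1 k with hxdef
    have hmain := hz (Nat.pair 0 (Nat.pair 0 0))
    rw [coreR_eq_body, coreBody_packed] at hmain
    simp only [Bool.and_eq_true, Bool.or_eq_true, Bool.not_eq_true', decide_eq_true_eq,
      decide_eq_false_iff_not, myAll_iff] at hmain
    obtain ⟨⟨⟨⟨⟨hE1, hE2⟩, hE4⟩, hE6⟩, -⟩, -⟩ := hmain
    have hwmem : w ∈ phi j x := evaln_sound (Option.mem_def.2 hE1)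
    have hwget : (phi j x).get (hj x) = w := Part.get_eq_of_mem hwmem _
    have hKC : KCorrect kap w := by
      intro a ha
      constructor
      · intro hb
        rcases hE4 a (by omega) with h4 | h4
        · rw [hb] at h4; cases h4
        · obtain ⟨v, hv⟩ := Option.isSome_iff_exists.1 h4
          exact Part.dom_iff_mem.2 ⟨v, evaln_sound (Option.mem_def.2 hv)⟩
      · intro hK
        by_contra hb
        obtain ⟨v, hv⟩ := Part.dom_iff_mem.1 hK
        obtain ⟨s, hs⟩ := evaln_complete.1 hv
        have h5 := hz (Nat.pair s (Nat.pair 0 0))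
        rw [coreR_eq_body, coreBody_packed] at h5
        simp only [Bool.and_eq_true, Bool.or_eq_true, Bool.not_eq_true', decide_eq_true_eq,
          decide_eq_false_iff_not, myAll_iff] at h5
        obtain ⟨⟨-, hE5⟩, -⟩ := h5
        rcases hE5 a (by omega) with hh | hh
        · exact hb hh
        · rw [Option.mem_def.1 hs] at hh
          cases hh
    have hv6 : (bif τ.getD (max w x + 1) false then 0 else 1) ∈
        phi e (Nat.pair (Encodable.encode
          (initSeg (restrictTo (join (tauSet τ) K) w) n)) x) := by
      rw [← oseg_eq_initSeg hKC]
      exact evaln_sound (Option.mem_def.2 hE6)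
    have hmin : ∀ n' < n, ¬ (phi e (Nat.pair (Encodable.encode
        (initSeg (restrictTo (join (tauSet τ) K) w) n')) x)).Dom := by
      intro n' hn' hdom
      obtain ⟨v', hv'⟩ := Part.dom_iff_mem.1 hdom
      obtain ⟨s3, hs3⟩ := evaln_complete.1 hv'
      have h7 := hz (Nat.pair 0 (Nat.pair n' s3))
      rw [coreR_eq_body, coreBody_packed] at h7
      simp only [Bool.and_eq_true, Bool.or_eq_true, Bool.not_eq_true', decide_eq_true_eq,
        decide_eq_false_iff_not, myAll_iff] at h7
      obtain ⟨-, h7'⟩ := h7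
      rcases h7' with hh | hh
      · exact hh hn'
      · rw [oseg_eq_initSeg hKC] at hh
        rw [Option.mem_def.1 hs3] at hh
        cases hh
    refine ⟨k, ?_, ?_⟩
    · rw [hwget]
      exact hE2
    · rw [hwget]
      exact Phi_eq_some_iff.2 ⟨n, hv6, hmin⟩
  · rintro ⟨k, hlen, hPhi⟩
    set x := qnat c1 k with hxdef
    set w := (phi j x).get (hj x) with hwdef
    obtain ⟨sw, hsw⟩ := evaln_complete.1 (Part.get_mem (hj x))
    set kap := Encodable.encode (initSegB K (w + 1)) with hkapdef
    have hKC : KCorrect kap w := by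
      intro a ha
      unfold kbit
      rw [hkapdef, Encodable.encodek]
      simp only [Option.getD_some]
      rw [initSegB_getD (by omega)]
      simp
    obtain ⟨s1, hs1⟩ := exists_K_bound w
    obtain ⟨n, hv, hmin⟩ := Phi_eq_some_iff.1 hPhi
    obtain ⟨s2, hs2⟩ := evaln_complete.1 hv
    refine ⟨Nat.pair k (Nat.pair w (Nat.pair sw (Nat.pair kap
      (Nat.pair s1 (Nat.pair n s2))))), ?_⟩
    intro t
    obtain ⟨t1, t2, rfl⟩ : ∃ a b, t = Nat.pair a b := ⟨_, _, (Nat.pair_unpair t).symm⟩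
    obtain ⟨n', s3, rfl⟩ : ∃ a b, t2 = Nat.pair a b := ⟨_, _, (Nat.pair_unpair t2).symm⟩
    rw [coreR_eq_body, coreBody_packed]
    simp only [Bool.and_eq_true, Bool.or_eq_true, Bool.not_eq_true', decide_eq_true_eq,
      decide_eq_false_iff_not, myAll_iff]
    refine ⟨⟨⟨⟨⟨?_, ?_⟩, ?_⟩, ?_⟩, ?_⟩, ?_⟩
    · exact Option.mem_def.1 hsw
    · exact hlen
    · intro a ha
      by_cases hb : kbit kap a = true
      · exact Or.inr (hs1 a (by omega) ((hKC a (by omega)).1 hb))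
      · exact Or.inl (by simpa using hb)
    · rw [oseg_eq_initSeg hKC]
      exact Option.mem_def.1 hs2
    · intro a ha
      by_cases hb : kbit kap a = true
      · exact Or.inl hb
      · refine Or.inr ?_
        have hK : a ∉ K := fun hc => hb ((hKC a (by omega)).2 hc)
        exact K_evaln_none hK s3 ▸ K_evaln_none hK t1
    · by_cases hn' : n' < n
      · refine Or.inr ?_
        rw [oseg_eq_initSeg hKC]
        rw [Option.eq_none_iff_forall_not_mem]
        intro v' hv'
        exact hmin n' hn' (Part.dom_iff_mem.2 ⟨v', evaln_sound hv'⟩)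
      · exact Or.inl hn'

lemma tauSet_initSegB {A : Set ℕ} {l a : ℕ} (ha : a < l) :
    (a ∈ tauSet (initSegB A l)) ↔ a ∈ A := by
  unfold tauSet
  rw [Set.mem_setOf_eq, initSegB_getD ha]
  simp

end Aux

/-- If `A` is 3-generic then `A^b` is not bounded Turing reducible to `A ⊕ ∅′`. -/
theorem bJump_not_bT_join_of_3generic (A : Set ℕ) (h : NGeneric 3 A) :
    ¬ bTReducible (bJump A) (join A K) := by
  rintro ⟨e, j, hj, hred⟩
  -- a code for the "bound plus one" function
  have hpfun : Partrec (fun y : ℕ => (phi j y).map fun w => max w y + 1) :=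
    (phi_partrec j).map
      ((Primrec.succ.comp (Primrec.nat_max.comp Primrec.snd Primrec.fst)).to₂).to_comp
  obtain ⟨cp, hcp⟩ := Nat.Partrec.Code.exists_code.1 (Partrec.nat_iff.1 hpfun)
  set i0 := Encodable.encode cp with hi0
  have hphii0 : phi i0 = fun y => (phi j y).map fun w => max w y + 1 := by
    show (Denumerable.ofNat Nat.Partrec.Code i0).eval = _
    rw [hi0, Denumerable.ofNat_encode]
    exact hcp
  -- a code for psi j, padded above i0
  obtain ⟨cf, hcf⟩ := Nat.Partrec.Code.exists_code.1 (Partrec.nat_iff.1 (psi_partrec j))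
  set c1 := qnat (Encodable.encode cf) i0 with hc1
  have hphix : ∀ k, phi (qnat c1 k) = psi j := by
    intro k
    rw [phi_qnat, hc1, phi_qnat]
    show (Denumerable.ofNat Nat.Partrec.Code (Encodable.encode cf)).eval = _
    rw [Denumerable.ofNat_encode]
    exact hcf
  have hxge : ∀ k, i0 ≤ qnat c1 k ∧ k ≤ qnat c1 k := by
    intro k
    have h1 := qnat_ge c1 k
    have h2 := qnat_ge (Encodable.encode cf) i0
    omega
  have hBJ : ∀ k, (qnat c1 k ∈ bJump A ↔
      (max ((phi j (qnat c1 k)).get (hj (qnat c1 k))) (qnat c1 k) + 1) ∈ A) :=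
    fun k => mem_bJump_iff (hphix k) hj (hxge k).1 hphii0 A
  -- the forcing set
  have hS3 : SigmaN 3 {m : ℕ | ∃ z, ∀ t, coreR e j c1 m z t = true} := S_sigma3 e j c1
  rcases h _ hS3 with ⟨l, hl⟩ | ⟨l, hl⟩
  · -- some initial segment of A is in S : contradiction with correctness of the reduction
    obtain ⟨k, hlen, hPhi⟩ := (coreR_iff e j c1 hj (initSegB A l)).1 hl
    rw [initSegB_length] at hlen
    have horacle : restrictTo (join (tauSet (initSegB A l)) K)
        ((phi j (qnat c1 k)).get (hj (qnat c1 k)))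
        = restrictTo (join A K) ((phi j (qnat c1 k)).get (hj (qnat c1 k))) := by
      apply restrict_join_congr
      intro a ha
      exact tauSet_initSegB (by omega)
    rw [horacle] at hPhi
    have hv := Part.some_inj.1 (hPhi.symm.trans (hred (qnat c1 k)))
    rw [initSegB_getD (show max ((phi j (qnat c1 k)).get (hj (qnat c1 k))) (qnat c1 k) + 1 < l
      by omega)] at hv
    by_cases hmem : (max ((phi j (qnat c1 k)).get (hj (qnat c1 k))) (qnat c1 k) + 1) ∈ A
    · rw [decide_eq_true hmem, chi_eq_one_iff.2 ((hBJ k).2 hmem)] at hv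
      simp at hv
    · have hchi : chi (bJump A) (qnat c1 k) = 0 := by
        unfold chi
        rw [if_neg (fun hc => hmem ((hBJ k).1 hc))]
      rw [decide_eq_false hmem, hchi] at hv
      simp at hv
  · -- no extension of A↾l is in S : construct an extension in S
    have hlp : l ≤ max ((phi j (qnat c1 l)).get (hj (qnat c1 l))) (qnat c1 l) + 1 := by
      have := (hxge l).2
      omega
    set p := max ((phi j (qnat c1 l)).get (hj (qnat c1 l))) (qnat c1 l) + 1 with hpdef
    set b : Bool := !(decide (p ∈ A)) with hbdef
    set τ : List Bool := initSegB A p ++ [b] with hτdef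
    have hpre : initSegB A l <+: τ := (initSegB_prefix A hlp).trans (List.prefix_append _ _)
    have hτlen : τ.length = p + 1 := by
      rw [hτdef, List.length_append, initSegB_length]
      rfl
    have hτgetD : ∀ a < p, τ.getD a false = decide (a ∈ A) := by
      intro a ha
      rw [hτdef, List.getD_append _ _ _ _ (by rw [initSegB_length]; exact ha)]
      exact initSegB_getD ha
    have hτgetp : τ.getD p false = b := by
      rw [hτdef]
      rw [List.getD_append_right _ _ _ _ (by rw [initSegB_length])]
      rw [initSegB_length]
      simp
    have horacle : restrictTo (join (tauSet τ) K)
          ((phi j (qnat c1 l)).get (hj (qnat c1 l)))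
        = restrictTo (join A K) ((phi j (qnat c1 l)).get (hj (qnat c1 l))) := by
      apply restrict_join_congr
      intro a ha
      unfold tauSet
      rw [Set.mem_setOf_eq, hτgetD a (by omega)]
      simp
    have hval : (bif τ.getD p false then (0:ℕ) else 1) = chi (bJump A) (qnat c1 l) := by
      rw [hτgetp, hbdef]
      unfold chi
      by_cases hmem : p ∈ A
      · rw [if_pos ((hBJ l).2 hmem)]
        simp [hmem]
      · rw [if_neg (fun hc => hmem ((hBJ l).1 hc))]
        simp [hmem]
    have hSem : SemS e j c1 hj τ := by
      refine ⟨l, hτlen, ?_⟩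
      rw [horacle, hval]
      exact hred (qnat c1 l)
    exact hl τ hpre ((coreR_iff e j c1 hj τ).2 hSem)
end

section
/- Let k > 0 and let A ⊆ ℕ be ω^k-c.e. Then A^b is ω^{k+1}-c.e. -/
open Classical

namespace BJaux

open Nat.Partrec (Code)
open Nat.Partrec.Code (evaln)
open Encodable Denumerable

abbrev LexLt (a b : List ℕ) : Prop := List.Lex (· < ·) a b

theorem lex_trans : ∀ {a b c : List ℕ}, LexLt a b → LexLt b c → LexLt a c := by
  intro a b c h1
  induction h1 generalizing c with
  | nil =>
    intro h2; cases h2 with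
    | cons _ => exact List.Lex.nil
    | rel _ => exact List.Lex.nil
  | @cons x l1 l2 h ih =>
    intro h2; cases h2 with
    | cons h' => exact List.Lex.cons (ih h')
    | rel h' => exact List.Lex.rel h'
  | @rel x l1 y l2 h =>
    intro h2; cases h2 with
    | cons _ => exact List.Lex.rel h
    | rel h' => exact List.Lex.rel (h.trans h')

theorem lex_irrefl : ∀ (a : List ℕ), ¬ LexLt a a := by
  intro a h
  induction a with
  | nil => cases h
  | cons x l ih =>
    cases h with
    | cons h' => exact ih h'
    | rel h' => exact lt_irrefl _ h'

theorem lex_asymm {a b : List ℕ} (h : LexLt a b) (h' : LexLt b a) : False :=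
  lex_irrefl a (lex_trans h h')

theorem lex_trichot (a b : List ℕ) : LexLt a b ∨ a = b ∨ LexLt b a :=
  trichotomous_of (List.Lex (· < ·)) a b


theorem listc : ∀ {a : List ℕ} {k : ℕ}, a.length = k + 1 → ∃ x l, a = x :: l ∧ l.length = k := by
  intro a k h
  cases a with
  | nil => simp at h
  | cons x l => exact ⟨x, l, rfl, by simpa using h⟩

/-- strict comparison of first `k` entries -/
def cmpLt : ℕ → List ℕ → List ℕ → Bool
  | 0, _, _ => false
  | k+1, a, b =>
    decide (a.headI < b.headI) || (decide (a.headI = b.headI) && cmpLt k a.tail b.tail)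

theorem cmpLt_iff : ∀ (k : ℕ) (a b : List ℕ), a.length = k → b.length = k →
    (cmpLt k a b = true ↔ LexLt a b) := by
  intro k
  induction k with
  | zero =>
    intro a b ha hb
    rw [List.length_eq_zero_iff] at ha hb; subst ha; subst hb
    simp [cmpLt]
  | succ k ih =>
    intro a b ha hb
    cases a with
    | nil => simp at ha
    | cons x l =>
      cases b with
      | nil => simp at hb
      | cons y m =>
        simp only [List.length_cons, Nat.add_right_cancel_iff] at ha hb
        show (decide (x < y) || (decide (x = y) && cmpLt k l m)) = true ↔ LexLt (x :: l) (y :: m)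
        simp only [cmpLt, List.headI, List.tail, Bool.or_eq_true, Bool.and_eq_true,
          decide_eq_true_eq]
        constructor
        · rintro (h | ⟨rfl, h⟩)
          · exact List.Lex.rel h
          · exact List.Lex.cons ((ih l m ha hb).1 h)
        · intro h
          cases h with
          | cons h' => exact Or.inr ⟨rfl, (ih l m ha hb).2 h'⟩
          | rel h' => exact Or.inl h'

/-- componentwise sum of first `k` entries -/
def vadd : ℕ → List ℕ → List ℕ → List ℕ
  | 0, _, _ => []
  | k+1, a, b => (a.headI + b.headI) :: vadd k a.tail b.tail

@[simp] theorem vadd_length : ∀ (k : ℕ) (a b : List ℕ), (vadd k a b).length = k := by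
  intro k; induction k with
  | zero => intro a b; rfl
  | succ k ih => intro a b; simp [vadd, ih]

/-- `LexLe` -/
def LexLe (a b : List ℕ) : Prop := a = b ∨ LexLt a b

theorem vadd_mono : ∀ (k : ℕ) (a a' b b' : List ℕ),
    a.length = k → a'.length = k → b.length = k → b'.length = k →
    LexLe a' a → LexLe b' b →
    (LexLt a' a ∨ LexLt b' b → LexLt (vadd k a' b') (vadd k a b)) ∧
      LexLe (vadd k a' b') (vadd k a b) := by
  intro k
  induction k with
  | zero =>
    intro a a' b b' ha ha' hb hb' h1 h2
    rw [List.length_eq_zero_iff] at ha ha' hb hb'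
    subst ha; subst ha'; subst hb; subst hb'
    constructor
    · rintro (h | h) <;> cases h
    · exact Or.inl rfl
  | succ k ih =>
    intro a a' b b' ha ha' hb hb' h1 h2
    obtain ⟨x, l, rfl, ha2⟩ := listc ha
    obtain ⟨x', l', rfl, ha2'⟩ := listc ha'
    obtain ⟨y, m, rfl, hb2⟩ := listc hb
    obtain ⟨y', m', rfl, hb2'⟩ := listc hb'
    -- head facts
    have hhead1 : x' < x ∨ (x' = x ∧ LexLe l' l) := by
      rcases h1 with h | h
      · injection h with h1 h2; exact Or.inr ⟨h1, Or.inl h2⟩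
      · cases h with
        | cons h' => exact Or.inr ⟨rfl, Or.inr h'⟩
        | rel h' => exact Or.inl h'
    have hhead2 : y' < y ∨ (y' = y ∧ LexLe m' m) := by
      rcases h2 with h | h
      · injection h with h1 h2; exact Or.inr ⟨h1, Or.inl h2⟩
      · cases h with
        | cons h' => exact Or.inr ⟨rfl, Or.inr h'⟩
        | rel h' => exact Or.inl h'
    simp only [vadd, List.headI, List.tail]
    rcases hhead1 with h | ⟨hx, hle1⟩
    · have hy : y' ≤ y := by
        rcases hhead2 with h' | ⟨hy', _⟩
        · exact le_of_lt h'
        · omega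
      exact ⟨fun _ => List.Lex.rel (by omega), Or.inr (List.Lex.rel (by omega))⟩
    · rcases hhead2 with h | ⟨hy, hle2⟩
      · exact ⟨fun _ => List.Lex.rel (by omega), Or.inr (List.Lex.rel (by omega))⟩
      · -- heads all equal, recurse
        subst hx; subst hy
        obtain ⟨hstrict, hle⟩ := ih l l' m m' ha2 ha2' hb2 hb2' hle1 hle2
        constructor
        · rintro (h | h)
          · cases h with
            | cons h' => exact List.Lex.cons (hstrict (Or.inl h'))
            | rel h' => exact absurd h' (lt_irrefl _)
          · cases h with
            | cons h' => exact List.Lex.cons (hstrict (Or.inr h'))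
            | rel h' => exact absurd h' (lt_irrefl _)
        · rcases hle with h | h
          · exact Or.inl (by rw [h])
          · exact Or.inr (List.Lex.cons h)

/-- append the "bit" to the last coordinate: doubles last entry and adds `1 - bit`. -/
def adj : ℕ → List ℕ → Bool → List ℕ
  | 0, _, _ => []
  | 1, a, e => [2 * a.headI + (bif e then 0 else 1)]
  | (k+2), a, e => a.headI :: adj (k+1) a.tail e

theorem adj_mono : ∀ (k : ℕ), 0 < k → ∀ (a a' : List ℕ) (e e' : Bool),
    a.length = k → a'.length = k → LexLt a' a → LexLt (adj k a' e') (adj k a e) := by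
  intro k
  induction k with
  | zero => intro h; exact absurd h (lt_irrefl _)
  | succ k ih =>
    intro _ a a' e e' ha ha' hlt
    obtain ⟨x, l, rfl, ha2⟩ := listc ha
    obtain ⟨x', l', rfl, ha2'⟩ := listc ha'
    cases k with
    | zero =>
      rw [List.length_eq_zero_iff] at ha2 ha2'; subst ha2; subst ha2'
      cases hlt with
      | cons h' => cases h'
      | rel h' =>
        simp only [adj, List.headI]
        refine List.Lex.rel ?_
        cases e <;> cases e' <;> simp <;> omega
    | succ k =>
      cases hlt with
      | cons h' =>
        simp only [adj, List.headI, List.tail]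
        exact List.Lex.cons (ih (Nat.succ_pos _) l l' e e' ha2 ha2' h')
      | rel h' =>
        simp only [adj, List.headI]
        exact List.Lex.rel h'

theorem adj_bit : ∀ (k : ℕ), 0 < k → ∀ (a : List ℕ), a.length = k →
    LexLt (adj k a true) (adj k a false) := by
  intro k
  induction k with
  | zero => intro h; exact absurd h (lt_irrefl _)
  | succ k ih =>
    intro _ a ha
    obtain ⟨x, l, rfl, ha2⟩ := listc ha
    cases k with
    | zero =>
      simp only [adj, List.headI]
      exact List.Lex.rel (by simp)
    | succ k =>
      simp only [adj, List.headI, List.tail]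
      exact List.Lex.cons (ih (Nat.succ_pos _) l ha2)

theorem adj_bit_inj : ∀ (k : ℕ), 0 < k → ∀ (a a' : List ℕ) (e e' : Bool),
    a.length = k → a'.length = k → adj k a e = adj k a' e' → e = e' := by
  intro k
  induction k with
  | zero => intro h; exact absurd h (lt_irrefl _)
  | succ k ih =>
    intro _ a a' e e' ha ha' heq
    obtain ⟨x, l, rfl, ha2⟩ := listc ha
    obtain ⟨x', l', rfl, ha2'⟩ := listc ha'
    cases k with
    | zero =>
      simp only [adj, List.headI] at heq
      injection heq with h1 _
      cases e <;> cases e' <;> simp_all <;> omega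
    | succ k =>
      simp only [adj, List.headI, List.tail] at heq
      injection heq with h1 h2
      exact ih (Nat.succ_pos _) l l' e e' ha2 ha2' h2

@[simp] theorem adj_length : ∀ (k : ℕ) (a : List ℕ) (e : Bool), (adj k a e).length = k := by
  intro k
  induction k with
  | zero => intro a e; rfl
  | succ k ih =>
    intro a e
    cases k with
    | zero => rfl
    | succ k => simp [adj, ih]

/-! ### generic fold lemmas -/

theorem foldr_or_spec (p : ℕ → Bool) : ∀ (L : List ℕ),
    (L.foldr (fun u acc => p u || acc) false = true ↔ ∃ u ∈ L, p u = true) := by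
  intro L; induction L with
  | nil => simp
  | cons a L ih => simp [ih]

theorem foldr_and_spec (p : ℕ → Bool) : ∀ (L : List ℕ),
    (L.foldr (fun u acc => p u && acc) true = true ↔ ∀ u ∈ L, p u = true) := by
  intro L; induction L with
  | nil => simp
  | cons a L ih => simp [ih]

theorem foldr_max_mem : ∀ (L : List ℕ), L ≠ [] → L.foldr max 0 ∈ L := by
  intro L; induction L with
  | nil => intro h; exact absurd rfl h
  | cons a L ih =>
    intro _
    rcases eq_or_ne L [] with h | h
    · subst h; simp
    · rcases max_choice a (L.foldr max 0) with h' | h'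
      · simp [List.foldr_cons, h']
      · simp only [List.foldr_cons, h']
        exact List.mem_cons_of_mem _ (ih h)

theorem le_foldr_max : ∀ (L : List ℕ), ∀ u ∈ L, u ≤ L.foldr max 0 := by
  intro L; induction L with
  | nil => intro u h; simp at h
  | cons a L ih =>
    intro u h
    rcases List.mem_cons.1 h with rfl | h
    · exact le_max_left _ _
    · exact le_trans (ih u h) (le_max_right _ _)

/-- monotone `filterMap` lemma -/
theorem filterMap_mono_lemma (f g : ℕ → Option ℕ) :
    ∀ (L : List ℕ), (∀ i ∈ L, ∀ u, f i = some u → g i = some u) →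
    (L.filterMap f).length ≤ (L.filterMap g).length ∧
      ((L.filterMap f).length = (L.filterMap g).length → L.filterMap f = L.filterMap g) := by
  intro L; induction L with
  | nil => simp
  | cons a L ih =>
    intro hfg
    have hL := ih (fun i hi => hfg i (List.mem_cons_of_mem _ hi))
    have ha := hfg a (List.mem_cons_self)
    cases hfa : f a with
    | some u =>
      have hga := ha u hfa
      simp only [List.filterMap_cons, hfa, hga, List.length_cons]
      exact ⟨Nat.succ_le_succ hL.1, fun h => by rw [hL.2 (Nat.succ_injective h)]⟩
    | none =>
      cases hga : g a with
      | none =>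
        simp only [List.filterMap_cons, hfa, hga]
        exact hL
      | some v =>
        simp only [List.filterMap_cons, hfa, hga, List.length_cons]
        constructor
        · omega
        · intro h
          have hlen := List.length_filterMap_le g L
          omega

/-! ### the stage machinery -/

def cands (k : ℕ) (cA : Code) (m s : ℕ) : List (List ℕ) :=
  (List.range (s+1)).filterMap fun c =>
    Option.casesOn (Encodable.decode (α := List ℕ) c) none fun l =>
      bif decide (l.length = k) && (evaln s cA (Nat.pair m c)).isSome then some l else none

theorem mem_cands {k : ℕ} {cA : Code} {m s : ℕ} {l : List ℕ} :
    l ∈ cands k cA m s ↔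
      l.length = k ∧ Encodable.encode l ≤ s ∧ (evaln s cA (Nat.pair m (Encodable.encode l))).isSome := by
  constructor
  · intro h
    obtain ⟨c, hc, hcl⟩ := List.mem_filterMap.1 h
    rcases hdec : Encodable.decode (α := List ℕ) c with _ | l'
    · rw [hdec] at hcl; simp at hcl
    · rw [hdec] at hcl
      simp only [] at hcl
      rcases hcond : (decide (l'.length = k) && (evaln s cA (Nat.pair m c)).isSome) with _ | _
      · rw [hcond] at hcl; simp at hcl
      · rw [hcond] at hcl; simp only [cond] at hcl
        have hl : l' = l := by simpa using hcl
        subst hl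
        have hofn : Denumerable.ofNat (List ℕ) c = l' :=
          Option.some_injective _ ((Denumerable.decode_eq_ofNat (List ℕ) c).symm.trans hdec)
        have hce : Encodable.encode l' = c := by
          rw [← hofn]; exact Denumerable.encode_ofNat c
        simp only [Bool.and_eq_true, decide_eq_true_eq] at hcond
        refine ⟨hcond.1, ?_, ?_⟩
        · rw [hce]; exact Nat.lt_succ_iff.1 (List.mem_range.1 hc)
        · rw [hce]; exact hcond.2
  · rintro ⟨h1, h2, h3⟩
    refine List.mem_filterMap.2 ⟨Encodable.encode l, List.mem_range.2 (Nat.lt_succ_iff.2 h2), ?_⟩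
    rw [Encodable.encodek]
    simp [h1, h3]

theorem cands_mono {k : ℕ} {cA : Code} {m s : ℕ} {l : List ℕ} (h : l ∈ cands k cA m s) :
    l ∈ cands k cA m (s+1) := by
  obtain ⟨h1, h2, h3⟩ := mem_cands.1 h
  obtain ⟨v, hv⟩ := Option.isSome_iff_exists.1 h3
  refine mem_cands.2 ⟨h1, le_trans h2 (Nat.le_succ _), ?_⟩
  have : v ∈ evaln (s+1) cA (Nat.pair m (Encodable.encode l)) :=
    Nat.Partrec.Code.evaln_mono (Nat.le_succ _) hv
  exact Option.isSome_iff_exists.2 ⟨v, this⟩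

def bstep (k : ℕ) : List ℕ → Option (List ℕ) → Option (List ℕ) := fun l acc =>
  Option.casesOn acc (some l) (fun l' => bif cmpLt k l l' then some l else some l')

def bestL (k : ℕ) (cA : Code) (m s : ℕ) : Option (List ℕ) :=
  (cands k cA m s).foldr (bstep k) none

theorem bfold_spec (k : ℕ) : ∀ (L : List (List ℕ)), (∀ l ∈ L, l.length = k) →
    (L.foldr (bstep k) none = none ∧ L = []) ∨
      ∃ l, L.foldr (bstep k) none = some l ∧ l ∈ L ∧ ∀ l' ∈ L, l = l' ∨ LexLt l l' := by
  intro L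
  induction L with
  | nil => intro _; exact Or.inl ⟨rfl, rfl⟩
  | cons a L ih =>
    intro h
    have ha : a.length = k := h a (List.mem_cons_self)
    rcases ih (fun l hl => h l (List.mem_cons_of_mem _ hl)) with ⟨hn, rfl⟩ | ⟨r, hr, hrmem, hrmin⟩
    · refine Or.inr ⟨a, ?_, List.mem_cons_self, ?_⟩
      · simp [List.foldr_cons, hn, bstep]
      · intro l' hl'
        rcases List.mem_cons.1 hl' with rfl | h'
        · exact Or.inl rfl
        · simp at h'
    · have hrl : r.length = k := h r (List.mem_cons_of_mem _ hrmem)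
      rcases hc : cmpLt k a r with _ | _
      · -- keep r
        have hnlt : ¬ LexLt a r := fun hl => by
          rw [← cmpLt_iff k a r ha hrl] at hl; rw [hc] at hl; simp at hl
        refine Or.inr ⟨r, ?_, List.mem_cons_of_mem _ hrmem, ?_⟩
        · simp [List.foldr_cons, hr, bstep, hc]
        · intro l' hl'
          rcases List.mem_cons.1 hl' with rfl | h'
          · rcases lex_trichot l' r with h1 | h1 | h1
            · exact absurd h1 hnlt
            · exact Or.inl h1.symm
            · exact Or.inr h1
          · exact hrmin l' h'
      · -- a is smaller
        have hlt : LexLt a r := (cmpLt_iff k a r ha hrl).1 hc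
        refine Or.inr ⟨a, ?_, List.mem_cons_self, ?_⟩
        · simp [List.foldr_cons, hr, bstep, hc]
        · intro l' hl'
          rcases List.mem_cons.1 hl' with rfl | h'
          · exact Or.inl rfl
          · rcases hrmin l' h' with rfl | h1
            · exact Or.inr hlt
            · exact Or.inr (lex_trans hlt h1)

theorem cands_lengths {k : ℕ} {cA : Code} {m s : ℕ} : ∀ l ∈ cands k cA m s, l.length = k :=
  fun _ hl => (mem_cands.1 hl).1

theorem bestL_spec (k : ℕ) (cA : Code) (m s : ℕ) :
    (bestL k cA m s = none ∧ cands k cA m s = []) ∨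
      ∃ l, bestL k cA m s = some l ∧ l ∈ cands k cA m s ∧
        ∀ l' ∈ cands k cA m s, l = l' ∨ LexLt l l' :=
  bfold_spec k _ cands_lengths

theorem bestL_isSome_of_mem {k : ℕ} {cA : Code} {m s : ℕ} {l : List ℕ}
    (h : l ∈ cands k cA m s) : (bestL k cA m s).isSome := by
  rcases bestL_spec k cA m s with ⟨_, he⟩ | ⟨r, hr, _, _⟩
  · rw [he] at h; simp at h
  · rw [hr]; rfl

theorem bestL_mem {k : ℕ} {cA : Code} {m s : ℕ} {l : List ℕ}
    (h : bestL k cA m s = some l) : l ∈ cands k cA m s := by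
  rcases bestL_spec k cA m s with ⟨hn, _⟩ | ⟨r, hr, hmem, _⟩
  · rw [h] at hn; simp at hn
  · rw [h] at hr; injection hr with hr; subst hr; exact hmem

theorem bestL_length {k : ℕ} {cA : Code} {m s : ℕ} {l : List ℕ}
    (h : bestL k cA m s = some l) : l.length = k :=
  (mem_cands.1 (bestL_mem h)).1

theorem bestL_min {k : ℕ} {cA : Code} {m s : ℕ} {l : List ℕ}
    (h : bestL k cA m s = some l) : ∀ l' ∈ cands k cA m s, l = l' ∨ LexLt l l' := by
  rcases bestL_spec k cA m s with ⟨hn, _⟩ | ⟨r, hr, _, hmin⟩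
  · rw [h] at hn; simp at hn
  · rw [h] at hr; injection hr with hr; subst hr; exact hmin

theorem bestL_isSome_mono {k : ℕ} {cA : Code} {m s : ℕ}
    (h : (bestL k cA m s).isSome) : (bestL k cA m (s+1)).isSome := by
  obtain ⟨l, hl⟩ := Option.isSome_iff_exists.1 h
  exact bestL_isSome_of_mem (cands_mono (bestL_mem hl))

theorem bestL_mono {k : ℕ} {cA : Code} {m s : ℕ} {l : List ℕ}
    (h : bestL k cA m s = some l) :
    ∃ l₂, bestL k cA m (s+1) = some l₂ ∧ (l₂ = l ∨ LexLt l₂ l) := by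
  have hmem : l ∈ cands k cA m (s+1) := cands_mono (bestL_mem h)
  obtain ⟨l₂, hl₂⟩ := Option.isSome_iff_exists.1 (bestL_isSome_of_mem hmem)
  exact ⟨l₂, hl₂, bestL_min hl₂ l hmem⟩

theorem evaln_stable {s t : ℕ} {c : Code} {n : ℕ} (hst : s ≤ t)
    (h : (evaln s c n).isSome) : evaln t c n = evaln s c n := by
  obtain ⟨v, hv⟩ := Option.isSome_iff_exists.1 h
  have : v ∈ evaln t c n := Nat.Partrec.Code.evaln_mono hst hv
  rw [hv, this]

def valA (k : ℕ) (cA : Code) (m s : ℕ) : ℕ :=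
  Option.casesOn (bestL k cA m s) 0 fun l =>
    min ((evaln s cA (Nat.pair m (Encodable.encode l))).getD 0) 1

theorem valA_stable {k : ℕ} {cA : Code} {m s : ℕ}
    (h : bestL k cA m (s+1) = bestL k cA m s) : valA k cA m (s+1) = valA k cA m s := by
  unfold valA
  rw [h]
  cases hb : bestL k cA m s with
  | none => rfl
  | some l =>
    have hev : (evaln s cA (Nat.pair m (Encodable.encode l))).isSome :=
      (mem_cands.1 (bestL_mem hb)).2.2
    simp only []
    rw [evaln_stable (Nat.le_succ s) hev]

def useO (x i s : ℕ) : Option ℕ := evaln s (Denumerable.ofNat Code i) x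

def allConv (k : ℕ) (cA : Code) (u s : ℕ) : Bool :=
  (List.range (u+1)).foldr (fun m acc => (bestL k cA m s).isSome && acc) true

theorem allConv_iff {k : ℕ} {cA : Code} {u s : ℕ} :
    allConv k cA u s = true ↔ ∀ m ≤ u, (bestL k cA m s).isSome := by
  rw [allConv, foldr_and_spec (fun m => (bestL k cA m s).isSome)]
  constructor
  · intro h m hm; exact h m (List.mem_range.2 (Nat.lt_succ_iff.2 hm))
  · intro h m hm; exact h m (Nat.lt_succ_iff.1 (List.mem_range.1 hm))

theorem allConv_mono {k : ℕ} {cA : Code} {u s : ℕ} (h : allConv k cA u s = true) :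
    allConv k cA u (s+1) = true :=
  allConv_iff.2 fun m hm => bestL_isSome_mono (allConv_iff.1 h m hm)

def usesF (k : ℕ) (cA : Code) (x s i : ℕ) : Option ℕ :=
  Option.casesOn (useO x i s) none fun u => bif allConv k cA u s then some u else none

def usesL (k : ℕ) (cA : Code) (x s : ℕ) : List ℕ :=
  (List.range (x+1)).filterMap (usesF k cA x s)

theorem useO_stable {x i s v : ℕ} (h : useO x i s = some v) : useO x i (s+1) = some v := by
  have hv : v ∈ evaln s (Denumerable.ofNat Code i) x := h
  exact Nat.Partrec.Code.evaln_mono (Nat.le_succ _) hv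

theorem usesF_mono {k : ℕ} {cA : Code} {x s i u : ℕ} (h : usesF k cA x s i = some u) :
    usesF k cA x (s+1) i = some u := by
  cases hu : useO x i s with
  | none => rw [usesF, hu] at h; simp at h
  | some v =>
    rcases hc : allConv k cA v s with _ | _
    · rw [usesF, hu] at h; simp [hc] at h
    · rw [usesF, hu] at h
      simp only [hc, cond_true] at h
      have huv : v = u := by simpa using h
      subst huv
      rw [usesF, useO_stable hu]
      simp [allConv_mono hc]

theorem mem_usesL {k : ℕ} {cA : Code} {x s u : ℕ} :
    u ∈ usesL k cA x s ↔ ∃ i ≤ x, useO x i s = some u ∧ allConv k cA u s = true := by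
  constructor
  · intro h
    obtain ⟨i, hi, hfi⟩ := List.mem_filterMap.1 h
    refine ⟨i, Nat.lt_succ_iff.1 (List.mem_range.1 hi), ?_⟩
    cases hu : useO x i s with
    | none => rw [usesF, hu] at hfi; simp at hfi
    | some v =>
      rcases hc : allConv k cA v s with _ | _
      · rw [usesF, hu] at hfi; simp [hc] at hfi
      · rw [usesF, hu] at hfi
        simp only [hc, cond_true] at hfi
        have : v = u := by simpa using hfi
        subst this
        exact ⟨rfl, hc⟩
  · rintro ⟨i, hi, hu, hc⟩
    refine List.mem_filterMap.2 ⟨i, List.mem_range.2 (Nat.lt_succ_iff.2 hi), ?_⟩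
    rw [usesF, hu]
    simp [hc]

def mxU (k : ℕ) (cA : Code) (x s : ℕ) : ℕ := (usesL k cA x s).foldr max 0

def sstep (k : ℕ) (cA : Code) (s : ℕ) : ℕ → List ℕ → List ℕ := fun m acc =>
  vadd k ((bestL k cA m s).getD (List.replicate k 0)) acc

def suml (k : ℕ) (cA : Code) (x s : ℕ) : List ℕ :=
  bif decide (usesL k cA x s = []) then List.replicate k 0
  else (List.range (mxU k cA x s + 1)).foldr (sstep k cA s) (List.replicate k 0)

def ostr (k : ℕ) (cA : Code) (u n s : ℕ) : List ℕ :=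
  (List.range n).map fun m => bif decide (m ≤ u) then valA k cA m s else 0

def bitB (k : ℕ) (cA : Code) (x s : ℕ) : Bool :=
  (usesL k cA x s).foldr (fun u acc =>
    ((List.range (s+1)).foldr (fun n acc2 =>
      (evaln s (Denumerable.ofNat Code x)
        (Nat.pair (Encodable.encode (ostr k cA u n s)) x)).isSome || acc2) false) || acc) false

def ctr (k : ℕ) (cA : Code) (x s : ℕ) : List ℕ :=
  ((x+1) - (usesL k cA x s).length) :: adj k (suml k cA x s) (bitB k cA x s)

def gsv (k : ℕ) (cA : Code) (x s : ℕ) : ℕ := bif bitB k cA x s then 1 else 0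

theorem bitB_iff {k : ℕ} {cA : Code} {x s : ℕ} :
    bitB k cA x s = true ↔ ∃ u ∈ usesL k cA x s, ∃ n ≤ s,
      (evaln s (Denumerable.ofNat Code x)
        (Nat.pair (Encodable.encode (ostr k cA u n s)) x)).isSome := by
  rw [bitB, foldr_or_spec]
  constructor
  · rintro ⟨u, hu, hp⟩
    rw [foldr_or_spec] at hp
    obtain ⟨n, hn, hev⟩ := hp
    exact ⟨u, hu, n, Nat.lt_succ_iff.1 (List.mem_range.1 hn), hev⟩
  · rintro ⟨u, hu, n, hn, hev⟩
    refine ⟨u, hu, ?_⟩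
    rw [foldr_or_spec]
    exact ⟨n, List.mem_range.2 (Nat.lt_succ_iff.2 hn), hev⟩

theorem suml_length (k : ℕ) (cA : Code) (x s : ℕ) : (suml k cA x s).length = k := by
  rw [suml]
  cases decide (usesL k cA x s = []) with
  | true => simp
  | false =>
    simp only [cond_false]
    cases h : List.range (mxU k cA x s + 1) with
    | nil => simp at h
    | cons a L => simp [sstep]

theorem ctr_length (k : ℕ) (cA : Code) (x s : ℕ) : (ctr k cA x s).length = k + 1 := by
  rw [ctr]; simp

theorem ctr_bit_inj {k : ℕ} (hk : 0 < k) {cA : Code} {x s t : ℕ}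
    (h : ctr k cA x s = ctr k cA x t) : bitB k cA x s = bitB k cA x t := by
  rw [ctr, ctr] at h
  injection h with h1 h2
  exact adj_bit_inj k hk _ _ _ _ (suml_length k cA x s) (suml_length k cA x t) h2

theorem usesL_le_length {k : ℕ} {cA : Code} {x s : ℕ} : (usesL k cA x s).length ≤ x + 1 := by
  rw [usesL]
  calc ((List.range (x+1)).filterMap (usesF k cA x s)).length
      ≤ (List.range (x+1)).length := List.length_filterMap_le _ _
    _ = x + 1 := List.length_range

theorem bestL_some_of_le_mxU {k : ℕ} {cA : Code} {x s m : ℕ}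
    (hne : usesL k cA x s ≠ []) (hm : m ≤ mxU k cA x s) : (bestL k cA m s).isSome := by
  have hmem : mxU k cA x s ∈ usesL k cA x s := foldr_max_mem _ hne
  obtain ⟨i, _, _, hc⟩ := mem_usesL.1 hmem
  exact allConv_iff.1 hc m hm

/-- the fold comparison lemma -/
theorem sumfold_cases {k : ℕ} {cA : Code} {s : ℕ} :
    ∀ (R : List ℕ),
    (∀ m ∈ R, (bestL k cA m s).isSome) →
    ((∀ m ∈ R, bestL k cA m (s+1) = bestL k cA m s) ∧
        R.foldr (sstep k cA (s+1)) (List.replicate k 0) =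
          R.foldr (sstep k cA s) (List.replicate k 0)) ∨
      LexLt (R.foldr (sstep k cA (s+1)) (List.replicate k 0))
        (R.foldr (sstep k cA s) (List.replicate k 0)) := by
  intro R
  induction R with
  | nil => intro _; exact Or.inl ⟨fun m hm => absurd hm List.not_mem_nil, rfl⟩
  | cons m R ih =>
    intro hsome
    have hm : (bestL k cA m s).isSome := hsome m (List.mem_cons_self)
    obtain ⟨l, hl⟩ := Option.isSome_iff_exists.1 hm
    obtain ⟨l2, hl2, hrel⟩ := bestL_mono hl
    have hlk : l.length = k := bestL_length hl
    have hl2k : l2.length = k := bestL_length hl2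
    have htail := ih (fun m' hm' => hsome m' (List.mem_cons_of_mem _ hm'))
    have hTlen : ∀ t, (R.foldr (sstep k cA t) (List.replicate k 0)).length = k := by
      intro t
      cases R with
      | nil => simp
      | cons a L => simp [sstep]
    simp only [List.foldr_cons]
    rcases htail with ⟨hall, heq⟩ | hstrict
    · rcases hrel with rfl | hlt
      · -- best equal, tails equal
        refine Or.inl ⟨?_, ?_⟩
        · intro m' hm'
          rcases List.mem_cons.1 hm' with rfl | h'
          · rw [hl2, hl]
          · exact hall m' h'
        · rw [sstep, sstep, hl, hl2, heq]
      · -- head strictly decreased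
        refine Or.inr ?_
        rw [sstep, sstep, hl, hl2, heq]
        simp only [Option.getD_some]
        exact (vadd_mono k l l2 _ _ hlk hl2k (hTlen s) (hTlen s)
          (Or.inr hlt) (Or.inl rfl)).1 (Or.inl hlt)
    · refine Or.inr ?_
      rw [sstep, sstep, hl, hl2]
      simp only [Option.getD_some]
      have hle : LexLe l2 l := hrel
      exact (vadd_mono k l l2 (R.foldr (sstep k cA s) (List.replicate k 0))
        (R.foldr (sstep k cA (s+1)) (List.replicate k 0)) hlk hl2k (hTlen s) (hTlen (s+1))
        hle (Or.inr hstrict)).1 (Or.inr hstrict)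

theorem ostr_congr {k : ℕ} {cA : Code} {u n s t : ℕ}
    (h : ∀ m ≤ u, valA k cA m s = valA k cA m t) : ostr k cA u n s = ostr k cA u n t := by
  rw [ostr, ostr]
  apply List.map_congr_left
  intro m _
  rcases hdec : decide (m ≤ u) with _ | _
  · simp
  · simp only [cond_true]
    exact h m (of_decide_eq_true hdec)

/-- one-step monotonicity of the bit, given stable data -/
theorem bitB_step_mono {k : ℕ} {cA : Code} {x s : ℕ}
    (h1 : usesL k cA x (s+1) = usesL k cA x s)
    (h2 : ∀ m ≤ mxU k cA x s, bestL k cA m (s+1) = bestL k cA m s)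
    (hb : bitB k cA x s = true) : bitB k cA x (s+1) = true := by
  obtain ⟨u, hu, n, hn, hev⟩ := bitB_iff.1 hb
  have hum : u ≤ mxU k cA x s := le_foldr_max _ u hu
  have hostr : ostr k cA u n (s+1) = ostr k cA u n s :=
    ostr_congr fun m hm => valA_stable (h2 m (le_trans hm hum))
  refine bitB_iff.2 ⟨u, h1 ▸ hu, n, le_trans hn (Nat.le_succ _), ?_⟩
  rw [hostr]
  obtain ⟨v, hv⟩ := Option.isSome_iff_exists.1 hev
  exact Option.isSome_iff_exists.2 ⟨v, Nat.Partrec.Code.evaln_mono (Nat.le_succ _) hv⟩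

theorem foldr_congr_mem {α β : Type} (f g : α → β → β) (init : β) :
    ∀ (L : List α), (∀ a ∈ L, ∀ b, f a b = g a b) → L.foldr f init = L.foldr g init := by
  intro L
  induction L with
  | nil => intro _; rfl
  | cons a L ih =>
    intro h
    simp only [List.foldr_cons]
    rw [ih (fun a' ha' b => h a' (List.mem_cons_of_mem _ ha') b),
      h a (List.mem_cons_self)]

/-- congruence for suml -/
theorem suml_congr {k : ℕ} {cA : Code} {x s t : ℕ}
    (h1 : usesL k cA x s = usesL k cA x t)
    (h2 : ∀ m ≤ mxU k cA x s, bestL k cA m s = bestL k cA m t) :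
    suml k cA x s = suml k cA x t := by
  have hmx : mxU k cA x s = mxU k cA x t := by rw [mxU, mxU, h1]
  rw [suml, suml, h1, hmx]
  congr 1
  apply foldr_congr_mem
  intro m hm acc
  have hmle : m ≤ mxU k cA x s := by
    have := List.mem_range.1 hm
    omega
  rw [sstep, sstep, h2 m hmle]

/-- THE one-step lemma: the counter is non-increasing -/
theorem ctr_step {k : ℕ} (hk : 0 < k) (cA : Code) (x s : ℕ) :
    ctr k cA x (s+1) = ctr k cA x s ∨ LexLt (ctr k cA x (s+1)) (ctr k cA x s) := by
  have hmono : ∀ i ∈ List.range (x+1), ∀ u, usesF k cA x s i = some u →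
      usesF k cA x (s+1) i = some u := fun i _ u h => usesF_mono h
  obtain ⟨hlen, heq⟩ := filterMap_mono_lemma (usesF k cA x s) (usesF k cA x (s+1))
    (List.range (x+1)) hmono
  by_cases hL : ((List.range (x+1)).filterMap (usesF k cA x s)).length =
      ((List.range (x+1)).filterMap (usesF k cA x (s+1))).length
  · -- uses list unchanged
    have hLeq : usesL k cA x (s+1) = usesL k cA x s := (heq hL).symm
    have hhead : (x+1) - (usesL k cA x (s+1)).length = (x+1) - (usesL k cA x s).length := by
      rw [hLeq]
    by_cases hemp : usesL k cA x s = []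
    · -- empty uses: everything trivial
      have hemp1 : usesL k cA x (s+1) = [] := by rw [hLeq, hemp]
      have hsum : suml k cA x (s+1) = suml k cA x s := by
        rw [suml, suml, hemp, hemp1]; simp
      have hbit : bitB k cA x (s+1) = bitB k cA x s := by
        have b1 : bitB k cA x (s+1) = false := by rw [bitB, hemp1]; rfl
        have b2 : bitB k cA x s = false := by rw [bitB, hemp]; rfl
        rw [b1, b2]
      exact Or.inl (by rw [ctr, ctr, hhead, hsum, hbit])
    · have hmx : mxU k cA x (s+1) = mxU k cA x s := by rw [mxU, mxU, hLeq]
      have hemp1 : usesL k cA x (s+1) ≠ [] := by rw [hLeq]; exact hemp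
      have hsome : ∀ m ∈ List.range (mxU k cA x s + 1), (bestL k cA m s).isSome := fun m hm =>
        bestL_some_of_le_mxU hemp (Nat.lt_succ_iff.1 (List.mem_range.1 hm))
      rcases sumfold_cases (List.range (mxU k cA x s + 1)) hsome with ⟨hall, hfeq⟩ | hstrict
      · -- all bests equal
        have hall' : ∀ m ≤ mxU k cA x s, bestL k cA m (s+1) = bestL k cA m s := fun m hm =>
          hall m (List.mem_range.2 (Nat.lt_succ_iff.2 hm))
        have hsum : suml k cA x (s+1) = suml k cA x s := by
          rw [suml, suml, hLeq, hmx]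
          simp only [hemp, decide_false, cond_false]
          exact hfeq
        rcases hbit1 : bitB k cA x (s+1) with _ | _
        · rcases hbit0 : bitB k cA x s with _ | _
          · exact Or.inl (by rw [ctr, ctr, hhead, hsum, hbit1, hbit0])
          · -- bit went from true to false: impossible
            have := bitB_step_mono hLeq hall' hbit0
            rw [hbit1] at this; simp at this
        · rcases hbit0 : bitB k cA x s with _ | _
          · -- bit went false -> true: counter decreases
            refine Or.inr ?_
            rw [ctr, ctr, hhead, hsum, hbit1, hbit0]
            exact List.Lex.cons (adj_bit k hk _ (suml_length k cA x s))
          · exact Or.inl (by rw [ctr, ctr, hhead, hsum, hbit1, hbit0])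
      · -- suml strictly decreased
        refine Or.inr ?_
        have hsumlt : LexLt (suml k cA x (s+1)) (suml k cA x s) := by
          rw [suml, suml, hLeq, hmx]
          simp only [hemp, decide_false, cond_false]
          exact hstrict
        rw [ctr, ctr, hhead]
        exact List.Lex.cons (adj_mono k hk _ _ _ _ (suml_length k cA x s)
          (suml_length k cA x (s+1)) hsumlt)
  · -- a new index became ready: head strictly decreases
    refine Or.inr ?_
    have hlt : (usesL k cA x s).length < (usesL k cA x (s+1)).length :=
      lt_of_le_of_ne hlen hL
    have hle : (usesL k cA x (s+1)).length ≤ x + 1 := usesL_le_length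
    rw [ctr, ctr]
    exact List.Lex.rel (by omega)

theorem ctr_anti {k : ℕ} (hk : 0 < k) (cA : Code) (x : ℕ) {s t : ℕ} (h : s ≤ t) :
    ctr k cA x t = ctr k cA x s ∨ LexLt (ctr k cA x t) (ctr k cA x s) := by
  induction t with
  | zero =>
    have : s = 0 := Nat.le_zero.1 h
    subst this; exact Or.inl rfl
  | succ t ih =>
    rcases Nat.lt_or_ge s (t+1) with h' | h'
    · have hst : s ≤ t := Nat.lt_succ_iff.1 h'
      rcases ih hst with he | hlt
      · rcases ctr_step hk cA x t with h1 | h1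
        · exact Or.inl (h1.trans he)
        · exact Or.inr (he ▸ h1)
      · rcases ctr_step hk cA x t with h1 | h1
        · exact Or.inr (h1 ▸ hlt)
        · exact Or.inr (lex_trans h1 hlt)
    · have : s = t + 1 := le_antisymm h h'
      subst this; exact Or.inl rfl

theorem gsv_congr {k : ℕ} (hk : 0 < k) {cA : Code} {x s t : ℕ}
    (h : ctr k cA x s = ctr k cA x t) : gsv k cA x s = gsv k cA x t := by
  rw [gsv, gsv, ctr_bit_inj hk h]

/-- if the counter equals its limit value at stage `s`, it stays there -/
theorem ctr_sandwich {k : ℕ} (hk : 0 < k) (cA : Code) (x : ℕ) {s S : ℕ}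
    (hS : ∀ r, S ≤ r → ctr k cA x r = ctr k cA x S)
    (hsv : ctr k cA x s = ctr k cA x S) :
    ∀ r, s ≤ r → ctr k cA x r = ctr k cA x s := by
  intro r hr
  rcases Nat.le_total r S with h1 | h1
  · -- s ≤ r ≤ S
    rcases ctr_anti hk cA x hr with he | hlt
    · exact he
    · rcases ctr_anti hk cA x h1 with he2 | hlt2
      · rw [← he2, hS S le_rfl, ← hsv]
      · exfalso
        rw [hsv, ← hS S le_rfl] at hlt
        exact lex_asymm hlt hlt2
  · rw [hS r h1, ← hsv]

/-- eventual constancy of finitely many eventually-constant sequences -/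
theorem eventually_all {α : Type} (f : ℕ → ℕ → α) :
    ∀ (N : ℕ), (∀ i < N, ∃ T, ∀ s, T ≤ s → f i s = f i T) →
      ∃ T, ∀ s, T ≤ s → ∀ i < N, f i s = f i T := by
  intro N
  induction N with
  | zero => intro _; exact ⟨0, fun s _ i hi => absurd hi (Nat.not_lt_zero i)⟩
  | succ N ih =>
    intro h
    obtain ⟨T1, h1⟩ := ih fun i hi => h i (Nat.lt_succ_of_lt hi)
    obtain ⟨T2, h2⟩ := h N (Nat.lt_succ_self N)
    refine ⟨max T1 T2, fun s hs i hi => ?_⟩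
    rcases Nat.lt_succ_iff_lt_or_eq.1 hi with hi' | rfl
    · rw [h1 s (le_trans (le_max_left _ _) hs) i hi',
        h1 (max T1 T2) (le_max_left _ _) i hi']
    · rw [h2 s (le_trans (le_max_right _ _) hs), h2 (max T1 T2) (le_max_right _ _)]

theorem usesF_eventually_const {k : ℕ} {cA : Code} (x i : ℕ) :
    ∃ T, ∀ s, T ≤ s → usesF k cA x s i = usesF k cA x T i := by
  by_cases h : ∃ s u, usesF k cA x s i = some u
  · obtain ⟨s0, u, hu⟩ := h
    refine ⟨s0, fun s hs => ?_⟩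
    have : ∀ t, usesF k cA x (s0 + t) i = some u := by
      intro t
      induction t with
      | zero => exact hu
      | succ t iht => exact usesF_mono iht
    obtain ⟨d, rfl⟩ := Nat.exists_eq_add_of_le hs
    rw [this d, hu]
  · push_neg at h
    refine ⟨0, fun s _ => ?_⟩
    cases h1 : usesF k cA x s i with
    | none =>
      cases h2 : usesF k cA x 0 i with
      | none => rfl
      | some u => exact absurd h2 (h 0 u)
    | some u => exact absurd h1 (h s u)

/-! ### limit lemmas, assuming `A` is ω^k-c.e. via code `cA` -/

theorem chi_le_one (A : Set ℕ) (n : ℕ) : chi A n ≤ 1 := by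
  rw [chi]; split <;> simp

theorem filterMap_congr_mem {α β : Type} (f g : α → Option β) :
    ∀ (L : List α), (∀ a ∈ L, f a = g a) → L.filterMap f = L.filterMap g := by
  intro L
  induction L with
  | nil => intro _; rfl
  | cons a L ih =>
    intro h
    rw [List.filterMap_cons, List.filterMap_cons, h a (List.mem_cons_self),
      ih (fun a' ha' => h a' (List.mem_cons_of_mem _ ha'))]

section WithA

variable {k : ℕ} {cA : Code} {A : Set ℕ}

/-- the key hypothesis packaging -/
def GoodCode (k : ℕ) (cA : Code) (A : Set ℕ) : Prop :=
  ∀ n : ℕ, ∃ l : List ℕ, l.length = k ∧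
    (∀ l' : List ℕ, l'.length = k → List.Lex (· < ·) l' l →
      ¬(cA.eval (Nat.pair n (Encodable.encode l'))).Dom) ∧
    chi A n ∈ cA.eval (Nat.pair n (Encodable.encode l))

theorem best_limit (hA : GoodCode k cA A) (m : ℕ) :
    ∃ T l, l.length = k ∧ (∀ s, T ≤ s → bestL k cA m s = some l) ∧
      (∀ s, T ≤ s → valA k cA m s = chi A m) := by
  obtain ⟨lt, hlen, hdiv, hmem⟩ := hA m
  obtain ⟨t, ht⟩ := Nat.Partrec.Code.evaln_complete.1 hmem
  refine ⟨max t (Encodable.encode lt), lt, hlen, ?_, ?_⟩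
  all_goals
    have key : ∀ s, max t (Encodable.encode lt) ≤ s → bestL k cA m s = some lt ∧
        evaln s cA (Nat.pair m (Encodable.encode lt)) = some (chi A m) := by
      intro s hs
      have hts : t ≤ s := le_trans (le_max_left _ _) hs
      have hes : Encodable.encode lt ≤ s := le_trans (le_max_right _ _) hs
      have hev : chi A m ∈ evaln s cA (Nat.pair m (Encodable.encode lt)) :=
        Nat.Partrec.Code.evaln_mono hts ht
      have hcand : lt ∈ cands k cA m s :=
        mem_cands.2 ⟨hlen, hes, Option.isSome_iff_exists.2 ⟨_, hev⟩⟩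
      obtain ⟨l0, hl0⟩ := Option.isSome_iff_exists.1 (bestL_isSome_of_mem hcand)
      rcases bestL_min hl0 lt hcand with rfl | hlt
      · exact ⟨hl0, hev⟩
      · exfalso
        have hl0c := mem_cands.1 (bestL_mem hl0)
        obtain ⟨v, hv⟩ := Option.isSome_iff_exists.1 hl0c.2.2
        have : (cA.eval (Nat.pair m (Encodable.encode l0))).Dom :=
          Part.dom_iff_mem.2 ⟨v, Nat.Partrec.Code.evaln_sound hv⟩
        exact hdiv l0 hl0c.1 hlt this
  · intro s hs; exact (key s hs).1
  · intro s hs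
    obtain ⟨hb, he⟩ := key s hs
    rw [valA, hb]
    simp only [he, Option.getD_some]
    exact Nat.min_eq_left (chi_le_one A m)

theorem ostr_eq_initSeg {u n s : ℕ} (hval : ∀ m ≤ u, valA k cA m s = chi A m) :
    ostr k cA u n s = initSeg (restrictTo A u) n := by
  rw [ostr, initSeg]
  apply List.map_congr_left
  intro m _
  rcases hdec : decide (m ≤ u) with _ | _
  · have hmu : ¬ m ≤ u := of_decide_eq_false hdec
    simp only [cond_false]
    rw [chi]
    have : m ∉ restrictTo A u := fun hc => hmu hc.2
    rw [if_neg this]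
  · have hmu : m ≤ u := of_decide_eq_true hdec
    simp only [cond_true]
    rw [hval m hmu, chi, chi]
    by_cases hA' : m ∈ A
    · rw [if_pos hA', if_pos ⟨hA', hmu⟩]
    · rw [if_neg hA', if_neg (fun hc => hA' hc.1)]

theorem phi_eq (e : ℕ) : phi e = (Denumerable.ofNat Code e).eval := rfl

/-- if the bit is on at a stage where all the relevant approximations are correct,
then `x ∈ bJump A` -/
theorem bit_true_mem {x s : ℕ}
    (hval : ∀ m ≤ mxU k cA x s, valA k cA m s = chi A m)
    (hb : bitB k cA x s = true) : x ∈ bJump A := by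
  obtain ⟨u, hu, n, _, hev⟩ := bitB_iff.1 hb
  obtain ⟨i, hi, huse, _⟩ := mem_usesL.1 hu
  have hum : u ≤ mxU k cA x s := le_foldr_max _ u hu
  have hphii : u ∈ phi i x := by
    rw [phi_eq]
    exact Nat.Partrec.Code.evaln_sound huse
  have hdom : (phi i x).Dom := Part.dom_iff_mem.2 ⟨u, hphii⟩
  have hget : (phi i x).get hdom = u := Part.get_eq_of_mem hphii hdom
  have hostr : ostr k cA u n s = initSeg (restrictTo A u) n :=
    ostr_eq_initSeg (fun m hm => hval m (le_trans hm hum))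
  rw [hostr] at hev
  obtain ⟨v, hv⟩ := Option.isSome_iff_exists.1 hev
  have hvdom : (phi x (Nat.pair (Encodable.encode (initSeg (restrictTo A u) n)) x)).Dom := by
    rw [phi_eq]
    exact Part.dom_iff_mem.2 ⟨v, Nat.Partrec.Code.evaln_sound hv⟩
  refine ⟨i, hi, hdom, ?_⟩
  rw [hget]
  exact ⟨n, hvdom⟩

/-- conversely, if `x ∈ bJump A` then the bit is on at every sufficiently late correct stage -/
theorem mem_bit_true (hA : GoodCode k cA A) {x : ℕ} (S2 : ℕ)
    (hmem : x ∈ bJump A) : ∃ s, S2 ≤ s ∧ bitB k cA x s = true := by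
  obtain ⟨i, hi, hdom, hPhi⟩ := hmem
  set u := (phi i x).get hdom with hu
  have hphii : u ∈ phi i x := Part.get_mem hdom
  obtain ⟨t2, ht2⟩ := Nat.Partrec.Code.evaln_complete.1 (phi_eq i ▸ hphii)
  obtain ⟨n, hn⟩ : ∃ n, (phi x (Nat.pair (Encodable.encode
      (initSeg (restrictTo A u) n)) x)).Dom := hPhi
  obtain ⟨v, hv⟩ := Part.dom_iff_mem.1 hn
  obtain ⟨t1, ht1⟩ := Nat.Partrec.Code.evaln_complete.1 (phi_eq x ▸ hv)
  -- stabilize all best/val approximations below u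
  obtain ⟨T, hT⟩ := eventually_all (fun m s => (bestL k cA m s, valA k cA m s)) (u+1)
    (fun m _ => by
      obtain ⟨Tm, lm, _, h1, h2⟩ := best_limit hA m
      refine ⟨Tm, fun s hs => ?_⟩
      show (bestL k cA m s, valA k cA m s) = (bestL k cA m Tm, valA k cA m Tm)
      rw [h1 s hs, h2 s hs, h1 Tm le_rfl, h2 Tm le_rfl])
  -- ... and pick per-m correctness
  have hvalT : ∀ m ≤ u, valA k cA m T = chi A m := by
    intro m hm
    obtain ⟨Tm, lm, _, _, h2⟩ := best_limit hA m
    have e1 := hT (max T Tm) (le_max_left _ _) m (Nat.lt_succ_iff.2 hm)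
    have e2 := h2 (max T Tm) (le_max_right _ _)
    have h3 : valA k cA m (max T Tm) = valA k cA m T := by simpa using congrArg Prod.snd e1
    rw [← h3, e2]
  set s := max (max S2 T) (max (max t1 t2) n) with hs
  refine ⟨s, le_trans (le_max_left _ _) (le_max_left _ _), ?_⟩
  have hTs : T ≤ s := le_trans (le_max_right _ _) (le_max_left _ _)
  have ht1s : t1 ≤ s := le_trans (le_trans (le_max_left _ _) (le_max_left _ _)) (le_max_right _ _)
  have ht2s : t2 ≤ s := le_trans (le_trans (le_max_right _ _) (le_max_left _ _)) (le_max_right _ _)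
  have hns : n ≤ s := le_trans (le_max_right _ _) (le_max_right _ _)
  have hbests : ∀ m ≤ u, (bestL k cA m s).isSome := by
    intro m hm
    obtain ⟨Tm, lm, _, h1, _⟩ := best_limit hA m
    have e1 := hT (max s Tm) (le_trans hTs (le_max_left _ _)) m (Nat.lt_succ_iff.2 hm)
    have e2 := hT s hTs m (Nat.lt_succ_iff.2 hm)
    have hb1 : bestL k cA m (max s Tm) = some lm := h1 _ (le_max_right _ _)
    have h4 : bestL k cA m s = bestL k cA m T := by simpa using congrArg Prod.fst e2
    have h3 : bestL k cA m (max s Tm) = bestL k cA m T := by simpa using congrArg Prod.fst e1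
    rw [h4, ← h3, hb1]
    rfl
  have hvals : ∀ m ≤ u, valA k cA m s = chi A m := by
    intro m hm
    have e2 := hT s hTs m (Nat.lt_succ_iff.2 hm)
    have h4 : valA k cA m s = valA k cA m T := by simpa using congrArg Prod.snd e2
    rw [h4, hvalT m hm]
  have huses : u ∈ usesL k cA x s := by
    refine mem_usesL.2 ⟨i, hi, ?_, ?_⟩
    · exact Nat.Partrec.Code.evaln_mono ht2s ht2
    · exact allConv_iff.2 hbests
  refine bitB_iff.2 ⟨u, huses, n, hns, ?_⟩
  rw [ostr_eq_initSeg hvals]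
  exact Option.isSome_iff_exists.2 ⟨v, Nat.Partrec.Code.evaln_mono ht1s ht1⟩

/-- the master stabilization-and-correctness lemma -/
theorem stage_limit (hk : 0 < k) (hA : GoodCode k cA A) (x : ℕ) :
    ∃ S, (∀ s, S ≤ s → ctr k cA x s = ctr k cA x S) ∧
      gsv k cA x S = chi (bJump A) x := by
  -- step 1: the uses list stabilizes
  obtain ⟨S1, hS1⟩ := eventually_all (fun i s => usesF k cA x s i) (x+1)
    (fun i _ => usesF_eventually_const x i)
  have husesL : ∀ s, S1 ≤ s → usesL k cA x s = usesL k cA x S1 := by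
    intro s hs
    rw [usesL, usesL]
    apply filterMap_congr_mem
    intro i hiL
    exact hS1 s hs i (List.mem_range.1 hiL)
  have hmx : ∀ s, S1 ≤ s → mxU k cA x s = mxU k cA x S1 := by
    intro s hs; rw [mxU, mxU, husesL s hs]
  -- step 2: best/val stabilize below the maximum use
  set mx := mxU k cA x S1 with hmxdef
  obtain ⟨S2', hS2'⟩ := eventually_all (fun m s => bestL k cA m s) (mx+1)
    (fun m _ => by
      obtain ⟨Tm, lm, _, h1, _⟩ := best_limit hA m
      refine ⟨Tm, fun s hs => ?_⟩
      show bestL k cA m s = bestL k cA m Tm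
      rw [h1 s hs, h1 Tm le_rfl])
  set S2 := max S1 S2' with hS2def
  have hS2a : S1 ≤ S2 := le_max_left _ _
  have hbstab : ∀ s, S2 ≤ s → ∀ m ≤ mx, bestL k cA m s = bestL k cA m S2 := by
    intro s hs m hm
    have h1 := hS2' s (le_trans (le_max_right _ _) hs) m (Nat.lt_succ_iff.2 hm)
    have h2 := hS2' S2 (le_max_right _ _) m (Nat.lt_succ_iff.2 hm)
    rw [h1, h2]
  have hvstab : ∀ s, S2 ≤ s → ∀ m ≤ mx, valA k cA m s = chi A m := by
    intro s hs m hm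
    obtain ⟨Tm, lm, _, h1, h2⟩ := best_limit hA m
    have e1 : bestL k cA m (max s Tm) = bestL k cA m s := by
      rw [hS2' (max s Tm) (le_trans (le_trans (le_max_right _ _) hs) (le_max_left _ _))
          m (Nat.lt_succ_iff.2 hm),
        hS2' s (le_trans (le_max_right _ _) hs) m (Nat.lt_succ_iff.2 hm)]
    -- transfer correctness of val from stage `max s Tm` down to `s`
    have hbs : bestL k cA m s = some lm := by
      rw [← e1]; exact h1 _ (le_max_right _ _)
    -- val at s: best is the true list, and evaln value is stable
    have hcv : valA k cA m (max s Tm) = chi A m := h2 _ (le_max_right _ _)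
    have hbms : bestL k cA m (max s Tm) = some lm := h1 _ (le_max_right _ _)
    have hevs : (evaln s cA (Nat.pair m (Encodable.encode lm))).isSome :=
      (mem_cands.1 (bestL_mem hbs)).2.2
    rw [valA, hbms] at hcv
    rw [valA, hbs]
    simp only [] at hcv ⊢
    rw [evaln_stable (le_max_left s Tm) hevs] at hcv
    exact hcv
  -- step 3: the bit is monotone from S2 on, hence stabilizes
  have hbitmono : ∀ s, S2 ≤ s → bitB k cA x s = true → bitB k cA x (s+1) = true := by
    intro s hs hb
    refine bitB_step_mono ?_ ?_ hb
    · rw [husesL (s+1) (le_trans hS2a (le_trans hs (Nat.le_succ _))),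
        husesL s (le_trans hS2a hs)]
    · intro m hm
      have hmum : m ≤ mx := by
        rw [hmx s (le_trans hS2a hs)] at hm; exact hm
      rw [hbstab (s+1) (le_trans hs (Nat.le_succ _)) m hmum, hbstab s hs m hmum]
  have hbittrue_persists : ∀ s, S2 ≤ s → bitB k cA x s = true →
      ∀ t, s ≤ t → bitB k cA x t = true := by
    intro s hs hb t hst
    induction t with
    | zero =>
      have : s = 0 := Nat.le_zero.1 hst
      subst this; exact hb
    | succ t ih =>
      rcases Nat.lt_or_ge s (t+1) with h' | h'
      · exact hbitmono t (le_trans hs (Nat.lt_succ_iff.1 h')) (ih (Nat.lt_succ_iff.1 h'))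
      · have : s = t + 1 := le_antisymm hst h'
        subst this; exact hb
  -- step 4: define the final stage S3
  by_cases hbx : ∃ s, S2 ≤ s ∧ bitB k cA x s = true
  · obtain ⟨S3, hS3a, hS3b⟩ := hbx
    have hbitconst : ∀ s, S3 ≤ s → bitB k cA x s = true :=
      fun s hs => hbittrue_persists S3 hS3a hS3b s hs
    have hS3S2 : S2 ≤ S3 := hS3a
    have hctrconst : ∀ s, S3 ≤ s → ctr k cA x s = ctr k cA x S3 := by
      intro s hs
      have hs1 : S1 ≤ s := le_trans hS2a (le_trans hS3S2 hs)
      have hs2 : S2 ≤ s := le_trans hS3S2 hs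
      have h31 : S1 ≤ S3 := le_trans hS2a hS3S2
      have hsum : suml k cA x s = suml k cA x S3 := by
        refine suml_congr (by rw [husesL s hs1, husesL S3 h31]) ?_
        intro m hm
        have hmum : m ≤ mx := by rw [hmx s hs1] at hm; exact hm
        rw [hbstab s hs2 m hmum, hbstab S3 hS3S2 m hmum]
      rw [ctr, ctr, husesL s hs1, husesL S3 h31, hsum, hbitconst s hs, hbitconst S3 le_rfl]
    have hmemx : x ∈ bJump A := by
      refine bit_true_mem ?_ hS3b
      intro m hm
      have hmum : m ≤ mx := by
        rw [hmx S3 (le_trans hS2a hS3S2)] at hm; exact hm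
      exact hvstab S3 hS3S2 m hmum
    refine ⟨S3, hctrconst, ?_⟩
    rw [gsv, hS3b, chi, if_pos hmemx]
    rfl
  · push_neg at hbx
    have hbitfalse : ∀ s, S2 ≤ s → bitB k cA x s = false := by
      intro s hs
      rcases hb : bitB k cA x s with _ | _
      · rfl
      · exact absurd hb (hbx s hs)
    have hctrconst : ∀ s, S2 ≤ s → ctr k cA x s = ctr k cA x S2 := by
      intro s hs
      have hs1 : S1 ≤ s := le_trans hS2a hs
      have hsum : suml k cA x s = suml k cA x S2 := by
        refine suml_congr (by rw [husesL s hs1, husesL S2 hS2a]) ?_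
        intro m hm
        have hmum : m ≤ mx := by rw [hmx s hs1] at hm; exact hm
        rw [hbstab s hs m hmum, hbstab S2 le_rfl m hmum]
      rw [ctr, ctr, husesL s hs1, husesL S2 hS2a, hsum, hbitfalse s hs, hbitfalse S2 le_rfl]
    have hnmem : x ∉ bJump A := by
      intro hmem
      obtain ⟨s, hs, hb⟩ := mem_bit_true hA S2 hmem
      rw [hbitfalse s hs] at hb
      exact absurd hb (by simp)
    refine ⟨S2, hctrconst, ?_⟩
    rw [gsv, hbitfalse S2 le_rfl, chi, if_neg hnmem]
    rfl

end WithA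


def condB (k : ℕ) (cA : Code) (z s : ℕ) : Bool :=
  Option.casesOn (Encodable.decode (α := List ℕ) z.unpair.2) false fun l =>
    decide (l.length = k+1) && decide (ctr k cA z.unpair.1 s = l)

noncomputable def psiB (k : ℕ) (cA : Code) : ℕ →. ℕ := fun z =>
  (Nat.rfind fun s => Part.some (condB k cA z s)).map (gsv k cA z.unpair.1)


/-! ### computability of the construction -/

section Prim

open Primrec

theorem filterMap_eq_foldr' {α β : Type} (h : α → Option β) :
    ∀ L : List α, L.filterMap h =
      L.foldr (fun b acc => Option.casesOn (h b) acc fun c => c :: acc) [] := by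
  intro L
  induction L with
  | nil => rfl
  | cons a L ih =>
    rw [List.filterMap_cons]
    cases hab : h a <;> simp [hab, ih]

theorem primrec_filterMap {α β γ : Type} [Primcodable α] [Primcodable β] [Primcodable γ]
    {f : α → List β} {g : α → β → Option γ} (hf : Primrec f) (hg : Primrec₂ g) :
    Primrec fun a => (f a).filterMap (g a) := by
  have hh : Primrec fun q : α × (β × List γ) =>
      (Option.casesOn (g q.1 q.2.1) q.2.2 fun c => c :: q.2.2 : List γ) := by
    exact Primrec.option_casesOn (hg.comp Primrec.fst (Primrec.fst.comp Primrec.snd))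
      (Primrec.snd.comp Primrec.snd)
      ((Primrec.list_cons.comp Primrec.snd
        (Primrec.snd.comp (Primrec.snd.comp Primrec.fst))).to₂)
  have := Primrec.list_foldr hf (Primrec.const ([] : List γ)) hh.to₂
  exact this.of_eq fun a => (filterMap_eq_foldr' (g a) (f a)).symm

theorem cmpLt_primrec : ∀ k : ℕ, Primrec₂ (cmpLt k) := by
  intro k
  induction k with
  | zero => exact (Primrec.const false).to₂
  | succ k ih =>
    have h1 : Primrec fun p : List ℕ × List ℕ => decide (p.1.headI < p.2.headI) :=
      PrimrecPred.decide (Primrec.nat_lt.comp (Primrec.list_headI.comp Primrec.fst)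
        (Primrec.list_headI.comp Primrec.snd))
    have h2 : Primrec fun p : List ℕ × List ℕ => decide (p.1.headI = p.2.headI) :=
      PrimrecPred.decide (Primrec.eq.comp (Primrec.list_headI.comp Primrec.fst)
        (Primrec.list_headI.comp Primrec.snd))
    have h3 : Primrec fun p : List ℕ × List ℕ => cmpLt k p.1.tail p.2.tail :=
      ih.comp (Primrec.list_tail.comp Primrec.fst) (Primrec.list_tail.comp Primrec.snd)
    exact (Primrec.or.comp h1 (Primrec.and.comp h2 h3)).to₂

theorem vadd_primrec : ∀ k : ℕ, Primrec₂ (vadd k) := by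
  intro k
  induction k with
  | zero => exact (Primrec.const ([] : List ℕ)).to₂
  | succ k ih =>
    exact (Primrec.list_cons.comp
      (Primrec.nat_add.comp (Primrec.list_headI.comp Primrec.fst)
        (Primrec.list_headI.comp Primrec.snd))
      (ih.comp (Primrec.list_tail.comp Primrec.fst)
        (Primrec.list_tail.comp Primrec.snd))).to₂

theorem adj_primrec : ∀ k : ℕ, Primrec₂ (adj k) := by
  intro k
  induction k with
  | zero => exact (Primrec.const ([] : List ℕ)).to₂
  | succ k ih =>
    cases k with
    | zero =>
      have h : Primrec fun p : List ℕ × Bool =>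
          (2 * p.1.headI + (bif p.2 then 0 else 1) : ℕ) :=
        Primrec.nat_add.comp
          (Primrec.nat_mul.comp (Primrec.const 2) (Primrec.list_headI.comp Primrec.fst))
          (Primrec.cond Primrec.snd (Primrec.const 0) (Primrec.const 1))
      exact ((Primrec.list_cons.comp h (Primrec.const ([] : List ℕ))).of_eq
        fun p => rfl).to₂
    | succ k =>
      exact (Primrec.list_cons.comp (Primrec.list_headI.comp Primrec.fst)
        (ih.comp (Primrec.list_tail.comp Primrec.fst) Primrec.snd)).to₂

variable (k : ℕ) (cA : Code)

theorem cands_primrec : Primrec₂ (cands k cA) := by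
  have hcnd : Primrec fun q : ((ℕ × ℕ) × ℕ) × List ℕ =>
      (decide (q.2.length = k) && (evaln q.1.1.2 cA (Nat.pair q.1.1.1 q.1.2)).isSome : Bool) := by
    refine Primrec.and.comp ?_ ?_
    · exact PrimrecPred.decide (Primrec.eq.comp (Primrec.list_length.comp Primrec.snd) (Primrec.const k))
    · exact Primrec.option_isSome.comp
        (Nat.Partrec.Code.primrec_evaln.comp
          (Primrec.pair
            (Primrec.pair (Primrec.snd.comp (Primrec.fst.comp Primrec.fst))
              (Primrec.const cA))
            (Primrec₂.natPair.comp (Primrec.fst.comp (Primrec.fst.comp Primrec.fst))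
              (Primrec.snd.comp Primrec.fst))))
  have hg : Primrec₂ fun (a : ℕ × ℕ) (c : ℕ) =>
      (Option.casesOn (Encodable.decode (α := List ℕ) c) none fun l =>
        bif decide (l.length = k) && (evaln a.2 cA (Nat.pair a.1 c)).isSome
        then some l else none : Option (List ℕ)) := by
    refine (Primrec.option_casesOn
      (o := fun q : (ℕ × ℕ) × ℕ => Encodable.decode (α := List ℕ) q.2)
      (f := fun _ => (none : Option (List ℕ)))
      (g := fun (q : (ℕ × ℕ) × ℕ) (l : List ℕ) =>
        bif decide (l.length = k) && (evaln q.1.2 cA (Nat.pair q.1.1 q.2)).isSome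
        then some l else none)
      ((Primrec.decode (α := List ℕ)).comp Primrec.snd)
      (Primrec.const (none : Option (List ℕ))) ?_).to₂
    exact (Primrec.cond hcnd (Primrec.option_some.comp Primrec.snd)
      (Primrec.const (none : Option (List ℕ)))).to₂
  have := primrec_filterMap
    (Primrec.list_range.comp (Primrec.succ.comp Primrec.snd)) hg
  exact (this.of_eq fun a => rfl).to₂

theorem bestL_primrec : Primrec₂ (bestL k cA) := by
  have hh : Primrec fun q : (ℕ × ℕ) × (List ℕ × Option (List ℕ)) =>
      (bstep k q.2.1 q.2.2 : Option (List ℕ)) := by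
    refine Primrec.option_casesOn (Primrec.snd.comp Primrec.snd)
      (Primrec.option_some.comp (Primrec.fst.comp Primrec.snd)) ?_
    refine (Primrec.cond
      ((cmpLt_primrec k).comp (Primrec.fst.comp (Primrec.snd.comp Primrec.fst)) Primrec.snd)
      (Primrec.option_some.comp (Primrec.fst.comp (Primrec.snd.comp Primrec.fst)))
      (Primrec.option_some.comp Primrec.snd)).to₂
  have := Primrec.list_foldr ((cands_primrec k cA).comp Primrec.fst Primrec.snd)
    (Primrec.const (none : Option (List ℕ))) hh.to₂
  exact (this.of_eq fun a => rfl).to₂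

theorem valA_primrec : Primrec₂ (valA k cA) := by
  have hev : Primrec fun q : (ℕ × ℕ) × List ℕ =>
      evaln q.1.2 cA (Nat.pair q.1.1 (Encodable.encode q.2)) :=
    Nat.Partrec.Code.primrec_evaln.comp
      (Primrec.pair
        (Primrec.pair (Primrec.snd.comp Primrec.fst) (Primrec.const cA))
        (Primrec₂.natPair.comp (Primrec.fst.comp Primrec.fst)
          (Primrec.encode.comp Primrec.snd)))
  have hg : Primrec₂ fun (a : ℕ × ℕ) (l : List ℕ) =>
      (min ((evaln a.2 cA (Nat.pair a.1 (Encodable.encode l))).getD 0) 1 : ℕ) :=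
    (Primrec.nat_min.comp
      (Primrec.option_getD.comp hev (Primrec.const 0)) (Primrec.const 1)).to₂
  have h := Primrec.option_casesOn
    (o := fun a : ℕ × ℕ => bestL k cA a.1 a.2)
    (f := fun _ => (0 : ℕ))
    (g := fun (a : ℕ × ℕ) (l : List ℕ) =>
      min ((evaln a.2 cA (Nat.pair a.1 (Encodable.encode l))).getD 0) 1)
    ((bestL_primrec k cA).comp Primrec.fst Primrec.snd) (Primrec.const 0) hg
  exact (h.of_eq fun a => rfl).to₂

theorem allConv_primrec : Primrec₂ (allConv k cA) := by
  have hh : Primrec fun q : (ℕ × ℕ) × (ℕ × Bool) =>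
      ((bestL k cA q.2.1 q.1.2).isSome && q.2.2 : Bool) :=
    Primrec.and.comp
      (Primrec.option_isSome.comp ((bestL_primrec k cA).comp
        (Primrec.fst.comp Primrec.snd) (Primrec.snd.comp Primrec.fst)))
      (Primrec.snd.comp Primrec.snd)
  have := Primrec.list_foldr (Primrec.list_range.comp (Primrec.succ.comp Primrec.fst))
    (Primrec.const true) hh.to₂
  exact (this.of_eq fun a => rfl).to₂

theorem usesF_primrec : Primrec₂ fun (p : ℕ × ℕ) (i : ℕ) => usesF k cA p.1 p.2 i := by
  have h := Primrec.option_casesOn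
    (o := fun q : (ℕ × ℕ) × ℕ => evaln q.1.2 (Denumerable.ofNat Code q.2) q.1.1)
    (f := fun _ => (none : Option ℕ))
    (g := fun (q : (ℕ × ℕ) × ℕ) (u : ℕ) =>
      bif allConv k cA u q.1.2 then some u else none)
    (Nat.Partrec.Code.primrec_evaln.comp
      (Primrec.pair
        (Primrec.pair (Primrec.snd.comp Primrec.fst)
          ((Primrec.ofNat Code).comp Primrec.snd))
        (Primrec.fst.comp Primrec.fst)))
    (Primrec.const (none : Option ℕ))
    ((Primrec.cond
      ((allConv_primrec k cA).comp Primrec.snd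
        (Primrec.snd.comp (Primrec.fst.comp Primrec.fst)))
      (Primrec.option_some.comp Primrec.snd) (Primrec.const (none : Option ℕ))).to₂)
  exact (h.of_eq fun q => rfl).to₂

theorem usesL_primrec : Primrec₂ (usesL k cA) := by
  have := primrec_filterMap (Primrec.list_range.comp (Primrec.succ.comp Primrec.fst))
    (usesF_primrec k cA)
  exact (this.of_eq fun a => rfl).to₂

theorem mxU_primrec : Primrec₂ (mxU k cA) := by
  have := Primrec.list_foldr ((usesL_primrec k cA).comp Primrec.fst Primrec.snd)
    (Primrec.const 0)
    ((Primrec.nat_max.comp (Primrec.fst.comp Primrec.snd)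
      (Primrec.snd.comp Primrec.snd)).to₂)
  exact (this.of_eq fun a => rfl).to₂

theorem suml_primrec : Primrec₂ (suml k cA) := by
  have hfold : Primrec fun a : ℕ × ℕ =>
      (List.range (mxU k cA a.1 a.2 + 1)).foldr (sstep k cA a.2) (List.replicate k 0) := by
    have hh : Primrec fun q : (ℕ × ℕ) × (ℕ × List ℕ) =>
        (sstep k cA q.1.2 q.2.1 q.2.2 : List ℕ) := by
      refine (vadd_primrec k).comp ?_ (Primrec.snd.comp Primrec.snd)
      refine Primrec.option_getD.comp ?_ (Primrec.const (List.replicate k 0))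
      exact (bestL_primrec k cA).comp (Primrec.fst.comp Primrec.snd)
        (Primrec.snd.comp Primrec.fst)
    have := Primrec.list_foldr
      (Primrec.list_range.comp (Primrec.succ.comp
        ((mxU_primrec k cA).comp Primrec.fst Primrec.snd)))
      (Primrec.const (List.replicate k 0)) hh.to₂
    exact this.of_eq fun a => rfl
  have hc : Primrec fun a : ℕ × ℕ => decide (usesL k cA a.1 a.2 = []) :=
    PrimrecPred.decide (Primrec.eq.comp ((usesL_primrec k cA).comp Primrec.fst Primrec.snd)
      (Primrec.const ([] : List ℕ)))
  exact ((Primrec.cond hc (Primrec.const (List.replicate k 0)) hfold).of_eq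
    fun a => rfl).to₂

theorem ostr_primrec : Primrec fun q : ((ℕ × ℕ) × ℕ) × ℕ =>
    ostr k cA q.1.2 q.2 q.1.1.2 := by
  have hg : Primrec₂ fun (q : ((ℕ × ℕ) × ℕ) × ℕ) (m : ℕ) =>
      (bif decide (m ≤ q.1.2) then valA k cA m q.1.1.2 else 0 : ℕ) := by
    have hcnd : Primrec fun p : (((ℕ × ℕ) × ℕ) × ℕ) × ℕ => decide (p.2 ≤ p.1.1.2) :=
      PrimrecPred.decide (Primrec.nat_le.comp Primrec.snd
        (Primrec.snd.comp (Primrec.fst.comp Primrec.fst)))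
    have hv : Primrec fun p : (((ℕ × ℕ) × ℕ) × ℕ) × ℕ => valA k cA p.2 p.1.1.1.2 :=
      (valA_primrec k cA).comp Primrec.snd
        (Primrec.snd.comp (Primrec.fst.comp (Primrec.fst.comp Primrec.fst)))
    exact (Primrec.cond hcnd hv (Primrec.const 0)).to₂
  have := Primrec.list_map (Primrec.list_range.comp Primrec.snd) hg
  exact this.of_eq fun q => rfl

theorem bitB_primrec : Primrec₂ (bitB k cA) := by
  have hinner : Primrec fun b : (ℕ × ℕ) × ℕ =>
      ((List.range (b.1.2 + 1)).foldr (fun n acc2 =>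
        (evaln b.1.2 (Denumerable.ofNat Code b.1.1)
          (Nat.pair (Encodable.encode (ostr k cA b.2 n b.1.2)) b.1.1)).isSome || acc2)
        false : Bool) := by
    have hh : Primrec fun q : ((ℕ × ℕ) × ℕ) × (ℕ × Bool) =>
        ((evaln q.1.1.2 (Denumerable.ofNat Code q.1.1.1)
          (Nat.pair (Encodable.encode (ostr k cA q.1.2 q.2.1 q.1.1.2)) q.1.1.1)).isSome
          || q.2.2 : Bool) := by
      refine Primrec.or.comp (Primrec.option_isSome.comp ?_) (Primrec.snd.comp Primrec.snd)
      refine Nat.Partrec.Code.primrec_evaln.comp (Primrec.pair (Primrec.pair ?_ ?_) ?_)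
      · exact Primrec.snd.comp (Primrec.fst.comp Primrec.fst)
      · exact (Primrec.ofNat Code).comp
          (Primrec.fst.comp (Primrec.fst.comp Primrec.fst))
      · refine Primrec₂.natPair.comp (Primrec.encode.comp ?_)
          (Primrec.fst.comp (Primrec.fst.comp Primrec.fst))
        exact (ostr_primrec k cA).comp
          (Primrec.pair Primrec.fst (Primrec.fst.comp Primrec.snd))
    have := Primrec.list_foldr
      (Primrec.list_range.comp (Primrec.succ.comp
        (Primrec.snd.comp Primrec.fst)))
      (Primrec.const false) hh.to₂
    exact this.of_eq fun b => rfl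
  have hh2 : Primrec fun q : (ℕ × ℕ) × (ℕ × Bool) =>
      ((fun b : (ℕ × ℕ) × ℕ =>
        ((List.range (b.1.2 + 1)).foldr (fun n acc2 =>
          (evaln b.1.2 (Denumerable.ofNat Code b.1.1)
            (Nat.pair (Encodable.encode (ostr k cA b.2 n b.1.2)) b.1.1)).isSome || acc2)
          false : Bool)) (q.1, q.2.1) || q.2.2 : Bool) :=
    Primrec.or.comp
      (hinner.comp (Primrec.pair Primrec.fst (Primrec.fst.comp Primrec.snd)))
      (Primrec.snd.comp Primrec.snd)
  have := Primrec.list_foldr ((usesL_primrec k cA).comp Primrec.fst Primrec.snd)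
    (Primrec.const false) hh2.to₂
  exact (this.of_eq fun a => rfl).to₂

theorem ctr_primrec : Primrec₂ (ctr k cA) := by
  have h1 : Primrec fun a : ℕ × ℕ => (a.1 + 1) - (usesL k cA a.1 a.2).length :=
    Primrec.nat_sub.comp (Primrec.succ.comp Primrec.fst)
      (Primrec.list_length.comp ((usesL_primrec k cA).comp Primrec.fst Primrec.snd))
  have h2 : Primrec fun a : ℕ × ℕ => adj k (suml k cA a.1 a.2) (bitB k cA a.1 a.2) :=
    (adj_primrec k).comp ((suml_primrec k cA).comp Primrec.fst Primrec.snd)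
      ((bitB_primrec k cA).comp Primrec.fst Primrec.snd)
  exact ((Primrec.list_cons.comp h1 h2).of_eq fun a => rfl).to₂

theorem gsv_primrec : Primrec₂ (gsv k cA) := by
  exact ((Primrec.cond ((bitB_primrec k cA).comp Primrec.fst Primrec.snd)
    (Primrec.const 1) (Primrec.const 0)).of_eq fun a => rfl).to₂

theorem condB_primrec : Primrec₂ (condB k cA) := by
  have hg : Primrec₂ fun (p : ℕ × ℕ) (l : List ℕ) =>
      (decide (l.length = k+1) && decide (ctr k cA p.1.unpair.1 p.2 = l) : Bool) := by
    have ha : Primrec fun q : (ℕ × ℕ) × List ℕ => decide (q.2.length = k+1) :=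
      PrimrecPred.decide (Primrec.eq.comp (Primrec.list_length.comp Primrec.snd) (Primrec.const (k+1)))
    have hb : Primrec fun q : (ℕ × ℕ) × List ℕ =>
        decide (ctr k cA q.1.1.unpair.1 q.1.2 = q.2) :=
      PrimrecPred.decide (Primrec.eq.comp
        ((ctr_primrec k cA).comp
          (Primrec.fst.comp (Primrec.unpair.comp (Primrec.fst.comp Primrec.fst)))
          (Primrec.snd.comp Primrec.fst))
        Primrec.snd)
    exact (Primrec.and.comp ha hb).to₂
  have h := Primrec.option_casesOn
    (o := fun p : ℕ × ℕ => Encodable.decode (α := List ℕ) p.1.unpair.2)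
    (f := fun _ => false)
    (g := fun (p : ℕ × ℕ) (l : List ℕ) =>
      decide (l.length = k+1) && decide (ctr k cA p.1.unpair.1 p.2 = l))
    ((Primrec.decode (α := List ℕ)).comp
      (Primrec.snd.comp (Primrec.unpair.comp Primrec.fst)))
    (Primrec.const false) hg
  exact (h.of_eq fun p => rfl).to₂

end Prim

theorem psiB_partrec (k : ℕ) (cA : Code) : Partrec (psiB k cA) := by
  have hcond : Computable₂ (condB k cA) := (condB_primrec k cA).to_comp
  have hrfind : Partrec fun z : ℕ => Nat.rfind fun s => Part.some (condB k cA z s) := by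
    have := Partrec.rfind (p := fun (z : ℕ) => ((condB k cA z : ℕ → Bool) : ℕ →. Bool))
      hcond.partrec₂
    exact this.of_eq fun z => by
      congr
  have hg : Computable₂ fun (z : ℕ) (s : ℕ) => gsv k cA z.unpair.1 s :=
    ((gsv_primrec k cA).comp
      (Primrec.fst.comp (Primrec.unpair.comp Primrec.fst)) Primrec.snd).to_comp.to₂
  exact (hrfind.map hg).of_eq fun z => rfl

theorem condB_pair_iff {k : ℕ} {cA : Code} {n s : ℕ} {l : List ℕ} :
    condB k cA (Nat.pair n (Encodable.encode l)) s = true ↔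
      l.length = k+1 ∧ ctr k cA n s = l := by
  rw [condB, Nat.unpair_pair]
  simp only [Encodable.encodek]
  simp

theorem psiB_dom_iff {k : ℕ} {cA : Code} {z : ℕ} :
    (psiB k cA z).Dom ↔ ∃ s, condB k cA z s = true := by
  rw [psiB]
  constructor
  · intro h
    obtain ⟨y, hy⟩ := Part.dom_iff_mem.1 h
    obtain ⟨s, hs, _⟩ := (Part.mem_map_iff _).1 hy
    exact ⟨s, by simpa using Nat.rfind_spec hs⟩
  · rintro ⟨s, hs⟩
    have : (Nat.rfind fun s => Part.some (condB k cA z s)).Dom := by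
      refine Nat.rfind_dom.2 ?_
      exact ⟨s, by simpa using hs, fun {m} _ => trivial⟩
    obtain ⟨y, hy⟩ := Part.dom_iff_mem.1 this
    exact Part.dom_iff_mem.2 ⟨_, Part.mem_map _ hy⟩

section WithA2

variable {k : ℕ} {cA : Code} {A : Set ℕ}

theorem ctr_ge_limit (hk : 0 < k) {x S : ℕ}
    (hconst : ∀ s, S ≤ s → ctr k cA x s = ctr k cA x S) (s : ℕ) :
    ctr k cA x s = ctr k cA x S ∨ LexLt (ctr k cA x S) (ctr k cA x s) := by
  rcases Nat.le_total s S with h | h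
  · rcases ctr_anti hk cA x h with he | hlt
    · exact Or.inl he.symm
    · exact Or.inr hlt
  · exact Or.inl (hconst s h)

theorem psiB_correct (hk : 0 < k) (hA : GoodCode k cA A) (n : ℕ) :
    ∃ l : List ℕ, l.length = k + 1 ∧
      (∀ l' : List ℕ, l'.length = k + 1 → List.Lex (· < ·) l' l →
        ¬(psiB k cA (Nat.pair n (Encodable.encode l'))).Dom) ∧
      chi (bJump A) n ∈ psiB k cA (Nat.pair n (Encodable.encode l)) := by
  obtain ⟨S, hconst, hval⟩ := stage_limit hk hA n
  refine ⟨ctr k cA n S, ctr_length k cA n S, ?_, ?_⟩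
  · intro l' hl' hlex hdom
    obtain ⟨s, hs⟩ := psiB_dom_iff.1 hdom
    obtain ⟨_, hctr⟩ := condB_pair_iff.1 hs
    rcases ctr_ge_limit hk hconst s with he | hlt
    · rw [hctr] at he
      rw [he] at hlex
      exact lex_irrefl _ hlex
    · rw [hctr] at hlt
      exact lex_asymm hlex hlt
  · have hdom : (psiB k cA (Nat.pair n (Encodable.encode (ctr k cA n S)))).Dom :=
      psiB_dom_iff.2 ⟨S, condB_pair_iff.2 ⟨ctr_length k cA n S, rfl⟩⟩
    have hrdom : (Nat.rfind fun s => Part.some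
        (condB k cA (Nat.pair n (Encodable.encode (ctr k cA n S))) s)).Dom := by
      refine Nat.rfind_dom.2 ?_
      exact ⟨S, by simpa using condB_pair_iff.2 ⟨ctr_length k cA n S, rfl⟩,
        fun {m} _ => trivial⟩
    obtain ⟨sstar, hsstar⟩ := Part.dom_iff_mem.1 hrdom
    have hcond : condB k cA (Nat.pair n (Encodable.encode (ctr k cA n S))) sstar = true := by
      simpa using Nat.rfind_spec hsstar
    have hctrstar : ctr k cA n sstar = ctr k cA n S := (condB_pair_iff.1 hcond).2
    have hgs : gsv k cA n sstar = chi (bJump A) n := by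
      rw [gsv_congr hk hctrstar, hval]
    have hmem := Part.mem_map (gsv k cA (Nat.pair n
      (Encodable.encode (ctr k cA n S))).unpair.1) hsstar
    rw [psiB]
    rw [Nat.unpair_pair] at hmem ⊢
    rw [hgs] at hmem
    exact hmem

end WithA2

end BJaux

/-- If `k > 0` and `A` is `ω^k`-c.e., then `A^b` is `ω^{k+1}`-c.e. -/
theorem bJump_omegaCE_succ (k : ℕ) (hk : 0 < k) (A : Set ℕ) (hA : OmegaCE k A) :
    OmegaCE (k + 1) (bJump A) := by
  obtain ⟨ψ, hpr, hbd, hprop⟩ := hA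
  obtain ⟨cA, hcA⟩ := Nat.Partrec.Code.exists_code.1 (Partrec.nat_iff.1 hpr)
  have hGood : BJaux.GoodCode k cA A := by
    intro n
    obtain ⟨l, h1, h2, h3⟩ := hprop n
    refine ⟨l, h1, ?_, ?_⟩
    · intro l' hl' hlex hd
      rw [hcA] at hd
      exact h2 l' hl' hlex hd
    · rw [hcA]; exact h3
  refine ⟨BJaux.psiB k cA, BJaux.psiB_partrec k cA, ?_, ?_⟩
  · intro m y hy
    rw [BJaux.psiB] at hy
    obtain ⟨s, _, rfl⟩ := (Part.mem_map_iff _).1 hy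
    rw [BJaux.gsv]
    cases BJaux.bitB k cA m.unpair.1 s <;> simp
  · intro n
    exact BJaux.psiB_correct hk hGood n
end

section
/- For any set A ⊆ ℕ, Gerla's truth-table jump A_tt is 1-reducible to A^{b₀}. -/
open Classical

namespace GerlaAux

open Encodable Denumerable

/-- Check a truth table: well-formedness and extract the bound (max of positions). -/
def tblBound (p : List ℕ × List Bool) : Option ℕ :=
  if p.2.length = 2 ^ p.1.length then some (p.1.foldr max 0) else none

/-- Evaluate a tt-condition `p` on an oracle string `σ` (diverging on `false`). -/
def tblEval (p : List ℕ × List Bool) (σ : List ℕ) : Option ℕ :=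
  if p.1.foldr max 0 + 1 ≤ σ.length ∧
      p.2.getD (p.1.foldr (fun y acc => 2 * acc + σ.getD y 0) 0) false = true
  then some 0 else none

/-- Given the code `c` of a tt-condition, return its bound. -/
def boundFun (c : ℕ) : Option ℕ :=
  (Encodable.decode (α := List ℕ × List Bool) c).bind fun p => tblBound p

/-- Given an encoded oracle initial segment `s` and a tt-condition code `c`, evaluate. -/
def evalFun (s c : ℕ) : Option ℕ :=
  (Encodable.decode (α := List ℕ × List Bool) c).bind fun p =>
    (Encodable.decode (α := List ℕ) s).bind fun σ => tblEval p σ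

theorem tblBound_primrec : Primrec tblBound := by
  unfold tblBound
  refine Primrec.ite ?_ ?_ (Primrec.const (none : Option ℕ))
  · exact PrimrecRel.comp Primrec.eq (Primrec.list_length.comp Primrec.snd)
      ((Primrec₂.unpaired'.1 Nat.Primrec.pow).comp (Primrec.const 2)
        (Primrec.list_length.comp Primrec.fst))
  · exact Primrec.option_some.comp
      (Primrec.list_foldr (h := fun _ bs => max bs.1 bs.2) Primrec.fst (Primrec.const 0)
        ((Primrec.nat_max.comp (Primrec.fst.comp Primrec.snd)
          (Primrec.snd.comp Primrec.snd)).to₂))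

theorem tblEval_primrec : Primrec₂ tblEval := by
  unfold Primrec₂ tblEval
  have hσ : Primrec fun a : (List ℕ × List Bool) × List ℕ => a.2 := Primrec.snd
  have hmax : Primrec fun a : (List ℕ × List Bool) × List ℕ => a.1.1.foldr max 0 :=
    Primrec.list_foldr (h := fun _ bs => max bs.1 bs.2) (Primrec.fst.comp Primrec.fst)
      (Primrec.const 0)
      ((Primrec.nat_max.comp (Primrec.fst.comp Primrec.snd)
        (Primrec.snd.comp Primrec.snd)).to₂)
  have hfold : Primrec fun a : (List ℕ × List Bool) × List ℕ =>
      a.1.1.foldr (fun y acc => 2 * acc + a.2.getD y 0) 0 :=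
    Primrec.list_foldr (h := fun (a : (List ℕ × List Bool) × List ℕ) (bs : ℕ × ℕ) => 2 * bs.2 + a.2.getD bs.1 0)
      (Primrec.fst.comp Primrec.fst) (Primrec.const 0)
      ((Primrec.nat_add.comp
        (Primrec.nat_mul.comp (Primrec.const 2) (Primrec.snd.comp Primrec.snd))
        ((Primrec.list_getD 0).comp (Primrec.snd.comp Primrec.fst)
          (Primrec.fst.comp Primrec.snd))).to₂)
  refine Primrec.ite ?_ (Primrec.const (some 0)) (Primrec.const (none : Option ℕ))
  refine PrimrecPred.and ?_ ?_
  · exact PrimrecRel.comp Primrec.nat_le (Primrec.succ.comp hmax)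
      (Primrec.list_length.comp hσ)
  · exact PrimrecRel.comp Primrec.eq
      ((Primrec.list_getD false).comp (Primrec.snd.comp Primrec.fst) hfold)
      (Primrec.const true)

theorem boundFun_primrec : Primrec boundFun := by
  unfold boundFun
  exact Primrec.option_bind Primrec.decode ((tblBound_primrec.comp Primrec.snd).to₂)

theorem evalFun_primrec : Primrec₂ evalFun := by
  unfold Primrec₂ evalFun
  have inner : Primrec₂ fun (q : ℕ × ℕ) (p : List ℕ × List Bool) =>
      (Encodable.decode (α := List ℕ) q.1).bind fun σ => tblEval p σ :=
    Primrec.option_bind ((@Primrec.decode (List ℕ) _).comp (Primrec.fst.comp Primrec.fst))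
      ((tblEval_primrec.comp (Primrec.snd.comp Primrec.fst) Primrec.snd).to₂)
  exact Primrec.option_bind ((@Primrec.decode (List ℕ × List Bool) _).comp Primrec.snd) inner

/-- The functional computing the bound of `φ_x(x)`'s tt-condition. -/
noncomputable def Fi : ℕ →. ℕ := fun x => (phi x x).bind fun c => (boundFun c : Part ℕ)

/-- The oracle functional evaluating `φ_x(x)`'s tt-condition on the oracle string. -/
noncomputable def Fe : ℕ →. ℕ := fun m =>
  (phi m.unpair.2 m.unpair.2).bind fun c => (evalFun m.unpair.1 c : Part ℕ)

theorem selfEval_partrec : Partrec fun x : ℕ => phi x x :=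
  Nat.Partrec.Code.eval_part.comp (Computable.ofNat _) Computable.id

theorem Fi_partrec : Partrec Fi :=
  selfEval_partrec.bind
    ((Computable.ofOption (boundFun_primrec.to_comp.comp Computable.snd)).to₂)

theorem Fe_partrec : Partrec Fe := by
  have hu2 : Computable fun m : ℕ => m.unpair.2 :=
    (Primrec.snd.comp Primrec.unpair).to_comp
  have hu1 : Computable fun m : ℕ => m.unpair.1 :=
    (Primrec.fst.comp Primrec.unpair).to_comp
  exact (Nat.Partrec.Code.eval_part.comp ((Computable.ofNat _).comp hu2) hu2).bind
    ((Computable.ofOption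
      (evalFun_primrec.to_comp.comp (hu1.comp Computable.fst) Computable.snd)).to₂)

theorem mem_le_foldr_max {l : List ℕ} {y : ℕ} (h : y ∈ l) : y ≤ l.foldr max 0 := by
  induction l with
  | nil => cases h
  | cons a t ih =>
    rcases List.mem_cons.1 h with rfl | h
    · exact le_max_left _ _
    · exact le_trans (ih h) (le_max_right _ _)

theorem getD_initSeg {B : Set ℕ} {n y : ℕ} (h : y < n) :
    (initSeg B n).getD y 0 = chi B y := by
  unfold initSeg
  rw [List.getD_eq_getElem _ _ (by simpa using h)]
  simp

theorem chi_restrict {A : Set ℕ} {b y : ℕ} (h : y ≤ b) :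
    chi (restrictTo A b) y = chi A y := by
  unfold chi restrictTo
  by_cases hy : y ∈ A <;> simp [hy, h, Set.mem_setOf_eq]

theorem foldr_tbl_congr {f g : ℕ → ℕ} :
    ∀ l : List ℕ, (∀ y ∈ l, f y = g y) →
      l.foldr (fun y acc => 2 * acc + f y) 0 = l.foldr (fun y acc => 2 * acc + g y) 0 := by
  intro l
  induction l with
  | nil => intro _; rfl
  | cons a t ih =>
    intro h
    simp only [List.foldr_cons, ih fun y hy => h y (List.mem_cons_of_mem _ hy),
      h a List.mem_cons_self]

/-- Key equality: for `σ = initSeg (restrictTo A b) n` with `n ≥ b + 1` and all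
positions in `l` bounded by `b`, the fold over `σ` computes the fold over `chi A`. -/
theorem fold_initSeg_eq {A : Set ℕ} {b n : ℕ} (hn : b + 1 ≤ n) {l : List ℕ}
    (hl : ∀ y ∈ l, y ≤ b) :
    l.foldr (fun y acc => 2 * acc + (initSeg (restrictTo A b) n).getD y 0) 0 =
      l.foldr (fun y acc => 2 * acc + chi A y) 0 := by
  refine foldr_tbl_congr l fun y hy => ?_
  have hyb : y ≤ b := hl y hy
  rw [getD_initSeg (lt_of_le_of_lt hyb hn), chi_restrict hyb]

theorem phiDom_eq (e : ℕ) (B : Set ℕ) (x : ℕ) :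
    (Phi e B x).Dom ↔
      ∃ n, (phi e (Nat.pair (Encodable.encode (initSeg B n)) x)).Dom :=
  Iff.rfl

end GerlaAux

/-- For any set `A`, Gerla's truth-table jump `A_tt` is 1-reducible to `A^{b₀}`. -/
theorem gerlaJump_oneReducible_b0Jump (A : Set ℕ) :
    oneReducible (gerlaJump A) (b0Jump A) := by
  classical
  open GerlaAux in
  obtain ⟨cI, hcI⟩ := Nat.Partrec.Code.exists_code.1 (Partrec.nat_iff.1 GerlaAux.Fi_partrec)
  obtain ⟨cE, hcE⟩ := Nat.Partrec.Code.exists_code.1 (Partrec.nat_iff.1 GerlaAux.Fe_partrec)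
  set iIdx := Encodable.encode cI with hiIdx
  set eIdx := Encodable.encode cE with heIdx
  have hphiI : phi iIdx = GerlaAux.Fi := by
    simp only [phi, hiIdx, Denumerable.ofNat_encode, hcI]
  have hphiE : phi eIdx = GerlaAux.Fe := by
    simp only [phi, heIdx, Denumerable.ofNat_encode, hcE]
  refine ⟨fun x => Nat.pair eIdx (Nat.pair iIdx x), ?_, ?_, ?_⟩
  · exact (Primrec₂.natPair.comp (Primrec.const eIdx)
      (Primrec₂.natPair.comp (Primrec.const iIdx) Primrec.id)).to_comp
  · intro a b h
    have := congrArg (fun n => n.unpair.2.unpair.2) h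
    simpa [Nat.unpair_pair] using this
  · intro x
    constructor
    · rintro ⟨hd, p, hdec, hlen, htab⟩
      set c := (phi x x).get hd with hc
      set b := p.1.foldr max 0 with hb
      have hbound : GerlaAux.boundFun c = some b := by
        simp [GerlaAux.boundFun, GerlaAux.tblBound, hdec, hlen, hb]
      have hxx : phi x x = Part.some c := (Part.some_get hd).symm
      have hsome : phi iIdx x = Part.some b := by
        rw [hphiI]
        show ((phi x x).bind fun c => (GerlaAux.boundFun c : Part ℕ)) = Part.some b
        rw [hxx, Part.bind_some, hbound]
        rfl
      refine ⟨eIdx, iIdx, x, rfl, ?_⟩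
      rw [hsome]
      refine ⟨trivial, ?_⟩
      change (Phi eIdx (restrictTo A b) x).Dom
      rw [GerlaAux.phiDom_eq]
      refine ⟨b + 1, ?_⟩
      rw [hphiE]
      show ((phi (Nat.pair (Encodable.encode (initSeg (restrictTo A b) (b+1))) x).unpair.2
              (Nat.pair (Encodable.encode (initSeg (restrictTo A b) (b+1))) x).unpair.2).bind
            fun c => (GerlaAux.evalFun
              (Nat.pair (Encodable.encode (initSeg (restrictTo A b) (b+1))) x).unpair.1 c :
                Part ℕ)).Dom
      simp only [Nat.unpair_pair]
      rw [hxx, Part.bind_some]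
      have heval : GerlaAux.evalFun
          (Encodable.encode (initSeg (restrictTo A b) (b+1))) c = some 0 := by
        have hcond : p.1.foldr max 0 + 1 ≤ (initSeg (restrictTo A b) (b+1)).length ∧
            p.2.getD (p.1.foldr (fun y acc =>
              2 * acc + (initSeg (restrictTo A b) (b+1)).getD y 0) 0) false = true := by
          constructor
          · simp [initSeg, ← hb]
          · rw [GerlaAux.fold_initSeg_eq le_rfl fun y hy => GerlaAux.mem_le_foldr_max hy]
            exact htab
        unfold GerlaAux.evalFun
        rw [hdec, Option.bind_some, Encodable.encodek, Option.bind_some]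
        unfold GerlaAux.tblEval
        rw [if_pos hcond]
      rw [heval]
      trivial
    · rintro ⟨e', i', j', hpair, h1, h2⟩
      obtain ⟨he', hrest⟩ := Nat.pair_eq_pair.1 hpair
      obtain ⟨hi', hj'⟩ := Nat.pair_eq_pair.1 hrest
      subst he'; subst hi'; subst hj'
      -- extract from h1
      have h1' : (GerlaAux.Fi x).Dom := by rwa [hphiI] at h1
      obtain ⟨v, hv⟩ := Part.dom_iff_mem.1 h1'
      obtain ⟨c, hc, hvc⟩ := Part.mem_bind_iff.1 hv
      have hd : (phi x x).Dom := Part.dom_iff_mem.2 ⟨c, hc⟩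
      have hcget : (phi x x).get hd = c := Part.get_eq_of_mem hc hd
      have hbv : GerlaAux.boundFun c = some v := Part.mem_ofOption.1 hvc
      obtain ⟨p, hdec, hite⟩ := Option.bind_eq_some_iff.1 hbv
      have hlen : p.2.length = 2 ^ p.1.length := by
        by_contra hcon
        simp [GerlaAux.tblBound, hcon] at hite
      have hvb : v = p.1.foldr max 0 := by
        simp [GerlaAux.tblBound, hlen] at hite
        exact hite.symm
      -- the value of phi iIdx x is v
      have hgetv : (phi iIdx x).get h1 = v := by
        apply Part.get_eq_of_mem
        rw [hphiI]
        exact hv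
      rw [hgetv] at h2
      -- extract from h2
      rw [GerlaAux.phiDom_eq] at h2
      obtain ⟨n, hn⟩ := h2
      rw [hphiE] at hn
      set s := Encodable.encode (initSeg (restrictTo A v) n) with hs
      have hn' : ((phi x x).bind fun c => (GerlaAux.evalFun s c : Part ℕ)).Dom := by
        have : GerlaAux.Fe (Nat.pair s x) =
            (phi x x).bind fun c => (GerlaAux.evalFun s c : Part ℕ) := by
          simp only [GerlaAux.Fe, Nat.unpair_pair]
        rwa [this] at hn
      obtain ⟨w, hw⟩ := Part.dom_iff_mem.1 hn'
      obtain ⟨c', hc', hwc⟩ := Part.mem_bind_iff.1 hw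
      have hcc : c' = c := by
        have := Part.get_eq_of_mem hc' hd
        rw [hcget] at this
        exact this.symm ▸ rfl
      rw [hcc] at hwc
      have hew : GerlaAux.evalFun s c = some w := Part.mem_ofOption.1 hwc
      obtain ⟨p', hdec', hrest'⟩ := Option.bind_eq_some_iff.1 hew
      have hpp : p' = p := by
        rw [hdec] at hdec'
        exact (Option.some_inj.1 hdec').symm
      subst hpp
      obtain ⟨σ, hdecσ, hiteσ⟩ := Option.bind_eq_some_iff.1 hrest'
      have hσ : σ = initSeg (restrictTo A v) n := by
        rw [hs, Encodable.encodek] at hdecσ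
        exact (Option.some_inj.1 hdecσ).symm
      subst hσ
      have hcond : p'.1.foldr max 0 + 1 ≤ (initSeg (restrictTo A v) n).length ∧
          p'.2.getD (p'.1.foldr (fun y acc =>
            2 * acc + (initSeg (restrictTo A v) n).getD y 0) 0) false = true := by
        by_contra hcon
        unfold GerlaAux.tblEval at hiteσ
        simp only [if_neg hcon] at hiteσ
        exact Option.noConfusion rfl (heq_of_eq hiteσ)
      refine ⟨hd, ?_⟩
      rw [hcget]
      refine ⟨p', hdec, hlen, ?_⟩
      have hnb : v + 1 ≤ n := by
        have := hcond.1
        rw [← hvb] at this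
        simpa [initSeg] using this
      have := hcond.2
      rwa [GerlaAux.fold_initSeg_eq hnb
        (fun y hy => hvb ▸ GerlaAux.mem_le_foldr_max hy)] at this
end
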